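/- arXiv:1302.6346 — 11 statements merged into one kernel-verified Lean document; each statement's English description precedes it below -/
import Mathlib

section
/- Let X be a non-empty subset of {0,1}^n and let N(X) = {x ⊕ e_i | x ∈ X, i ∈ {1,…,n}} be the set of points at Hamming distance 1 from some point of X. If X and N(X) are disjoint and |X| ≥ |N(X)|, then X is either the set of all points with an even number of ones, or the set of all points with an odd number of ones. -/
def flp {n : ℕ} (x : Fin n → Bool) (i : Fin n) : Fin n → Bool :=
  Function.update x i (!(x i))

lemma flp_flp {n : ℕ} (x : Fin n → Bool) (i : Fin n) : flp (flp x i) i = x := by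
  funext j
  simp only [flp, Function.update]
  by_cases h : j = i <;> simp [h]

lemma pc_flp {n : ℕ} (x : Fin n → Bool) (i : Fin n) :
    Even ((Finset.univ.filter (fun j => flp x i j = true)).card) ↔
    ¬ Even ((Finset.univ.filter (fun j => x j = true)).card) := by
  cases hxi : x i
  · have h : Finset.univ.filter (fun j => flp x i j = true)
        = insert i (Finset.univ.filter (fun j => x j = true)) := by
      ext j
      simp only [flp, Function.update, Finset.mem_filter, Finset.mem_univ, true_and,
        Finset.mem_insert]
      rcases eq_or_ne j i with rfl | hne
      · simp [hxi]
      · simp [hne]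
    rw [h, Finset.card_insert_of_notMem (by simp [hxi])]
    simp [Nat.even_add_one]
  · have h : Finset.univ.filter (fun j => flp x i j = true)
        = (Finset.univ.filter (fun j => x j = true)).erase i := by
      ext j
      simp only [flp, Function.update, Finset.mem_filter, Finset.mem_univ, true_and,
        Finset.mem_erase]
      rcases eq_or_ne j i with rfl | hne
      · simp [hxi]
      · simp [hne]
    have hmem : i ∈ Finset.univ.filter (fun j => x j = true) := by simp [hxi]
    have hpos : 0 < (Finset.univ.filter (fun j => x j = true)).card :=
      Finset.card_pos.2 ⟨i, hmem⟩
    rw [h, Finset.card_erase_of_mem hmem]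
    rw [Nat.even_sub hpos]
    simp

theorem stmt_0 (n : ℕ) (X : Finset (Fin n → Bool)) (hX : X.Nonempty)
    (N : Finset (Fin n → Bool))
    (hN : N = X.biUnion (fun x => Finset.univ.image (fun i => Function.update x i (!(x i)))))
    (hdisj : Disjoint X N) (hcard : N.card ≤ X.card) :
    X = Finset.univ.filter
        (fun x : Fin n → Bool => Even ((Finset.univ.filter (fun i => x i = true)).card)) ∨
    X = Finset.univ.filter
        (fun x : Fin n → Bool => ¬ Even ((Finset.univ.filter (fun i => x i = true)).card)) := by
  set P : (Fin n → Bool) → Prop :=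
    fun x => Even ((Finset.univ.filter (fun i => x i = true)).card) with hP
  -- membership in N
  have hmemN : ∀ y, y ∈ N ↔ ∃ x ∈ X, ∃ i, y = flp x i := by
    intro y
    rw [hN]
    simp only [Finset.mem_biUnion, Finset.mem_image, Finset.mem_univ, true_and]
    constructor
    · rintro ⟨x, hx, i, rfl⟩; exact ⟨x, hx, i, rfl⟩
    · rintro ⟨x, hx, i, rfl⟩; exact ⟨x, hx, i, rfl⟩
  rcases Nat.eq_zero_or_pos n with rfl | hn
  · -- n = 0: unique point, even
    left
    have huniv : X = Finset.univ := by
      obtain ⟨x, hx⟩ := hX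
      apply Finset.eq_univ_of_forall
      intro y
      have : y = x := funext fun i => absurd i.2 (by omega)
      rwa [this]
    rw [huniv]
    symm
    apply Finset.filter_true_of_mem
    intro x _
    have : Finset.univ.filter (fun i : Fin 0 => x i = true) = ∅ := by
      apply Finset.eq_empty_of_forall_notMem
      intro i; exact absurd i.2 (by omega)
    rw [this]
    simp
  · -- injective flip map on pairs
    have hFinj : Set.InjOn (fun p : (Fin n → Bool) × Fin n => (flp p.1 p.2, p.2))
        ↑(X ×ˢ (Finset.univ : Finset (Fin n))) := by
      rintro ⟨x, i⟩ _ ⟨x', i'⟩ _ h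
      simp only [Prod.mk.injEq] at h
      obtain ⟨h1, rfl⟩ := h
      have := congrArg (fun z => flp z i) h1
      simp only [flp_flp] at this
      simp [this]
    have hFsub : (X ×ˢ (Finset.univ : Finset (Fin n))).image
        (fun p : (Fin n → Bool) × Fin n => (flp p.1 p.2, p.2))
        ⊆ N ×ˢ (Finset.univ : Finset (Fin n)) := by
      intro p hp
      simp only [Finset.mem_image, Finset.mem_product, Finset.mem_univ, and_true] at hp ⊢
      obtain ⟨p, hp, rfl⟩ := hp
      exact (hmemN _).2 ⟨p.1, hp, p.2, rfl⟩
    have hcard1 : (X ×ˢ (Finset.univ : Finset (Fin n))).card ≤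
        (N ×ˢ (Finset.univ : Finset (Fin n))).card := by
      calc (X ×ˢ (Finset.univ : Finset (Fin n))).card
          = ((X ×ˢ (Finset.univ : Finset (Fin n))).image
              (fun p : (Fin n → Bool) × Fin n => (flp p.1 p.2, p.2))).card :=
            (Finset.card_image_of_injOn hFinj).symm
        _ ≤ _ := Finset.card_le_card hFsub
    have hcardeq : (X ×ˢ (Finset.univ : Finset (Fin n))).card =
        (N ×ˢ (Finset.univ : Finset (Fin n))).card := by
      simp only [Finset.card_product, Finset.card_univ, Fintype.card_fin] at hcard1 ⊢
      have : X.card = N.card := le_antisymm (Nat.le_of_mul_le_mul_right hcard1 hn)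
        hcard
      rw [this]
    have hFsurj : (X ×ˢ (Finset.univ : Finset (Fin n))).image
        (fun p : (Fin n → Bool) × Fin n => (flp p.1 p.2, p.2))
        = N ×ˢ (Finset.univ : Finset (Fin n)) := by
      apply Finset.eq_of_subset_of_card_le hFsub
      rw [Finset.card_image_of_injOn hFinj, hcardeq]
    -- every flip of a point of N lies in X
    have hNX : ∀ y ∈ N, ∀ i, flp y i ∈ X := by
      intro y hy i
      have hmem : (y, i) ∈ N ×ˢ (Finset.univ : Finset (Fin n)) := by
        simp [hy]
      rw [← hFsurj] at hmem
      simp only [Finset.mem_image, Finset.mem_product, Finset.mem_univ, and_true] at hmem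
      obtain ⟨p, hp, heq⟩ := hmem
      simp only [Prod.mk.injEq] at heq
      obtain ⟨h1, h2⟩ := heq
      subst h2
      have : flp y p.2 = p.1 := by rw [← h1, flp_flp]
      rwa [this]
    obtain ⟨x0, hx0⟩ := hX
    -- main induction on Hamming distance from x0
    have claim : ∀ k : ℕ, ∀ y : Fin n → Bool,
        (Finset.univ.filter (fun i => x0 i ≠ y i)).card = k →
        ((P y ↔ P x0) → y ∈ X) ∧ (¬(P y ↔ P x0) → y ∈ N) := by
      intro k
      induction k with
      | zero =>
        intro y hy
        have hyx : y = x0 := by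
          funext i
          by_contra hne
          have : i ∈ Finset.univ.filter (fun i => x0 i ≠ y i) := by
            exact Finset.mem_filter.2 ⟨Finset.mem_univ i, fun h => hne h.symm⟩
          rw [Finset.card_eq_zero] at hy
          simp [hy] at this
        subst hyx
        exact ⟨fun _ => hx0, fun h => absurd Iff.rfl h⟩
      | succ k ih =>
        intro y hy
        have hne : ∃ i, x0 i ≠ y i := by
          by_contra hc
          push_neg at hc
          have : Finset.univ.filter (fun i => x0 i ≠ y i) = ∅ := by
            apply Finset.eq_empty_of_forall_notMem
            intro i; simp [hc i]
          simp [this] at hy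
        obtain ⟨i, hi⟩ := hne
        have hiflip : x0 i = flp y i i := by
          simp only [flp, Function.update_self]
          revert hi
          cases x0 i <;> cases y i <;> simp
        have hdist : (Finset.univ.filter (fun j => x0 j ≠ flp y i j)).card = k := by
          have hset : Finset.univ.filter (fun j => x0 j ≠ flp y i j)
              = (Finset.univ.filter (fun j => x0 j ≠ y j)).erase i := by
            ext j
            simp only [Finset.mem_filter, Finset.mem_univ, true_and, Finset.mem_erase]
            rcases eq_or_ne j i with rfl | hji
            · simp [← hiflip]
            · simp only [flp, Function.update]
              simp [hji]
          rw [hset, Finset.card_erase_of_mem (by simp [hi]), hy]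
          omega
        have hyy' : y = flp (flp y i) i := (flp_flp y i).symm
        have hpar : P y ↔ ¬ P (flp y i) := by
          simp only [hP]
          have := pc_flp (flp y i) i
          rwa [flp_flp] at this
        constructor
        · intro h
          have h2 : ¬(P (flp y i) ↔ P x0) := by tauto
          have := (ih (flp y i) hdist).2 h2
          rw [hyy']
          exact hNX _ this i
        · intro h
          have h2 : P (flp y i) ↔ P x0 := by tauto
          have := (ih (flp y i) hdist).1 h2
          rw [hyy']
          exact (hmemN _).2 ⟨flp y i, this, i, rfl⟩
    have claim' : ∀ y : Fin n → Bool,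
        ((P y ↔ P x0) → y ∈ X) ∧ (¬(P y ↔ P x0) → y ∈ N) :=
      fun y => claim _ y rfl
    have hXiff : ∀ y, y ∈ X ↔ (P y ↔ P x0) := by
      intro y
      constructor
      · intro hy
        by_contra hc
        have := (claim' y).2 hc
        exact Finset.disjoint_left.1 hdisj hy this
      · exact (claim' y).1
    by_cases hP0 : P x0
    · left
      ext y
      simp only [Finset.mem_filter, Finset.mem_univ, true_and]
      rw [hXiff]
      constructor
      · intro h; exact h.2 hP0
      · intro h; exact iff_of_true h hP0
    · right
      ext y
      simp only [Finset.mem_filter, Finset.mem_univ, true_and]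
      rw [hXiff]
      constructor
      · intro h hc; exact hP0 (h.1 hc)
      · intro h; exact iff_of_false h hP0
end

section
/- If the asynchronous state graph of a Boolean network f : {0,1}^V → {0,1}^V has two distinct attractors (terminal strongly connected components), then some subnetwork of f has at least two fixed points. -/
/-- Arc of the asynchronous state graph: `x → x ⊕ e_i` whenever `f_i(x) ≠ x_i`. -/
def asynArc {W : Type*} [DecidableEq W] (f : (W → Bool) → (W → Bool))
    (x y : W → Bool) : Prop :=
  ∃ i, f x i ≠ x i ∧ y = Function.update x i (!(x i))

/-- An attractor is a terminal strongly connected component of the asynchronous state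
graph: a nonempty set, strongly connected, and closed under reachability. -/
def IsAttractor {W : Type*} [DecidableEq W] (f : (W → Bool) → (W → Bool))
    (A : Set (W → Bool)) : Prop :=
  A.Nonempty ∧ (∀ x ∈ A, ∀ y ∈ A, Relation.ReflTransGen (asynArc f) x y) ∧
    (∀ x ∈ A, ∀ y, Relation.ReflTransGen (asynArc f) x y → y ∈ A)

/-- `h` is the subnetwork of `f` induced by fixing the components outside `I` to `z`. -/
def IsSubnetwork {V : Type*} [DecidableEq V] (f : (V → Bool) → (V → Bool)) (I : Finset V)
    (z : {i // i ∉ I} → Bool)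
    (h : ({i // i ∈ I} → Bool) → ({i // i ∈ I} → Bool)) : Prop :=
  I.Nonempty ∧ ∀ y : {i // i ∈ I} → Bool,
    h y = fun j => f (fun v => if hv : v ∈ I then y ⟨v, hv⟩ else z ⟨v, hv⟩) j.1

theorem stmt_2 {V : Type*} [Fintype V] [DecidableEq V]
    (f : (V → Bool) → (V → Bool)) (A B : Set (V → Bool))
    (hA : IsAttractor f A) (hB : IsAttractor f B) (hAB : A ≠ B) :
    ∃ (I : Finset V) (z : {i // i ∉ I} → Bool)
      (h : ({i // i ∈ I} → Bool) → ({i // i ∈ I} → Bool)),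
      IsSubnetwork f I z h ∧ ∃ a b : {i // i ∈ I} → Bool, a ≠ b ∧ h a = a ∧ h b = b := by
  classical
  -- A and B are disjoint
  have hdisj : ∀ w, w ∈ A → w ∉ B := by
    intro w hwA hwB
    apply hAB
    ext u
    constructor
    · intro hu; exact hB.2.2 w hwB u (hA.2.1 w hwA u hu)
    · intro hu; exact hA.2.2 w hwA u (hB.2.1 w hwB u hu)
  set d : (V → Bool) → (V → Bool) → ℕ :=
    fun x y => (Finset.univ.filter fun i => x i ≠ y i).card with hd_def
  have hP : ∃ n, ∃ x y, x ∈ A ∧ y ∈ B ∧ d x y = n := by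
    obtain ⟨x, hx⟩ := hA.1
    obtain ⟨y, hy⟩ := hB.1
    exact ⟨d x y, x, y, hx, hy, rfl⟩
  obtain ⟨x, y, hxA, hyB, hdN⟩ := Nat.find_spec hP
  have hmin : ∀ x' y', x' ∈ A → y' ∈ B → Nat.find hP ≤ d x' y' := by
    intro x' y' hx' hy'
    exact Nat.find_min' hP ⟨x', y', hx', hy', rfl⟩
  set I : Finset V := Finset.univ.filter fun i => x i ≠ y i with hI_def
  have hmemI : ∀ i, i ∈ I ↔ x i ≠ y i := by
    intro i; simp [hI_def]
  -- I nonempty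
  have hxy : x ≠ y := by
    intro h; exact hdisj x hxA (h ▸ hyB)
  have hIne : I.Nonempty := by
    by_contra hc
    apply hxy
    funext i
    by_contra hne
    exact hc ⟨i, (hmemI i).2 hne⟩
  -- key step: flipping a disagreeing coordinate decreases distance, contradiction
  have key : ∀ (w w' : V → Bool) (j : V), j ∈ I →
      w' = Function.update w j (!(w j)) →
      (∀ i, i ≠ j → w i = w' i) → False →
      True := fun _ _ _ _ _ _ h => h.elim
  have fix_x : ∀ j ∈ I, f x j = x j := by
    intro j hj
    by_contra hne
    have harc : asynArc f x (Function.update x j (!(x j))) := ⟨j, hne, rfl⟩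
    have hx'A : Function.update x j (!(x j)) ∈ A :=
      hA.2.2 x hxA _ (Relation.ReflTransGen.single harc)
    have hfilter : (Finset.univ.filter fun i => Function.update x j (!(x j)) i ≠ y i)
        = I.erase j := by
      ext i
      by_cases hij : i = j
      · subst hij
        have hxj : x i ≠ y i := (hmemI i).1 hj
        simp only [Finset.mem_filter, Finset.mem_univ, true_and, Finset.mem_erase,
          Function.update_self]
        constructor
        · intro h; exact absurd (by revert hxj; cases x i <;> cases y i <;> simp) h
        · intro h; exact absurd rfl h.1
      · simp only [Finset.mem_filter, Finset.mem_univ, true_and, Finset.mem_erase,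
          Function.update_of_ne hij, hmemI]
        tauto
    have hlt : d (Function.update x j (!(x j))) y < Nat.find hP := by
      show (Finset.univ.filter fun i => Function.update x j (!(x j)) i ≠ y i).card < Nat.find hP
      rw [hfilter, ← hdN]
      exact Finset.card_erase_lt_of_mem hj
    exact absurd (hmin _ _ hx'A hyB) (not_le.mpr hlt)
  have fix_y : ∀ j ∈ I, f y j = y j := by
    intro j hj
    by_contra hne
    have harc : asynArc f y (Function.update y j (!(y j))) := ⟨j, hne, rfl⟩
    have hy'B : Function.update y j (!(y j)) ∈ B :=
      hB.2.2 y hyB _ (Relation.ReflTransGen.single harc)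
    have hfilter : (Finset.univ.filter fun i => x i ≠ Function.update y j (!(y j)) i)
        = I.erase j := by
      ext i
      by_cases hij : i = j
      · subst hij
        have hxj : x i ≠ y i := (hmemI i).1 hj
        simp only [Finset.mem_filter, Finset.mem_univ, true_and, Finset.mem_erase,
          Function.update_self]
        constructor
        · intro h; exact absurd (by revert hxj; cases x i <;> cases y i <;> simp) h
        · intro h; exact absurd rfl h.1
      · simp only [Finset.mem_filter, Finset.mem_univ, true_and, Finset.mem_erase,
          Function.update_of_ne hij, hmemI]
        tauto
    have hlt : d x (Function.update y j (!(y j))) < Nat.find hP := by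
      show (Finset.univ.filter fun i => x i ≠ Function.update y j (!(y j)) i).card < Nat.find hP
      rw [hfilter, ← hdN]
      exact Finset.card_erase_lt_of_mem hj
    exact absurd (hmin _ _ hxA hy'B) (not_le.mpr hlt)
  -- assemble
  refine ⟨I, fun j => x j.1,
    fun a j => f (fun v => if hv : v ∈ I then a ⟨v, hv⟩ else x v) j.1,
    ⟨hIne, fun a => rfl⟩,
    (fun j => x j.1), (fun j => y j.1), ?_, ?_, ?_⟩
  · intro heq
    obtain ⟨i, hi⟩ := hIne
    exact (hmemI i).1 hi (congrFun heq ⟨i, hi⟩)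
  · funext j
    have hext : (fun v => if hv : v ∈ I then x v else x v) = x := by
      funext v; split <;> rfl
    show f (fun v => if hv : v ∈ I then x v else x v) j.1 = x j.1
    rw [hext]; exact fix_x j.1 j.2
  · funext j
    have hext : (fun v => if hv : v ∈ I then y v else x v) = y := by
      funext v
      split
      · rfl
      · next hv =>
        have : ¬ x v ≠ y v := fun h => hv ((hmemI v).2 h)
        exact not_not.mp this
    show f (fun v => if hv : v ∈ I then y v else x v) j.1 = y j.1
    rw [hext]; exact fix_y j.1 j.2
end

section
/- If f : {0,1}^V → {0,1}^V is non-expansive (i.e., Hamming distance d(f(x),f(y)) ≤ d(x,y) for all x,y) and its asynchronous state graph has a cyclic attractor (an attractor containing at least two points), then f has no fixed point. -/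
theorem stmt_3 {V : Type*} [Fintype V] [DecidableEq V]
    (f : (V → Bool) → (V → Bool))
    (hne : ∀ x y : V → Bool, hammingDist (f x) (f y) ≤ hammingDist x y)
    (A : Set (V → Bool)) (hA : IsAttractor f A)
    (hcyc : ∃ a ∈ A, ∃ b ∈ A, a ≠ b) :
    ∀ x : V → Bool, f x ≠ x := by
  intro x hx
  obtain ⟨hAne, hconn, hclosed⟩ := hA
  -- pick a ∈ A minimizing hammingDist · x
  have hSne : ((fun a => hammingDist a x) '' A).Nonempty := hAne.image _
  obtain ⟨a, haA, han⟩ := Nat.sInf_mem hSne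
  have hamin : ∀ b ∈ A, hammingDist a x ≤ hammingDist b x := by
    intro b hb
    simp only [] at han
    rw [show hammingDist a x = sInf ((fun a => hammingDist a x) '' A) from han]
    exact Nat.sInf_le ⟨b, hb, rfl⟩
  -- any unstable coordinate of a agrees with x
  have key : ∀ i, f a i ≠ a i → a i = x i := by
    intro i hi
    by_contra hax
    have hmem : Function.update a i (!(a i)) ∈ A :=
      hclosed a haA _ (Relation.ReflTransGen.single ⟨i, hi, rfl⟩)
    have hle := hamin _ hmem
    have hlt : hammingDist (Function.update a i (!(a i))) x < hammingDist a x := by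
      unfold hammingDist
      apply Finset.card_lt_card
      constructor
      · intro j hj
        simp only [Finset.mem_filter, Finset.mem_univ, true_and] at *
        by_cases hji : j = i
        · subst hji; exact hax
        · rwa [Function.update_of_ne hji] at hj
      · intro hsub
        have := hsub (by simp [hax] : i ∈ Finset.univ.filter fun j => a j ≠ x j)
        simp only [Finset.mem_filter, Finset.mem_univ, true_and,
          Function.update_self] at this
        cases h : a i <;> simp [h] at this <;> simp [h, this] at hax
    omega
  -- a is not a fixed point: it has an outgoing arc
  obtain ⟨b, hbA, c, hcA, hbc⟩ := hcyc
  have hstep : ∃ i, f a i ≠ a i := by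
    have : a ≠ b ∨ a ≠ c := by
      by_contra h
      push_neg at h
      exact hbc (h.1 ▸ h.2)
    rcases this with h | h
    · rcases (hconn a haA b hbA).cases_head with h' | ⟨d, ⟨i, hi, _⟩, _⟩
      · exact absurd h' h
      · exact ⟨i, hi⟩
    · rcases (hconn a haA c hcA).cases_head with h' | ⟨d, ⟨i, hi, _⟩, _⟩
      · exact absurd h' h
      · exact ⟨i, hi⟩
  obtain ⟨i0, hi0⟩ := hstep
  -- now hammingDist a x < hammingDist (f a) x, contradicting nonexpansiveness
  have hlt : hammingDist a x < hammingDist (f a) x := by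
    unfold hammingDist
    apply Finset.card_lt_card
    constructor
    · intro j hj
      simp only [Finset.mem_filter, Finset.mem_univ, true_and] at *
      intro hfj
      by_cases hfa : f a j = a j
      · exact hj (hfa ▸ hfj)
      · exact hj (key j hfa ▸ rfl)
    · intro hsub
      have hax0 : a i0 = x i0 := key i0 hi0
      have : i0 ∈ Finset.univ.filter fun j => f a j ≠ x j := by
        simp [hax0 ▸ hi0]
      have := hsub this
      simp only [Finset.mem_filter, Finset.mem_univ, true_and] at this
      exact this hax0
  have := hne a x
  rw [hx] at this
  omega
end

section
/- If the global interaction graph G(f) of a Boolean network f : {0,1}^V → {0,1}^V has no directed cycle, then f has a unique fixed point. -/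
/-- Arc `j → i` in the global interaction graph of `f`. -/
def globalArc {W : Type*} [DecidableEq W] (f : (W → Bool) → (W → Bool)) (j i : W) : Prop :=
  ∃ x, f (Function.update x j true) i ≠ f (Function.update x j false) i

/-- A relation `A` has a directed cycle: distinct vertices `v 0, …, v k` with an arc
from each to the next, cyclically. -/
def HasCycle {W : Type*} (A : W → W → Prop) : Prop :=
  ∃ (k : ℕ) (v : Fin (k + 1) → W), Function.Injective v ∧ ∀ t, A (v t) (v (t + 1))

section Aux

variable {V : Type*} [Fintype V] [DecidableEq V]

lemma agree_aux (f : (V → Bool) → (V → Bool)) (i : V) :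
    ∀ s : Finset V, ∀ x y : V → Bool, (∀ j, globalArc f j i → x j = y j) →
      (∀ j ∉ s, x j = y j) → f x i = f y i := by
  intro s
  induction s using Finset.induction_on with
  | empty =>
    intro x y _ h
    have : x = y := funext fun j => h j (by simp)
    rw [this]
  | @insert a s _ IH =>
    intro x y harc hout
    set x' := Function.update x a (y a) with hx'def
    have hx'arc : ∀ j, globalArc f j i → x' j = y j := by
      intro j hj
      by_cases hja : j = a
      · subst hja; simp [hx'def]
      · simp [hx'def, Function.update_of_ne hja]; exact harc j hj
    have hx'out : ∀ j ∉ s, x' j = y j := by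
      intro j hj
      by_cases hja : j = a
      · subst hja; simp [hx'def]
      · simp [hx'def, Function.update_of_ne hja]
        exact hout j (by simp [hja, hj])
    have step : f x i = f x' i := by
      by_cases hga : globalArc f a i
      · have hxa : x a = y a := harc a hga
        have : x' = x := by
          rw [hx'def, ← hxa, Function.update_eq_self]
        rw [this]
      · have hall : ∀ z, f (Function.update z a true) i = f (Function.update z a false) i := by
          intro z
          by_contra hz
          exact hga ⟨z, hz⟩
        have h1 : x = Function.update x a (x a) := (Function.update_eq_self a x).symm
        conv_lhs => rw [h1]
        rw [hx'def]
        cases hxa : x a <;> cases hya : y a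
        · rfl
        · exact (hall x).symm
        · exact hall x
        · rfl
    rw [step]
    exact IH x' y hx'arc hx'out

lemma arc_of_ne {f : (V → Bool) → (V → Bool)} {x y : V → Bool} {i : V}
    (h : f x i ≠ f y i) : ∃ j, globalArc f j i ∧ x j ≠ y j := by
  by_contra hc
  push_neg at hc
  exact h (agree_aux f i Finset.univ x y hc (fun j hj => absurd (Finset.mem_univ j) hj))

lemma diff_walk (f : (V → Bool) → (V → Bool)) :
    ∀ n (x y : V → Bool) (i : V), f^[n] x i ≠ f^[n] y i →
      ∃ w : ℕ → V, w n = i ∧ ∀ t < n, globalArc f (w t) (w (t + 1)) := by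
  intro n
  induction n with
  | zero =>
    intro x y i h
    exact ⟨fun _ => i, rfl, fun t ht => absurd ht (by omega)⟩
  | succ n IH =>
    intro x y i h
    rw [Function.iterate_succ_apply' f n x, Function.iterate_succ_apply' f n y] at h
    obtain ⟨j, hji, hj⟩ := arc_of_ne h
    obtain ⟨w, hwn, hw⟩ := IH x y j hj
    refine ⟨fun t => if t = n + 1 then i else w t, by simp, ?_⟩
    intro t ht
    by_cases htn : t = n
    · subst htn
      simp [hwn]
      exact hji
    · have h1 : t ≠ n + 1 := by omega
      have h2 : t + 1 ≠ n + 1 := by omega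
      simp [h1, h2, htn]
      exact hw t (by omega)

lemma hasCycle_of_closedWalk (A : V → V → Prop) :
    ∀ n, 0 < n → ∀ w : ℕ → V, w n = w 0 → (∀ t < n, A (w t) (w (t + 1))) → HasCycle A := by
  intro n
  induction n using Nat.strong_induction_on with
  | _ n IH =>
    intro hn w hclose harc
    by_cases hinj : Set.InjOn w (Set.Iio n)
    · obtain ⟨k, rfl⟩ : ∃ k, n = k + 1 := ⟨n - 1, by omega⟩
      refine ⟨k, fun t => w t.val, ?_, ?_⟩
      · intro a b hab
        exact Fin.ext (hinj a.isLt b.isLt hab)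
      · intro t
        by_cases htk : (t : ℕ) = k
        · have ht : t = Fin.last k := Fin.ext (by simpa using htk)
          subst ht
          have h0 : Fin.last k + 1 = 0 := by
            rw [Fin.last_add_one]
          rw [h0]
          show A (w k) (w 0)
          rw [← hclose]
          exact harc k (by omega)
        · have hlt : (t : ℕ) < k := by omega
          have h1 : ((t + 1 : Fin (k + 1)) : ℕ) = (t : ℕ) + 1 := by
            rw [Fin.val_add_one_of_lt]
            exact Fin.lt_last_iff_ne_last.mpr (fun h => htk (by simp [h]))
          show A (w t.val) (w ((t + 1 : Fin (k + 1)) : ℕ))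
          rw [h1]
          exact harc t.val (by omega)
    · rw [Set.InjOn] at hinj
      push_neg at hinj
      obtain ⟨a, ha, b, hb, heq, hne⟩ := hinj
      simp only [Set.mem_Iio] at ha hb
      have key : ∀ a b : ℕ, a < b → b < n → w a = w b → HasCycle A := by
        intro a b hab hbn heq
        refine IH (b - a) (by omega) (by omega) (fun t => w (a + t)) ?_ ?_
        · show w (a + (b - a)) = w (a + 0)
          have h1 : a + (b - a) = b := by omega
          have h2 : a + 0 = a := by omega
          rw [h1, h2, heq]
        · intro t ht
          have h1 : a + (t + 1) = (a + t) + 1 := by omega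
          show A (w (a + t)) (w (a + (t + 1)))
          rw [h1]
          exact harc (a + t) (by omega)
      rcases Ne.lt_or_gt hne with hlt | hlt
      · exact key a b hlt hb heq
      · exact key b a hlt ha heq.symm

end Aux

/-- Robert's theorem: if the global interaction graph has no directed cycle, then
`f` has a unique fixed point. -/
theorem stmt_5 {V : Type*} [Fintype V] [DecidableEq V]
    (f : (V → Bool) → (V → Bool)) (hacyc : ¬ HasCycle (globalArc f)) :
    ∃! x : V → Bool, f x = x := by
  set N := Fintype.card V with hN
  have key : ∀ x y : V → Bool, f^[N] x = f^[N] y := by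
    intro x y
    funext i
    by_contra hne
    obtain ⟨w, hwN, hw⟩ := diff_walk f N x y i hne
    have hninj : ¬ Function.Injective (fun t : Fin (N + 1) => w t.val) := by
      intro hinj
      have := Fintype.card_le_of_injective _ hinj
      simp [hN] at this
    rw [Function.Injective] at hninj
    push_neg at hninj
    obtain ⟨a, b, heq, hne'⟩ := hninj
    have hsub : ∀ p q : ℕ, p < q → q ≤ N → w p = w q → False := by
      intro p q hpq hqN heqw
      apply hacyc
      refine hasCycle_of_closedWalk (globalArc f) (q - p) (by omega) (fun t => w (p + t)) ?_ ?_
      · show w (p + (q - p)) = w (p + 0)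
        have h1 : p + (q - p) = q := by omega
        have h2 : p + 0 = p := by omega
        rw [h1, h2, heqw]
      · intro t ht
        have h1 : p + (t + 1) = (p + t) + 1 := by omega
        show globalArc f (w (p + t)) (w (p + (t + 1)))
        rw [h1]
        exact hw (p + t) (by omega)
    have hvne : (a : ℕ) ≠ (b : ℕ) := fun h => hne' (Fin.ext h)
    rcases Ne.lt_or_gt hvne with hlt | hlt
    · exact hsub a b hlt (by omega) heq
    · exact hsub b a hlt (by omega) heq.symm
  refine ⟨f^[N] (fun _ => false), ?_, ?_⟩
  · calc f (f^[N] fun _ => false) = f^[N] (f fun _ => false) :=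
          (Function.iterate_succ_apply' f N _).symm.trans (Function.iterate_succ_apply f N _)
    _ = f^[N] (fun _ => false) := key _ _
  · intro y hy
    calc y = f^[N] y := (Function.iterate_fixed hy N).symm
    _ = f^[N] (fun _ => false) := key _ _
end

section
/- If for every x ∈ {0,1}^V the local interaction graph Gf(x) has no directed cycle, then the map x ↦ f(x) ⊕ x is a bijection of {0,1}^V; in particular f has a unique fixed point. -/
/-- Arc `j → i` in the local interaction graph of `f` at `x`. -/
def localArc {W : Type*} [DecidableEq W] (f : (W → Bool) → (W → Bool))
    (x : W → Bool) (j i : W) : Prop :=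
  f (Function.update x j true) i ≠ f (Function.update x j false) i

/-- The conjugate of `f`: `x ↦ f(x) ⊕ x`. -/
def conjNet {W : Type*} (f : (W → Bool) → (W → Bool)) : (W → Bool) → (W → Bool) :=
  fun x i => xor (f x i) (x i)

lemma hasCycle_mono {T W : Type*} (φ : T → W) (hφ : Function.Injective φ)
    (B : T → T → Prop) (A : W → W → Prop)
    (h : ∀ t t', B t t' → A (φ t) (φ t')) (hc : HasCycle B) : HasCycle A := by
  obtain ⟨k, v, hv, ha⟩ := hc
  exact ⟨k, φ ∘ v, hφ.comp hv, fun t => h _ _ (ha t)⟩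

/-- If every element has a successor related to it, a finite nonempty type has a cycle. -/
lemma hasCycle_of_succ {T : Type*} [Finite T] [Nonempty T] (B : T → T → Prop)
    (s : T → T) (h : ∀ t, B t (s t)) : HasCycle B := by
  classical
  obtain ⟨t₀⟩ := ‹Nonempty T›
  set u : ℕ → T := fun k => s^[k] t₀ with hu
  have husucc : ∀ n, u (n + 1) = s (u n) := fun n => Function.iterate_succ_apply' s n t₀
  have hrep : ∃ n, ∃ a, a < n ∧ u a = u n := by
    obtain ⟨a, b, hab, he⟩ := Finite.exists_ne_map_eq_of_infinite u
    rcases lt_or_gt_of_ne hab with h1 | h1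
    · exact ⟨b, a, h1, he⟩
    · exact ⟨a, b, h1, he.symm⟩
  set b := Nat.find hrep with hb
  obtain ⟨a, hab, hea⟩ : ∃ a, a < b ∧ u a = u b := Nat.find_spec hrep
  have huinj : ∀ p q, p < q → q < b → u p ≠ u q := by
    intro p q h1 h2 he
    exact Nat.find_min hrep h2 ⟨p, h1, he⟩
  set k := b - 1 - a with hk
  have hbk : b = a + k + 1 := by omega
  refine ⟨k, fun t => u (a + t.val), ?_, ?_⟩
  · intro t1 t2 he2
    have h1 : t1.val < k + 1 := t1.isLt
    have h2 : t2.val < k + 1 := t2.isLt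
    by_contra hne
    have hvne : t1.val ≠ t2.val := fun hh => hne (Fin.ext hh)
    rcases lt_or_gt_of_ne hvne with hlt | hlt
    · exact huinj _ _ (by omega) (by omega) he2
    · exact huinj _ _ (by omega) (by omega) he2.symm
  · intro t
    by_cases hlt : t.val < k
    · have hv1 : ((t + 1 : Fin (k + 1))).val = t.val + 1 :=
        Fin.val_add_one_of_lt (by rw [Fin.lt_def, Fin.val_last]; exact hlt)
      simp only [hv1]
      rw [show a + (t.val + 1) = (a + t.val) + 1 by omega, husucc]
      exact h _
    · have htk : t.val = k := by have := t.isLt; omega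
      have ht : t = Fin.last k := Fin.ext htk
      have hv0 : ((t + 1 : Fin (k + 1))).val = 0 := by
        rw [ht, Fin.last_add_one, Fin.val_zero]
      simp only [hv0, htk]
      have hlast : u (a + 0) = s (u (a + k)) := by
        rw [Nat.add_zero, hea, hbk, husucc]
      rw [hlast]
      exact h _

lemma localArc_of_ne {V : Type*} [DecidableEq V] (f : (V → Bool) → (V → Bool))
    (x : V → Bool) (j i : V) (a b : Bool) (hab : a ≠ b)
    (h : f (Function.update x j a) i ≠ f (Function.update x j b) i) :
    localArc f x j i := by
  unfold localArc
  cases a with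
  | true =>
    cases b with
    | true => exact absurd rfl hab
    | false => exact h
  | false =>
    cases b with
    | true => exact Ne.symm h
    | false => exact absurd rfl hab

/-- Key lemma: if all local graphs are acyclic, then for any two distinct points
there is a coordinate where they differ but where `f` takes equal values. -/
lemma keyL {V : Type*} [Fintype V] [DecidableEq V]
    (f : (V → Bool) → (V → Bool))
    (hacyc : ∀ x : V → Bool, ¬ HasCycle (localArc f x)) :
    ∀ (d : ℕ) (x y : V → Bool),
      (Finset.univ.filter fun i => x i ≠ y i).card ≤ d → x ≠ y →
      ∃ i, x i ≠ y i ∧ f x i = f y i := by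
  intro d
  induction d with
  | zero =>
    intro x y hc hne
    exfalso
    apply hne
    funext i
    by_contra hi
    have hmem : i ∈ Finset.univ.filter fun i => x i ≠ y i := by
      simp [hi]
    have := Finset.card_pos.mpr ⟨i, hmem⟩
    omega
  | succ d ih =>
    intro x y hc hne
    by_contra hcon
    push_neg at hcon
    have hex : ∃ j, x j ≠ y j := by
      by_contra hall
      push_neg at hall
      exact hne (funext hall)
    obtain ⟨j₀, hj₀⟩ := hex
    by_cases hsing : ∀ i, x i ≠ y i → i = j₀
    · -- the two points differ in a single coordinate: loop at j₀
      have hyy : y = Function.update x j₀ (y j₀) := by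
        funext i
        by_cases hij : i = j₀
        · subst hij; simp
        · rw [Function.update_apply, if_neg hij]
          by_contra hxy
          exact hij (hsing i (Ne.symm hxy))
      have harc : localArc f x j₀ j₀ := by
        apply localArc_of_ne f x j₀ j₀ (x j₀) (y j₀) hj₀
        rw [Function.update_eq_self, ← hyy]
        exact hcon j₀ hj₀
      exact hacyc x ⟨0, fun _ => j₀, fun a b _ => Fin.ext (by omega), fun _ => harc⟩
    · push_neg at hsing
      obtain ⟨j₁, hj₁, hj₁0⟩ := hsing
      -- every differing coordinate j has an out-arc to a differing coordinate at x
      have hstep : ∀ j, x j ≠ y j → ∃ i, (x i ≠ y i) ∧ localArc f x j i := by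
        intro j hj
        set x' := Function.update x j (y j) with hx'
        have hdiff : ∀ i, (x' i ≠ y i ↔ (i ≠ j ∧ x i ≠ y i)) := by
          intro i
          by_cases hij : i = j
          · subst hij; simp [hx']
          · simp [hx', Function.update_apply, if_neg hij, hij]
        have hother : ∃ i, i ≠ j ∧ x i ≠ y i := by
          by_cases hjj : j₀ = j
          · exact ⟨j₁, by rw [← hjj]; exact hj₁0, hj₁⟩
          · exact ⟨j₀, hjj, hj₀⟩
        have hne' : x' ≠ y := by
          obtain ⟨i, hi1, hi2⟩ := hother
          intro he
          have : x' i ≠ y i := (hdiff i).mpr ⟨hi1, hi2⟩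
          exact this (by rw [he])
        have hjmem : j ∈ Finset.univ.filter fun i => x i ≠ y i := by simp [hj]
        have hfe : (Finset.univ.filter fun i => x' i ≠ y i)
            = (Finset.univ.filter fun i => x i ≠ y i).erase j := by
          ext i
          simp only [Finset.mem_filter, Finset.mem_erase, Finset.mem_univ, true_and]
          rw [hdiff i]
        have hcard : (Finset.univ.filter fun i => x' i ≠ y i).card ≤ d := by
          rw [hfe, Finset.card_erase_of_mem hjmem]
          omega
        obtain ⟨i, hi, hfeq⟩ := ih x' y hcard hne'
        rw [hdiff i] at hi
        obtain ⟨hij, hixy⟩ := hi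
        refine ⟨i, hixy, ?_⟩
        have hfx : f x i ≠ f x' i := by
          intro hh
          exact hcon i hixy (hh.trans hfeq)
        apply localArc_of_ne f x j i (x j) (y j) hj
        rw [Function.update_eq_self, ← hx']
        exact hfx
      -- build a cycle inside the set of differing coordinates
      let T := {j : V // x j ≠ y j}
      have hTne : Nonempty T := ⟨⟨j₀, hj₀⟩⟩
      choose s hs1 hs2 using fun (t : T) => hstep t.1 t.2
      let s' : T → T := fun t => ⟨s t, hs1 t⟩
      have hcyc : HasCycle (fun a b : T => localArc f x a.1 b.1) :=
        hasCycle_of_succ _ s' (fun t => hs2 t)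
      exact hacyc x (hasCycle_mono Subtype.val Subtype.val_injective _ _
        (fun _ _ h => h) hcyc)

/-- Shih–Dong's theorem (with the bijection strengthening): if every local interaction
graph is acyclic, then the conjugate of `f` is a bijection; in particular `f` has a
unique fixed point. -/
theorem stmt_6 {V : Type*} [Fintype V] [DecidableEq V]
    (f : (V → Bool) → (V → Bool))
    (hacyc : ∀ x : V → Bool, ¬ HasCycle (localArc f x)) :
    Function.Bijective (conjNet f) ∧ ∃! x : V → Bool, f x = x := by
  classical
  have hinj : Function.Injective (conjNet f) := by
    intro x y he
    by_contra hne
    obtain ⟨i, hi, hfi⟩ := keyL f hacyc _ x y le_rfl hne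
    have hei := congrFun he i
    simp only [conjNet] at hei
    rw [hfi] at hei
    apply hi
    cases f y i <;> cases hxx : x i <;> cases hyy : y i <;> simp_all
  have hbij : Function.Bijective (conjNet f) := Finite.injective_iff_bijective.mp hinj
  refine ⟨hbij, ?_⟩
  obtain ⟨x, hx⟩ := hbij.surjective (fun _ => false)
  refine ⟨x, ?_, ?_⟩
  · funext i
    have hxi := congrFun hx i
    simp only [conjNet] at hxi
    cases hfx : f x i <;> cases hxx : x i <;> simp_all
  · intro y hy
    apply hinj
    rw [hx]
    funext i
    simp [conjNet, congrFun hy i]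
end

section
/- If a Boolean network f : {0,1}^V → {0,1}^V has no subnetwork (including f itself) that is even-self-dual or odd-self-dual, then the conjugate map x ↦ f(x) ⊕ x is a bijection of {0,1}^V. -/
/-- `f` is self-dual: `f(x ⊕ 1) = f(x) ⊕ 1`. -/
def SelfDual {W : Type*} (f : (W → Bool) → (W → Bool)) : Prop :=
  ∀ x, f (fun i => !(x i)) = fun i => !(f x i)

/-- A point has even parity if its number of `true` components is even. -/
def EvenPt {W : Type*} [Fintype W] (x : W → Bool) : Prop :=
  Even ((Finset.univ.filter (fun i => x i = true)).card)

/-- `f` is even: the image of its conjugate is exactly the set of even-parity points. -/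
def IsEvenNet {W : Type*} [Fintype W] (f : (W → Bool) → (W → Bool)) : Prop :=
  Set.range (conjNet f) = {x | EvenPt x}

/-- `f` is odd: the image of its conjugate is exactly the set of odd-parity points. -/
def IsOddNet {W : Type*} [Fintype W] (f : (W → Bool) → (W → Bool)) : Prop :=
  Set.range (conjNet f) = {x | ¬ EvenPt x}

lemma evenPt_update_not {W : Type*} [Fintype W] [DecidableEq W] (c : W → Bool) (j : W) :
    EvenPt (Function.update c j (!c j)) ↔ ¬ EvenPt c := by
  classical
  unfold EvenPt
  rcases Bool.eq_false_or_eq_true (c j) with hj | hj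
  · have hset : (Finset.univ.filter fun i => c i = true)
        = insert j (Finset.univ.filter fun i => Function.update c j (!c j) i = true) := by
      ext i
      by_cases hij : i = j
      · subst hij; simp [Function.update_self, hj]
      · simp [Function.update_of_ne hij, hij]
    have hjmem : j ∉ (Finset.univ.filter fun i => Function.update c j (!c j) i = true) := by
      simp [Function.update_self, hj]
    rw [hset, Finset.card_insert_of_notMem hjmem, Nat.even_add_one, not_not]
  · have hset : (Finset.univ.filter fun i => Function.update c j (!c j) i = true)
        = insert j (Finset.univ.filter fun i => c i = true) := by
      ext i
      by_cases hij : i = j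
      · subst hij; simp [Function.update_self, hj]
      · simp [Function.update_of_ne hij, hij]
    have hjmem : j ∉ (Finset.univ.filter fun i => c i = true) := by simp [hj]
    rw [hset, Finset.card_insert_of_notMem hjmem]
    exact Nat.even_add_one

lemma bool_ne_iff2 {p q : Bool} (h : p ≠ q) : p = !q := by
  cases p <;> cases q <;> simp_all

lemma key_step {W : Type*} [Fintype W] [DecidableEq W]
    (G : (W → Bool) → (W → Bool))
    (H1 : ∀ a b : W → Bool, (∀ i, a i ≠ b i → G a i = G b i) → a = b ∨ b = fun i => !a i)
    (j : W) (c : W → Bool) :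
    (Finset.univ.filter fun a => G a = c).card
      + (Finset.univ.filter fun a => G a = Function.update c j (!c j)).card = 2 := by
  classical
  set q : (W → Bool) → (W → Bool) := fun a => Function.update (G a) j (a j) with hq
  have hinj : Function.Injective q := by
    intro a b hab
    have haj : a j = b j := by
      have h := congrFun hab j
      simpa [q] using h
    have hGoff : ∀ i, i ≠ j → G a i = G b i := by
      intro i hi
      have h := congrFun hab i
      simpa [q, Function.update_of_ne hi] using h
    rcases H1 a b (fun i hne => hGoff i (by rintro rfl; exact hne haj)) with h | h
    · exact h
    · exfalso
      have h2 := congrFun h j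
      rw [← haj] at h2
      cases haj' : a j <;> simp [haj'] at h2
  have hbij : Function.Bijective q := Finite.injective_iff_bijective.mp hinj
  let E := Equiv.ofBijective q hbij
  let a0 := E.symm (Function.update c j false)
  let a1 := E.symm (Function.update c j true)
  have hq0 : q a0 = Function.update c j false := E.apply_symm_apply _
  have hq1 : q a1 = Function.update c j true := E.apply_symm_apply _
  have hmemU : ∀ a : W → Bool, ((∀ i, i ≠ j → G a i = c i) ↔ (a = a0 ∨ a = a1)) := by
    intro a
    constructor
    · intro hoff
      have hqa : q a = Function.update c j (a j) := by
        funext i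
        by_cases hij : i = j
        · subst hij; simp [q]
        · simp [q, Function.update_of_ne hij, hoff i hij]
      cases haj : a j
      · left
        apply E.injective
        show q a = q a0
        rw [hqa, hq0, haj]
      · right
        apply E.injective
        show q a = q a1
        rw [hqa, hq1, haj]
    · rintro (rfl | rfl) <;> intro i hij
      · have h := congrFun hq0 i
        rw [Function.update_of_ne hij] at h
        rw [← h]; simp [q, Function.update_of_ne hij]
      · have h := congrFun hq1 i
        rw [Function.update_of_ne hij] at h
        rw [← h]; simp [q, Function.update_of_ne hij]
  have hcne : c ≠ Function.update c j (!c j) := by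
    intro h
    have h2 := congrFun h j
    rw [Function.update_self] at h2
    cases hcj : c j <;> simp [hcj] at h2
  have hunion : (Finset.univ.filter fun a => G a = c)
      ∪ (Finset.univ.filter fun a => G a = Function.update c j (!c j)) = ({a0, a1} : Finset _) := by
    ext a
    simp only [Finset.mem_union, Finset.mem_filter, Finset.mem_univ, true_and,
      Finset.mem_insert, Finset.mem_singleton]
    constructor
    · rintro (h | h)
      · exact (hmemU a).mp (fun i hij => by rw [h])
      · refine (hmemU a).mp (fun i hij => ?_)
        rw [h, Function.update_of_ne hij]
    · intro h
      have hoff := (hmemU a).mpr h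
      have hGa : G a = Function.update c j (G a j) := by
        funext i
        by_cases hij : i = j
        · subst hij; rw [Function.update_self]
        · rw [Function.update_of_ne hij]; exact hoff i hij
      by_cases hcc : G a j = c j
      · left; rw [hGa, hcc, Function.update_eq_self]
      · right; rw [hGa, bool_ne_iff2 hcc]
  have hdisj : Disjoint (Finset.univ.filter fun a => G a = c)
      (Finset.univ.filter fun a => G a = Function.update c j (!c j)) := by
    rw [Finset.disjoint_left]
    intro a h1 h2
    simp only [Finset.mem_filter, Finset.mem_univ, true_and] at h1 h2
    exact hcne (h1 ▸ h2)
  have hne01 : a0 ≠ a1 := by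
    intro h
    have h2 : q a0 = q a1 := by rw [h]
    rw [hq0, hq1] at h2
    have h3 := congrFun h2 j
    simp at h3
  rw [← Finset.card_union_of_disjoint hdisj, hunion]
  rw [Finset.card_insert_of_notMem (by simp [hne01]), Finset.card_singleton]

lemma key_lemma {W : Type*} [Fintype W] [DecidableEq W] [Nonempty W]
    (G : (W → Bool) → (W → Bool))
    (H1 : ∀ a b : W → Bool, (∀ i, a i ≠ b i → G a i = G b i) → a = b ∨ b = fun i => !a i)
    (a₀ : W → Bool) (H2 : G (fun i => !a₀ i) = G a₀) :
    (∀ a, G (fun i => !a i) = G a) ∧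
      (Set.range G = {x | EvenPt x} ∨ Set.range G = {x | ¬ EvenPt x}) := by
  classical
  let N : (W → Bool) → ℕ := fun c => (Finset.univ.filter fun a => G a = c).card
  have hNstep : ∀ (j : W) (c : W → Bool), N c + N (Function.update c j (!c j)) = 2 :=
    fun j c => key_step G H1 j c
  obtain ⟨j₀⟩ := ‹Nonempty W›
  set c₀ := G a₀ with hc₀
  have hN0 : N c₀ = 2 := by
    have hle := hNstep j₀ c₀
    have hge : 2 ≤ N c₀ := by
      have hmem : ({a₀, fun i => !a₀ i} : Finset (W → Bool))
          ⊆ Finset.univ.filter fun a => G a = c₀ := by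
        intro a ha
        simp only [Finset.mem_insert, Finset.mem_singleton] at ha
        rcases ha with rfl | rfl
        · simp [hc₀]
        · simp [H2]
      have hcard : ({a₀, fun i => !a₀ i} : Finset (W → Bool)).card = 2 := by
        rw [Finset.card_insert_of_notMem, Finset.card_singleton]
        simp only [Finset.mem_singleton]
        intro h
        have := congrFun h j₀
        cases h0 : a₀ j₀ <;> simp [h0] at this
      calc 2 = _ := hcard.symm
        _ ≤ _ := Finset.card_le_card hmem
    omega
  -- main walk
  have walk : ∀ (k : ℕ) (c : W → Bool), (Finset.univ.filter fun i => c i ≠ c₀ i).card = k →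
      ((EvenPt c ↔ EvenPt c₀) ∧ N c = 2) ∨ (¬(EvenPt c ↔ EvenPt c₀) ∧ N c = 0) := by
    intro k
    induction k using Nat.strong_induction_on with
    | _ k ih =>
      intro c hc
      rcases Nat.eq_zero_or_pos k with hk | hk
      · have hcard0 : (Finset.univ.filter fun i => c i ≠ c₀ i) = ∅ :=
          Finset.card_eq_zero.mp (by omega)
        have hceq : c = c₀ := by
          funext i
          by_contra hi
          have hmem : i ∈ Finset.univ.filter fun i => c i ≠ c₀ i := by simp [hi]
          rw [hcard0] at hmem
          exact Finset.notMem_empty i hmem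
        rw [hceq]
        exact Or.inl ⟨Iff.rfl, hN0⟩
      · have hne : (Finset.univ.filter fun i => c i ≠ c₀ i).Nonempty := by
          rw [← Finset.card_pos, hc]; exact hk
        obtain ⟨j, hj⟩ := hne
        simp only [Finset.mem_filter, Finset.mem_univ, true_and] at hj
        set c'' := Function.update c j (!c j) with hc''
        have hflip : Function.update c'' j (!c'' j) = c := by
          funext i
          by_cases hij : i = j
          · subst hij; simp [c'']
          · simp [c'', Function.update_of_ne hij]
        have hcc : (Finset.univ.filter fun i => c'' i ≠ c₀ i)
            = (Finset.univ.filter fun i => c i ≠ c₀ i).erase j := by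
          ext i
          simp only [Finset.mem_filter, Finset.mem_univ, true_and, Finset.mem_erase]
          by_cases hij : i = j
          · subst hij
            simp only [c'', Function.update_self]
            constructor
            · intro h
              exfalso
              apply h
              cases h1 : c i <;> cases h2 : c₀ i <;> simp_all
            · intro h; exact absurd rfl h.1
          · simp [c'', Function.update_of_ne hij, hij]
        have hcard'' : (Finset.univ.filter fun i => c'' i ≠ c₀ i).card = k - 1 := by
          rw [hcc, Finset.card_erase_of_mem (by simp [hj]), hc]
        have hPd := ih (k - 1) (by omega) c'' hcard''
        have hstep := hNstep j c''
        rw [hflip] at hstep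
        have hpar : EvenPt c ↔ ¬ EvenPt c'' := by
          have h := evenPt_update_not c'' j
          rw [hflip] at h
          exact h
        rcases hPd with ⟨hiff, hn⟩ | ⟨hiff, hn⟩
        · right
          constructor
          · intro hcon; rw [hpar] at hcon; tauto
          · omega
        · left
          constructor
          · rw [hpar]; tauto
          · omega
  have hall : ∀ c : W → Bool,
      ((EvenPt c ↔ EvenPt c₀) ∧ N c = 2) ∨ (¬(EvenPt c ↔ EvenPt c₀) ∧ N c = 0) :=
    fun c => walk _ c rfl
  have hrangeN : ∀ c : W → Bool, (c ∈ Set.range G ↔ N c ≠ 0) := by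
    intro c
    rw [Set.mem_range]
    constructor
    · rintro ⟨a, rfl⟩
      have hmem : a ∈ Finset.univ.filter fun b => G b = G a := by simp
      intro h0
      have hemp : (Finset.univ.filter fun b => G b = G a) = ∅ := Finset.card_eq_zero.mp h0
      rw [hemp] at hmem
      exact Finset.notMem_empty a hmem
    · intro h0
      have hpos : (Finset.univ.filter fun a => G a = c).Nonempty := by
        rw [← Finset.card_pos]
        have h1 : (Finset.univ.filter fun a => G a = c).card ≠ 0 := h0
        omega
      obtain ⟨a, ha⟩ := hpos
      simp only [Finset.mem_filter] at ha
      exact ⟨a, ha.2⟩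
  have hmem_iff : ∀ c : W → Bool, (c ∈ Set.range G ↔ (EvenPt c ↔ EvenPt c₀)) := by
    intro c
    rw [hrangeN c]
    rcases hall c with ⟨hiff, hn⟩ | ⟨hiff, hn⟩
    · rw [hn]; exact iff_of_true (by omega) hiff
    · rw [hn]; exact iff_of_false (by simp) hiff
  constructor
  · intro a
    have hNa : N (G a) ≠ 0 := (hrangeN (G a)).mp ⟨a, rfl⟩
    have hNa2 : N (G a) = 2 := by rcases hall (G a) with ⟨_, h⟩ | ⟨_, h⟩ <;> omega
    have h1lt : 1 < (Finset.univ.filter fun b => G b = G a).card := by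
      have h1 : (Finset.univ.filter fun b => G b = G a).card = 2 := hNa2
      omega
    obtain ⟨b, hb, hba⟩ := Finset.exists_mem_ne h1lt a
    simp only [Finset.mem_filter, Finset.mem_univ, true_and] at hb
    rcases H1 a b (fun i _ => hb.symm ▸ rfl) with h | h
    · exact absurd h.symm hba
    · rw [← h]; exact hb
  · by_cases hE : EvenPt c₀
    · left
      ext c
      rw [Set.mem_setOf_eq, hmem_iff c]
      tauto
    · right
      ext c
      rw [Set.mem_setOf_eq, hmem_iff c]
      tauto

/-- If `f` has no even- or odd-self-dual subnetwork, then its conjugate is a bijection. -/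
theorem stmt_7 {V : Type*} [Fintype V] [DecidableEq V]
    (f : (V → Bool) → (V → Bool))
    (hyp : ∀ (I : Finset V) (z : {i // i ∉ I} → Bool)
      (h : ({i // i ∈ I} → Bool) → ({i // i ∈ I} → Bool)),
      IsSubnetwork f I z h → ¬ (SelfDual h ∧ (IsEvenNet h ∨ IsOddNet h))) :
    Function.Bijective (conjNet f) := by
  classical
  refine Finite.injective_iff_bijective.mp ?_
  by_contra hni
  obtain ⟨x, y, hxy, hne⟩ := Function.not_injective_iff.mp hni
  set F := conjNet f with hF
  set P : Finset V → Prop := fun I => I.Nonempty ∧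
    ∃ w : V → Bool, ∀ i ∈ I, F (fun v => if v ∈ I then !w v else w v) i = F w i with hP
  set S : Finset (Finset V) := Finset.univ.filter P with hS
  have hSne : S.Nonempty := by
    refine ⟨Finset.univ.filter (fun i => x i ≠ y i), ?_⟩
    rw [hS, Finset.mem_filter]
    refine ⟨Finset.mem_univ _, ?_, x, ?_⟩
    · obtain ⟨i, hi⟩ := Function.ne_iff.mp hne
      exact ⟨i, by simp [hi]⟩
    · intro i _
      have hyx : (fun v => if v ∈ Finset.univ.filter (fun i => x i ≠ y i) then !x v else x v)
          = y := by
        funext v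
        by_cases hv : x v = y v
        · simp [hv]
        · have hyv : y v = !x v := by cases h1 : x v <;> cases h2 : y v <;> simp_all
          simp [hv, hyv]
      rw [hyx, hxy]
  obtain ⟨I, hIS, hImin⟩ := Finset.exists_min_image S Finset.card hSne
  rw [hS, Finset.mem_filter] at hIS
  obtain ⟨-, hInon, w, hw⟩ := hIS
  haveI : Nonempty {i // i ∈ I} := ⟨⟨hInon.choose, hInon.choose_spec⟩⟩
  set z : {i // i ∉ I} → Bool := fun i => w i.1 with hz
  set e : ({i // i ∈ I} → Bool) → (V → Bool) :=
    fun a v => if hv : v ∈ I then a ⟨v, hv⟩ else w v with he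
  set h : ({i // i ∈ I} → Bool) → ({i // i ∈ I} → Bool) :=
    fun a j => f (e a) j.1 with hh
  have hsub : IsSubnetwork f I z h := ⟨hInon, fun _ => rfl⟩
  set G := conjNet h with hG
  have hGF : ∀ (a : {i // i ∈ I} → Bool) (i : {i // i ∈ I}), G a i = F (e a) i.1 := by
    intro a i
    show xor (f (e a) i.1) (a i) = xor (f (e a) i.1) (e a i.1)
    congr 1
    show a i = if hv : i.1 ∈ I then a ⟨i.1, hv⟩ else w i.1
    rw [dif_pos i.2]
  have heap : ∀ (a : {i // i ∈ I} → Bool) (i : {i // i ∈ I}), e a i.1 = a i := by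
    intro a i
    show (if hv : i.1 ∈ I then a ⟨i.1, hv⟩ else w i.1) = a i
    rw [dif_pos i.2]
  have H1 : ∀ a b : {i // i ∈ I} → Bool,
      (∀ i, a i ≠ b i → G a i = G b i) → a = b ∨ b = fun i => !a i := by
    intro a b hab
    by_cases heq : a = b
    · exact Or.inl heq
    by_cases hba : b = fun i => !a i
    · exact Or.inr hba
    exfalso
    set T : Finset V := Finset.univ.filter (fun v => e a v ≠ e b v) with hT
    have hTI : T ⊆ I := by
      intro v hv
      rw [hT, Finset.mem_filter] at hv
      by_contra hvI
      apply hv.2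
      show (if hv' : v ∈ I then a ⟨v, hv'⟩ else w v) = (if hv' : v ∈ I then b ⟨v, hv'⟩ else w v)
      rw [dif_neg hvI, dif_neg hvI]
    have hTne : T.Nonempty := by
      obtain ⟨i, hi⟩ := Function.ne_iff.mp heq
      refine ⟨i.1, ?_⟩
      rw [hT, Finset.mem_filter]
      refine ⟨Finset.mem_univ _, ?_⟩
      rw [heap a i, heap b i]
      exact hi
    have hTss : T ⊂ I := by
      rw [Finset.ssubset_iff_of_subset hTI]
      have hex : ∃ i : {i // i ∈ I}, b i ≠ !a i := by
        by_contra hcon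
        push_neg at hcon
        exact hba (funext hcon)
      obtain ⟨i, hi⟩ := hex
      have hbi : b i = a i := by
        cases h1 : a i <;> cases h2 : b i <;> simp_all
      refine ⟨i.1, i.2, ?_⟩
      rw [hT, Finset.mem_filter]
      rintro ⟨-, hcon⟩
      rw [heap a i, heap b i, hbi] at hcon
      exact hcon rfl
    have hflip : (fun u => if u ∈ T then !(e a u) else e a u) = e b := by
      funext u
      by_cases hu : u ∈ T
      · rw [if_pos hu]
        rw [hT, Finset.mem_filter] at hu
        cases h1 : e a u <;> cases h2 : e b u <;> simp_all
      · rw [if_neg hu]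
        simp only [hT, Finset.mem_filter, Finset.mem_univ, true_and, not_not] at hu
        exact hu
    have hTS : T ∈ S := by
      rw [hS, Finset.mem_filter]
      refine ⟨Finset.mem_univ _, hTne, e a, ?_⟩
      intro v hv
      rw [hflip]
      have hvI := hTI hv
      have hvab : a ⟨v, hvI⟩ ≠ b ⟨v, hvI⟩ := by
        rw [hT, Finset.mem_filter] at hv
        have h2 := hv.2
        rwa [heap a ⟨v, hvI⟩, heap b ⟨v, hvI⟩] at h2
      have hGab := hab ⟨v, hvI⟩ hvab
      rw [hGF a ⟨v, hvI⟩, hGF b ⟨v, hvI⟩] at hGab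
      exact hGab.symm
    have hle := hImin T hTS
    have hlt := Finset.card_lt_card hTss
    omega
  set a₀ : {i // i ∈ I} → Bool := fun i => w i.1 with ha₀
  have hea₀ : e a₀ = w := by
    funext v
    by_cases hv : v ∈ I
    · show (if hv' : v ∈ I then w v else w v) = w v
      rw [dif_pos hv]
    · show (if hv' : v ∈ I then w v else w v) = w v
      rw [dif_neg hv]
  have hen : e (fun i => !a₀ i) = fun v => if v ∈ I then !w v else w v := by
    funext v
    by_cases hv : v ∈ I
    · show (if hv' : v ∈ I then !w v else w v) = _
      rw [dif_pos hv, if_pos hv]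
    · show (if hv' : v ∈ I then !w v else w v) = _
      rw [dif_neg hv, if_neg hv]
  have H2 : G (fun i => !a₀ i) = G a₀ := by
    funext i
    rw [hGF, hGF, hea₀, hen]
    exact hw i.1 i.2
  obtain ⟨hsd, hrange⟩ := key_lemma G H1 a₀ H2
  have hSD : SelfDual h := by
    intro a
    funext i
    have h1 := congrFun (hsd a) i
    change xor (h (fun i => !(a i)) i) (!(a i)) = xor (h a i) (a i) at h1
    show h (fun i => !(a i)) i = !(h a i)
    have haux : ∀ p q r : Bool, xor p (!r) = xor q r → p = !q := by decide
    exact haux _ _ _ h1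
  rw [hG] at hrange
  exact hyp I z h hsub ⟨hSD, hrange⟩
end

section
/- If a Boolean network f has no even-self-dual or odd-self-dual subnetwork, then f has a unique fixed point x, and for every y ∈ {0,1}^V the asynchronous state graph of f contains a path from y to x of length exactly the Hamming distance d(x,y). -/
namespace Stmt12Aux

abbrev Net (V : Type*) := (V → Bool) → (V → Bool)

def NoBad {V : Type*} [Fintype V] [DecidableEq V] (f : Net V) : Prop :=
  ∀ (I : Finset V) (z : {i // i ∉ I} → Bool)
      (h : ({i // i ∈ I} → Bool) → ({i // i ∈ I} → Bool)),
      IsSubnetwork f I z h → ¬ (SelfDual h ∧ (IsEvenNet h ∨ IsOddNet h))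

def subnetOf {V : Type*} [DecidableEq V] (f : Net V) (D : Finset V) (z : {i // i ∉ D} → Bool) :
    Net {i // i ∈ D} :=
  fun u => fun j => f (fun v => if hv : v ∈ D then u ⟨v, hv⟩ else z ⟨v, hv⟩) j.1

/-- Reindexing a network along an equivalence of index types. -/
def reindexNet {W W' : Type*} (e : W ≃ W') (g : (W → Bool) → (W → Bool)) :
    (W' → Bool) → (W' → Bool) :=
  fun y => (g (y ∘ e)) ∘ e.symm

lemma evenPt_comp_equiv {W W' : Type*} [Fintype W] [Fintype W'] (e : W ≃ W') (c : W' → Bool) :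
    EvenPt (c ∘ e) ↔ EvenPt c := by
  unfold EvenPt
  have : (Finset.univ.filter fun i => (c ∘ e) i = true).card
      = (Finset.univ.filter fun i' => c i' = true).card := by
    apply Finset.card_bij (fun i _ => e i)
    · intro a ha
      simp only [Finset.mem_filter, Finset.mem_univ, true_and] at ha ⊢
      exact ha
    · intro a₁ _ a₂ _ hh
      exact e.injective hh
    · intro b hb
      refine ⟨e.symm b, ?_, by simp⟩
      simp only [Finset.mem_filter, Finset.mem_univ, true_and, Function.comp] at hb ⊢
      simpa using hb
  rw [this]

lemma conj_reindex {W W' : Type*} (e : W ≃ W') (g : (W → Bool) → (W → Bool)) (y : W' → Bool) :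
    conjNet (reindexNet e g) y = (conjNet g (y ∘ e)) ∘ e.symm := by
  funext i'
  simp only [conjNet, reindexNet, Function.comp]
  congr 1
  simp

lemma selfDual_reindex {W W' : Type*} (e : W ≃ W') {g : (W → Bool) → (W → Bool)}
    (hg : SelfDual g) : SelfDual (reindexNet e g) := by
  intro y
  funext i'
  simp only [reindexNet, Function.comp]
  have : (fun i => !(y (e i))) = (fun i => !((y ∘ e) i)) := rfl
  calc g (fun i => !(y (e i))) (e.symm i')
      = (fun i => !(g (y ∘ e) i)) (e.symm i') := by rw [show (fun i => !(y (e i))) = (fun i => !((y ∘ e) i)) from rfl, hg (y ∘ e)]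
    _ = !(g (y ∘ e) (e.symm i')) := rfl

lemma range_conj_reindex {W W' : Type*} (e : W ≃ W') (g : (W → Bool) → (W → Bool)) (w' : W' → Bool) :
    w' ∈ Set.range (conjNet (reindexNet e g)) ↔ (w' ∘ e) ∈ Set.range (conjNet g) := by
  constructor
  · rintro ⟨y, hy⟩
    refine ⟨y ∘ e, ?_⟩
    rw [conj_reindex] at hy
    funext i
    have := congrFun hy (e i)
    simpa using this
  · rintro ⟨u, hu⟩
    refine ⟨u ∘ e.symm, ?_⟩
    rw [conj_reindex]
    have h1 : (u ∘ e.symm) ∘ e = u := by funext i; simp [Function.comp]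
    rw [h1, hu]
    funext i'
    simp [Function.comp]

lemma isEvenNet_reindex {W W' : Type*} [Fintype W] [Fintype W'] (e : W ≃ W')
    {g : (W → Bool) → (W → Bool)} (hg : IsEvenNet g) : IsEvenNet (reindexNet e g) := by
  unfold IsEvenNet at *
  ext w'
  show w' ∈ Set.range (conjNet (reindexNet e g)) ↔ _
  rw [range_conj_reindex e g w', hg]
  show EvenPt (w' ∘ e) ↔ EvenPt w'
  exact evenPt_comp_equiv e w'

lemma isOddNet_reindex {W W' : Type*} [Fintype W] [Fintype W'] (e : W ≃ W')
    {g : (W → Bool) → (W → Bool)} (hg : IsOddNet g) : IsOddNet (reindexNet e g) := by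
  unfold IsOddNet at *
  ext w'
  show w' ∈ Set.range (conjNet (reindexNet e g)) ↔ _
  rw [range_conj_reindex e g w', hg]
  show ¬ EvenPt (w' ∘ e) ↔ ¬ EvenPt w'
  exact not_congr (evenPt_comp_equiv e w')


lemma even_hammingDist_iff {V : Type*} [Fintype V] [DecidableEq V] (a b : V → Bool) :
    Even (hammingDist a b) ↔ (EvenPt a ↔ EvenPt b) := by
  classical
  unfold EvenPt
  set A := Finset.univ.filter (fun i => a i = true) with hA
  set B := Finset.univ.filter (fun i => b i = true) with hB
  have hd : hammingDist a b = ((A \ B) ∪ (B \ A)).card := by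
    show (Finset.univ.filter fun i => a i ≠ b i).card = _
    congr 1
    ext i
    simp only [Finset.mem_filter, Finset.mem_univ, true_and, Finset.mem_union,
      Finset.mem_sdiff, hA, hB]
    cases ha : a i <;> cases hb : b i <;> simp
  have hdisj : Disjoint (A \ B) (B \ A) := by
    rw [Finset.disjoint_left]
    intro x hx hx'
    rw [Finset.mem_sdiff] at hx hx'
    exact hx.2 hx'.1
  have h1 : (A \ B).card + (A ∩ B).card = A.card := Finset.card_sdiff_add_card_inter A B
  have h2 : (B \ A).card + (B ∩ A).card = B.card := Finset.card_sdiff_add_card_inter B A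
  have h3 : (A ∩ B).card = (B ∩ A).card := by rw [Finset.inter_comm]
  rw [hd, Finset.card_union_of_disjoint hdisj]
  rw [Nat.even_iff, Nat.even_iff, Nat.even_iff]
  omega

lemma noBad_subnetwork {V : Type*} [Fintype V] [DecidableEq V] {f : Net V} {D : Finset V}
    {z : {i // i ∉ D} → Bool} {h : Net {i // i ∈ D}} (hf : NoBad f)
    (hs : IsSubnetwork f D z h) : NoBad h := by
  classical
  intro I' z' h' hs'
  rintro ⟨hsd, hpar⟩
  let emb : {i // i ∈ D} ↪ V := Function.Embedding.subtype _
  let I'' : Finset V := I'.map emb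
  let z'' : {v // v ∉ I''} → Bool := fun vh =>
    if hD : vh.1 ∈ D then
      z' ⟨⟨vh.1, hD⟩, fun hmem => vh.2 (Finset.mem_map_of_mem emb hmem)⟩
    else z ⟨vh.1, hD⟩
  let h'' : Net {v // v ∈ I''} := subnetOf f I'' z''
  have hs'' : IsSubnetwork f I'' z'' h'' :=
    ⟨Finset.map_nonempty.mpr hs'.1, fun _ => rfl⟩
  -- the equivalence between index types
  let φ : {j // j ∈ I'} → {v // v ∈ I''} :=
    fun j => ⟨(j.1 : V), Finset.mem_map_of_mem emb j.2⟩
  have hφbij : Function.Bijective φ := by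
    constructor
    · intro j₁ j₂ hj
      have h2 := Subtype.ext_iff.mp hj
      exact Subtype.ext (Subtype.ext h2)
    · intro v
      obtain ⟨a, ha, hav⟩ := Finset.mem_map.mp v.2
      exact ⟨⟨a, ha⟩, Subtype.ext hav⟩
  let e : {j // j ∈ I'} ≃ {v // v ∈ I''} := Equiv.ofBijective φ hφbij
  have hval : ∀ v : {v // v ∈ I''}, ((e.symm v).1.1 : V) = v.1 := by
    intro v
    have h1 : φ (e.symm v) = v := e.apply_symm_apply v
    exact Subtype.ext_iff.mp h1
  have heq : h'' = reindexNet e h' := by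
    funext y
    funext j
    show f _ j.1 = h' (y ∘ e) (e.symm j)
    rw [hs'.2 (y ∘ e)]
    show f _ j.1 = h _ ((e.symm j).1)
    rw [hs.2]
    show f _ j.1 = f _ ((e.symm j).1.1)
    rw [hval j]
    congr 1
    funext v
    by_cases hD : v ∈ D
    · by_cases hI' : (⟨v, hD⟩ : {i // i ∈ D}) ∈ I'
      · have hvI'' : v ∈ I'' := Finset.mem_map_of_mem emb hI'
        rw [dif_pos hvI'', dif_pos hD, dif_pos hI']
        show y ⟨v, hvI''⟩ = y (e ⟨⟨v, hD⟩, hI'⟩)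
        congr 1
      · have hvI'' : v ∉ I'' := by
          intro hmem
          obtain ⟨a, ha, hav⟩ := Finset.mem_map.mp hmem
          apply hI'
          have hav' : a = ⟨v, hD⟩ := Subtype.ext hav
          rwa [hav'] at ha
        rw [dif_neg hvI'', dif_pos hD, dif_neg hI']
        show z'' ⟨v, hvI''⟩ = _
        show dite _ _ _ = _
        rw [dif_pos hD]
    · have hvI'' : v ∉ I'' := fun hmem => hD (by
        obtain ⟨a, _, hav⟩ := Finset.mem_map.mp hmem
        rw [← show (a : V) = v from hav]; exact a.2)
      rw [dif_neg hvI'', dif_neg hD]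
      show z'' ⟨v, hvI''⟩ = _
      show dite _ _ _ = _
      rw [dif_neg hD]
  apply hf I'' z'' h'' hs''
  refine ⟨?_, ?_⟩
  · rw [heq]; exact selfDual_reindex e hsd
  · rw [heq]
    exact hpar.imp (isEvenNet_reindex e) (isOddNet_reindex e)


universe u

theorem conj_bijective_aux (n : ℕ) :
    ∀ {V : Type u} [Fintype V] [DecidableEq V] (f : Net V),
      Fintype.card V = n → NoBad f → Function.Bijective (conjNet f) := by
  induction n using Nat.strong_induction_on with
  | _ n IH =>
  intro V _fin _dec f hcard hf
  rw [← Finite.injective_iff_bijective]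
  by_contra hninj
  rw [Function.not_injective_iff] at hninj
  obtain ⟨x₀, y₀, heq₀, hne₀⟩ := hninj
  -- Claim 1
  have claim1 : ∀ x y : V → Bool, x ≠ y → y ≠ (fun i => !(x i)) →
      ∃ j, x j ≠ y j ∧ conjNet f x j ≠ conjNet f y j := by
    intro x y hxy hxcy
    set D : Finset V := Finset.univ.filter (fun i => x i ≠ y i) with hDdef
    have hDne : D.Nonempty := by
      obtain ⟨i, hi⟩ := Function.ne_iff.mp hxy
      exact ⟨i, Finset.mem_filter.mpr ⟨Finset.mem_univ i, hi⟩⟩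
    have hDnu : D ≠ Finset.univ := by
      intro hDu
      apply hxcy
      funext i
      have hiD : i ∈ D := hDu ▸ Finset.mem_univ i
      simp only [hDdef, Finset.mem_filter, Finset.mem_univ, true_and] at hiD
      exact Bool.eq_not_iff.mpr (Ne.symm hiD)
    let z : {i // i ∉ D} → Bool := fun vh => x vh.1
    let h := subnetOf f D z
    have hsub : IsSubnetwork f D z h := ⟨hDne, fun _ => rfl⟩
    have hNB : NoBad h := noBad_subnetwork hf hsub
    have hcard' : Fintype.card {i // i ∈ D} < n := by
      rw [Fintype.card_coe, ← hcard]
      exact (Finset.card_lt_iff_ne_univ D).mpr hDnu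
    have hbij := IH _ hcard' h rfl hNB
    have hgx : (fun v => if hv : v ∈ D then x v else z ⟨v, hv⟩) = x := by
      funext v
      by_cases hv : v ∈ D
      · rw [dif_pos hv]
      · rw [dif_neg hv]
    have hgy : (fun v => if hv : v ∈ D then y v else z ⟨v, hv⟩) = y := by
      funext v
      by_cases hv : v ∈ D
      · rw [dif_pos hv]
      · rw [dif_neg hv]
        show x v = y v
        simp only [hDdef, Finset.mem_filter, Finset.mem_univ, true_and, not_not] at hv
        exact hv
    have hx : conjNet h (fun jD : {i // i ∈ D} => x jD.1)
        = fun jD : {i // i ∈ D} => conjNet f x jD.1 := by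
      have h1 : h (fun jD : {i // i ∈ D} => x jD.1) = fun jD : {i // i ∈ D} => f x jD.1 := by
        show (fun jD : {i // i ∈ D} =>
          f (fun v => if hv : v ∈ D then x v else z ⟨v, hv⟩) jD.1) = _
        rw [hgx]
      funext jD
      show xor (h (fun jD : {i // i ∈ D} => x jD.1) jD) (x jD.1) = xor (f x jD.1) (x jD.1)
      rw [h1]
    have hy : conjNet h (fun jD : {i // i ∈ D} => y jD.1)
        = fun jD : {i // i ∈ D} => conjNet f y jD.1 := by
      have h1 : h (fun jD : {i // i ∈ D} => y jD.1) = fun jD : {i // i ∈ D} => f y jD.1 := by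
        show (fun jD : {i // i ∈ D} =>
          f (fun v => if hv : v ∈ D then y v else z ⟨v, hv⟩) jD.1) = _
        rw [hgy]
      funext jD
      show xor (h (fun jD : {i // i ∈ D} => y jD.1) jD) (y jD.1) = xor (f y jD.1) (y jD.1)
      rw [h1]
    have hresne : (fun jD : {i // i ∈ D} => x jD.1) ≠ (fun jD : {i // i ∈ D} => y jD.1) := by
      obtain ⟨i, hiD⟩ := hDne
      have hxyi : x i ≠ y i := by
        have := hiD
        simp only [hDdef, Finset.mem_filter, Finset.mem_univ, true_and] at this
        exact this
      intro hcc
      exact hxyi (congrFun hcc ⟨i, hiD⟩)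
    have hcne : conjNet h (fun jD : {i // i ∈ D} => x jD.1)
        ≠ conjNet h (fun jD : {i // i ∈ D} => y jD.1) :=
      fun hcc => hresne (hbij.injective hcc)
    rw [hx, hy] at hcne
    obtain ⟨jD, hjD⟩ := Function.ne_iff.mp hcne
    refine ⟨jD.1, ?_, hjD⟩
    have := jD.2
    simp only [hDdef, Finset.mem_filter, Finset.mem_univ, true_and] at this
    exact this
  -- pair lemma
  have pair : ∀ x y : V → Bool, conjNet f x = conjNet f y → y = x ∨ y = fun i => !(x i) := by
    intro x y hcc
    by_cases h1 : y = x
    · exact Or.inl h1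
    by_cases h2 : y = fun i => !(x i)
    · exact Or.inr h2
    obtain ⟨j, _, hj⟩ := claim1 x y (Ne.symm h1) h2
    exact absurd (congrFun hcc j) hj
  have ycx : y₀ = fun i => !(x₀ i) := by
    rcases pair x₀ y₀ heq₀ with h1 | h2
    · exact absurd h1.symm hne₀
    · exact h2
  -- fiber counting
  classical
  set ν : (V → Bool) → ℕ :=
    fun w => (Finset.univ.filter (fun x => conjNet f x = w)).card with hνdef
  have fiber_sub : ∀ x : V → Bool,
      (Finset.univ.filter (fun y => conjNet f y = conjNet f x)) ⊆ {x, fun i => !(x i)} := by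
    intro x y hy
    simp only [Finset.mem_filter, Finset.mem_univ, true_and] at hy
    rcases pair x y hy.symm with h1 | h2
    · simp [h1]
    · simp [h2]
  have hν_le : ∀ w, ν w ≤ 2 := by
    intro w
    rcases Finset.eq_empty_or_nonempty (Finset.univ.filter (fun x => conjNet f x = w)) with he | ⟨x, hx⟩
    · simp [hνdef, he]
    · have hcw : conjNet f x = w := by
        simp only [Finset.mem_filter, Finset.mem_univ, true_and] at hx
        exact hx
      have hsub2 : (Finset.univ.filter (fun y => conjNet f y = w)) ⊆ {x, fun i => !(x i)} := by
        rw [← hcw]; exact fiber_sub x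
      calc ν w ≤ ({x, fun i => !(x i)} : Finset (V → Bool)).card := Finset.card_le_card hsub2
        _ ≤ 2 := Finset.card_insert_le _ _ |>.trans (by simp)
  have hν_pos : ∀ x : V → Bool, 0 < ν (conjNet f x) := by
    intro x
    apply Finset.card_pos.mpr
    exact ⟨x, by simp⟩
  have hν2 : ν (conjNet f x₀) = 2 := by
    have hsub2 : ({x₀, y₀} : Finset (V → Bool)) ⊆ Finset.univ.filter (fun y => conjNet f y = conjNet f x₀) := by
      intro t ht
      simp only [Finset.mem_insert, Finset.mem_singleton] at ht
      rcases ht with rfl | rfl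
      · simp
      · simp [heq₀.symm]
    have hcard2 : ({x₀, y₀} : Finset (V → Bool)).card = 2 := by
      rw [Finset.card_insert_of_notMem (by simp [hne₀]), Finset.card_singleton]
    have := Finset.card_le_card hsub2
    rw [hcard2] at this
    exact le_antisymm (hν_le _) this

  -- Claim 2: fiber counts of adjacent values sum to 2
  have claim2 : ∀ (w : V → Bool) (j : V), ν w + ν (Function.update w j (!(w j))) = 2 := by
    intro w j
    have Hface : ∀ b : Bool, ∃! x : V → Bool, x j = b ∧ ∀ i, i ≠ j → conjNet f x i = w i := by
      intro b
      by_cases hDne : ((Finset.univ : Finset V).erase j).Nonempty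
      · set D : Finset V := Finset.univ.erase j with hDdef
        let z : {i // i ∉ D} → Bool := fun _ => b
        let h := subnetOf f D z
        have hsub : IsSubnetwork f D z h := ⟨hDne, fun _ => rfl⟩
        have hNB : NoBad h := noBad_subnetwork hf hsub
        have hDnu : D ≠ Finset.univ := by
          intro hDu
          have hjmem : j ∈ D := hDu ▸ Finset.mem_univ j
          simp [hDdef] at hjmem
        have hcard' : Fintype.card {i // i ∈ D} < n := by
          rw [Fintype.card_coe, ← hcard]
          exact (Finset.card_lt_iff_ne_univ D).mpr hDnu
        have hbij := IH _ hcard' h rfl hNB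
        have hmemD : ∀ i : V, i ≠ j → i ∈ D := fun i hij =>
          Finset.mem_erase.mpr ⟨hij, Finset.mem_univ i⟩
        have hjD : j ∉ D := fun hj => (Finset.mem_erase.mp hj).1 rfl
        have hglue : ∀ x : V → Bool, x j = b →
            (fun v => if hv : v ∈ D then x v else z ⟨v, hv⟩) = x := by
          intro x hxj
          funext v
          by_cases hv : v ∈ D
          · rw [dif_pos hv]
          · rw [dif_neg hv]
            have hvj : v = j := by
              by_contra hvj
              exact hv (hmemD v hvj)
            show b = x v
            rw [hvj, hxj]
        have hconj : ∀ x : V → Bool, x j = b →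
            conjNet h (fun jD : {i // i ∈ D} => x jD.1)
              = fun jD : {i // i ∈ D} => conjNet f x jD.1 := by
          intro x hxj
          have h1 : h (fun jD : {i // i ∈ D} => x jD.1)
              = fun jD : {i // i ∈ D} => f x jD.1 := by
            show (fun jD : {i // i ∈ D} =>
              f (fun v => if hv : v ∈ D then x v else z ⟨v, hv⟩) jD.1) = _
            rw [hglue x hxj]
          funext jD
          show xor (h (fun jD : {i // i ∈ D} => x jD.1) jD) (x jD.1) = xor (f x jD.1) (x jD.1)
          rw [h1]
        obtain ⟨u, hu⟩ := hbij.surjective (fun jD : {i // i ∈ D} => w jD.1)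
        refine ⟨fun v => if hv : v ∈ D then u ⟨v, hv⟩ else b, ⟨?_, ?_⟩, ?_⟩
        · show (if hv : j ∈ D then u ⟨j, hv⟩ else b) = b
          rw [dif_neg hjD]
        · intro i hij
          set xw : V → Bool := fun v => if hv : v ∈ D then u ⟨v, hv⟩ else b with hxwdef
          have hxwj : xw j = b := by
            show (if hv : j ∈ D then u ⟨j, hv⟩ else b) = b
            rw [dif_neg hjD]
          have hxwres : (fun jD : {i // i ∈ D} => xw jD.1) = u := by
            funext jD
            show (if hv : jD.1 ∈ D then u ⟨jD.1, hv⟩ else b) = u jD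
            rw [dif_pos jD.2]
          have h2 := hconj xw hxwj
          rw [hxwres, hu] at h2
          exact (congrFun h2 ⟨i, hmemD i hij⟩).symm
        · rintro x ⟨hxj, hxw⟩
          set xw : V → Bool := fun v => if hv : v ∈ D then u ⟨v, hv⟩ else b with hxwdef
          have hxwj : xw j = b := by
            show (if hv : j ∈ D then u ⟨j, hv⟩ else b) = b
            rw [dif_neg hjD]
          have h2 := hconj x hxj
          have h3 : conjNet h (fun jD : {i // i ∈ D} => x jD.1)
              = fun jD : {i // i ∈ D} => w jD.1 := by
            rw [h2]
            funext jD
            exact hxw jD.1 (Finset.mem_erase.mp jD.2).1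
          have h5 : (fun jD : {i // i ∈ D} => x jD.1) = u := hbij.injective (h3.trans hu.symm)
          funext v
          by_cases hv : v ∈ D
          · show x v = xw v
            have hxv := congrFun h5 ⟨v, hv⟩
            have hxwv : xw v = u ⟨v, hv⟩ := dif_pos hv
            rw [hxwv, ← hxv]
          · have hvj : v = j := by
              by_contra hvj
              exact hv (hmemD v hvj)
            show x v = xw v
            rw [hvj, hxj, hxwj]
      · have hall : ∀ i : V, i = j := by
          intro i
          by_contra hij
          exact hDne ⟨i, Finset.mem_erase.mpr ⟨hij, Finset.mem_univ i⟩⟩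
        refine ⟨fun _ => b, ⟨rfl, fun i hij => absurd (hall i) hij⟩, ?_⟩
        rintro x ⟨hxj, _⟩
        funext i
        rw [hall i, hxj]
    obtain ⟨xf, hxfP, hxfU⟩ := Hface false
    obtain ⟨xt, hxtP, hxtU⟩ := Hface true
    set w' : V → Bool := Function.update w j (!(w j)) with hw'def
    have hw'j : w' j = !(w j) := Function.update_self j _ w
    have hw'i : ∀ i, i ≠ j → w' i = w i := fun i hij => Function.update_of_ne hij _ w
    have hunion : (Finset.univ.filter (fun x => conjNet f x = w))
        ∪ (Finset.univ.filter (fun x => conjNet f x = w')) = {xf, xt} := by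
      ext x
      simp only [Finset.mem_union, Finset.mem_filter, Finset.mem_univ, true_and,
        Finset.mem_insert, Finset.mem_singleton]
      constructor
      · intro hx
        have hoff : ∀ i, i ≠ j → conjNet f x i = w i := by
          intro i hij
          rcases hx with h1 | h1
          · rw [h1]
          · rw [h1]
            exact hw'i i hij
        cases hxj : x j
        · exact Or.inl (hxfU x ⟨hxj, hoff⟩)
        · exact Or.inr (hxtU x ⟨hxj, hoff⟩)
      · intro hx
        have key : ∀ y : V → Bool, (∀ i, i ≠ j → conjNet f y i = w i) →
            (conjNet f y = w ∨ conjNet f y = w') := by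
          intro y hoff
          by_cases hcj : conjNet f y j = w j
          · left
            funext i
            by_cases hij : i = j
            · rw [hij]; exact hcj
            · exact hoff i hij
          · right
            funext i
            by_cases hij : i = j
            · rw [hij, hw'j]
              exact Bool.eq_not_iff.mpr hcj
            · rw [hw'i i hij]
              exact hoff i hij
        rcases hx with rfl | rfl
        · exact key x hxfP.2
        · exact key x hxtP.2
    have hdisj : Disjoint (Finset.univ.filter (fun x => conjNet f x = w))
        (Finset.univ.filter (fun x => conjNet f x = w')) := by
      rw [Finset.disjoint_left]
      intro a ha ha'
      simp only [Finset.mem_filter, Finset.mem_univ, true_and] at ha ha'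
      have hww' : w = w' := by rw [← ha, ha']
      have hcontra := congrFun hww' j
      rw [hw'j] at hcontra
      exact absurd hcontra (by cases w j <;> simp)
    have hxfxt : xf ≠ xt := by
      intro hcontra
      have h1 : xf j = false := hxfP.1
      have h2 : xf j = true := by rw [hcontra]; exact hxtP.1
      rw [h1] at h2
      exact Bool.false_ne_true h2
    have hcard2 : ({xf, xt} : Finset (V → Bool)).card = 2 := by
      rw [Finset.card_insert_of_notMem (by simp [hxfxt]), Finset.card_singleton]
    have h6 : ({xf, xt} : Finset (V → Bool)).card = ν w + ν w' := by
      rw [← hunion]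
      exact Finset.card_union_of_disjoint hdisj
    rw [hcard2] at h6
    exact h6.symm
  -- alternation of fiber sizes
  have halt : ∀ (d : ℕ) (w : V → Bool), hammingDist (conjNet f x₀) w = d →
      ν w = if Even d then 2 else 0 := by
    intro d
    induction d using Nat.strong_induction_on with
    | _ d IHd =>
    intro w hdist
    rcases Nat.eq_zero_or_pos d with h0 | hpos
    · subst h0
      have hw : conjNet f x₀ = w := hammingDist_eq_zero.mp hdist
      rw [← hw, if_pos Even.zero]
      exact hν2
    · have hnef : (Finset.univ.filter fun i => conjNet f x₀ i ≠ w i).Nonempty := by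
        apply Finset.card_pos.mp
        have hrfl : hammingDist (conjNet f x₀) w
            = (Finset.univ.filter fun i => conjNet f x₀ i ≠ w i).card := rfl
        omega
      obtain ⟨j, hj⟩ := hnef
      have hjne : conjNet f x₀ j ≠ w j := (Finset.mem_filter.mp hj).2
      set w1 : V → Bool := Function.update w j (conjNet f x₀ j) with hw1def
      have hw1j : w1 j = conjNet f x₀ j := Function.update_self j _ w
      have hw1i : ∀ i, i ≠ j → w1 i = w i := fun i hij => Function.update_of_ne hij _ w
      have hfilter : (Finset.univ.filter fun i => conjNet f x₀ i ≠ w1 i)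
          = (Finset.univ.filter fun i => conjNet f x₀ i ≠ w i).erase j := by
        ext i
        simp only [Finset.mem_filter, Finset.mem_univ, true_and, Finset.mem_erase]
        by_cases hij : i = j
        · subst hij
          rw [hw1j]
          simp
        · rw [hw1i i hij]
          simp [hij]
      have hd1 : hammingDist (conjNet f x₀) w1 = d - 1 := by
        show (Finset.univ.filter fun i => conjNet f x₀ i ≠ w1 i).card = d - 1
        rw [hfilter, Finset.card_erase_of_mem hj]
        have hdd : (Finset.univ.filter fun i => conjNet f x₀ i ≠ w i).card = d := hdist
        omega
      have hupd : Function.update w1 j (!(w1 j)) = w := by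
        funext i
        by_cases hij : i = j
        · subst hij
          rw [Function.update_self, hw1j]
          exact (Bool.eq_not_iff.mpr (Ne.symm hjne)).symm
        · rw [Function.update_of_ne hij, hw1i i hij]
      have hsum := claim2 w1 j
      rw [hupd] at hsum
      obtain ⟨k, rfl⟩ : ∃ k, d = k + 1 := ⟨d - 1, by omega⟩
      have hd1' : hammingDist (conjNet f x₀) w1 = k := by omega
      have hIH := IHd k (by omega) w1 hd1'
      by_cases hEk : Even k
      · rw [if_pos hEk] at hIH
        rw [if_neg (by simp [Nat.even_add_one, hEk])]
        omega
      · rw [if_neg hEk] at hIH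
        rw [if_pos (by simp [Nat.even_add_one, hEk])]
        omega
  -- every antipodal pair is a fiber: self-duality
  have hfiber_eq : ∀ x : V → Bool, conjNet f (fun i => !(x i)) = conjNet f x := by
    intro x
    have h2 : Even (hammingDist (conjNet f x₀) (conjNet f x)) := by
      by_contra hodd
      have hz := halt _ (conjNet f x) rfl
      rw [if_neg hodd] at hz
      have := hν_pos x
      omega
    have h3 : ν (conjNet f x) = 2 := by
      have hz := halt _ (conjNet f x) rfl
      rwa [if_pos h2] at hz
    have hcard_pair : ({x, fun i => !(x i)} : Finset (V → Bool)).card ≤ 2 :=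
      (Finset.card_insert_le _ _).trans (by simp)
    have heqf : (Finset.univ.filter (fun y => conjNet f y = conjNet f x))
        = {x, fun i => !(x i)} := by
      apply Finset.eq_of_subset_of_card_le (fiber_sub x)
      calc ({x, fun i => !(x i)} : Finset (V → Bool)).card ≤ 2 := hcard_pair
        _ = ν (conjNet f x) := h3.symm
        _ = _ := rfl
    have hmem : (fun i => !(x i)) ∈ Finset.univ.filter (fun y => conjNet f y = conjNet f x) := by
      rw [heqf]
      simp
    exact (Finset.mem_filter.mp hmem).2
  have hself : SelfDual f := by
    intro x
    funext i
    have h1 : xor (f (fun i => !(x i)) i) (!(x i)) = xor (f x i) (x i) :=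
      congrFun (hfiber_eq x) i
    show f (fun i => !(x i)) i = !(f x i)
    revert h1
    cases hxi : x i <;> cases hfxi : f x i <;>
      cases ha : f (fun i => !(x i)) i <;> decide
  -- range is a parity class
  have hrange : Set.range (conjNet f) = {w | Even (hammingDist (conjNet f x₀) w)} := by
    ext w
    constructor
    · rintro ⟨x, rfl⟩
      show Even (hammingDist (conjNet f x₀) (conjNet f x))
      by_contra hodd
      have hz := halt _ (conjNet f x) rfl
      rw [if_neg hodd] at hz
      have := hν_pos x
      omega
    · intro hw
      show ∃ x, conjNet f x = w
      have hw' : Even (hammingDist (conjNet f x₀) w) := hw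
      have hz := halt _ w rfl
      rw [if_pos hw'] at hz
      have hpos : 0 < ν w := by omega
      obtain ⟨x, hx⟩ := Finset.card_pos.mp hpos
      exact ⟨x, (Finset.mem_filter.mp hx).2⟩
  have hbadpar : IsEvenNet f ∨ IsOddNet f := by
    by_cases hc₀ : EvenPt (conjNet f x₀)
    · left
      show Set.range (conjNet f) = {x | EvenPt x}
      rw [hrange]
      ext w
      simp only [Set.mem_setOf_eq]
      rw [even_hammingDist_iff]
      constructor
      · intro hiff
        exact hiff.mp hc₀
      · intro hw
        exact ⟨fun _ => hw, fun _ => hc₀⟩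
    · right
      show Set.range (conjNet f) = {x | ¬ EvenPt x}
      rw [hrange]
      ext w
      simp only [Set.mem_setOf_eq]
      rw [even_hammingDist_iff]
      constructor
      · intro hiff hw
        exact hc₀ (hiff.mpr hw)
      · intro hw
        exact ⟨fun hcc => absurd hcc hc₀, fun hcc => absurd hcc hw⟩
  -- contradiction with the full subnetwork
  obtain ⟨i0, _⟩ := Function.ne_iff.mp hne₀
  have huniv : (Finset.univ : Finset V).Nonempty := ⟨i0, Finset.mem_univ i0⟩
  let zu : {i // i ∉ (Finset.univ : Finset V)} → Bool := fun _ => false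
  let hu := subnetOf f Finset.univ zu
  have hsubu : IsSubnetwork f Finset.univ zu hu := ⟨huniv, fun _ => rfl⟩
  let e : V ≃ {i // i ∈ (Finset.univ : Finset V)} :=
    (Equiv.subtypeUnivEquiv (fun i => Finset.mem_univ i)).symm
  have hequ : hu = reindexNet e f := by
    funext uu jj
    show f (fun v => if hv : v ∈ Finset.univ then uu ⟨v, hv⟩ else zu ⟨v, hv⟩) jj.1
      = f (uu ∘ e) (e.symm jj)
    have h1 : (fun v => if hv : v ∈ Finset.univ then uu ⟨v, hv⟩ else zu ⟨v, hv⟩) = uu ∘ e := by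
      funext v
      rw [dif_pos (Finset.mem_univ v)]
      rfl
    rw [h1]
    have h2 : e.symm jj = jj.1 := by
      show (Equiv.subtypeUnivEquiv (fun i => Finset.mem_univ i)).symm.symm jj = jj.1
      rw [Equiv.symm_symm]
      rfl
    rw [h2]
  apply hf Finset.univ zu hu hsubu
  constructor
  · rw [hequ]
    exact selfDual_reindex e hself
  · rw [hequ]
    exact hbadpar.imp (isEvenNet_reindex e) (isOddNet_reindex e)


end Stmt12Aux

/-- If `f` has no even- or odd-self-dual subnetwork, then `f` has a unique fixed
point `x`, and from every point `y` the asynchronous state graph contains a path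
to `x` of length exactly the Hamming distance `d(x,y)`. -/
theorem stmt_12 {V : Type*} [Fintype V] [DecidableEq V]
    (f : (V → Bool) → (V → Bool))
    (hyp : ∀ (I : Finset V) (z : {i // i ∉ I} → Bool)
      (h : ({i // i ∈ I} → Bool) → ({i // i ∈ I} → Bool)),
      IsSubnetwork f I z h → ¬ (SelfDual h ∧ (IsEvenNet h ∨ IsOddNet h))) :
    ∃ x : V → Bool, f x = x ∧ (∀ y, f y = y → y = x) ∧
      ∀ y : V → Bool, ∃ c : ℕ → (V → Bool),
        c 0 = y ∧ c (hammingDist x y) = x ∧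
        ∀ t < hammingDist x y, asynArc f (c t) (c (t + 1)) := by
  classical
  have hNB : Stmt12Aux.NoBad f := hyp
  have hbij := Stmt12Aux.conj_bijective_aux (Fintype.card V) f rfl hNB
  obtain ⟨x, hx⟩ := hbij.surjective (fun _ => false)
  have hfix : f x = x := by
    funext i
    have h1 : xor (f x i) (x i) = false := congrFun hx i
    cases h2 : f x i <;> cases h3 : x i <;> rw [h2, h3] at h1 <;> simp_all
  refine ⟨x, hfix, ?_, ?_⟩
  · intro y hy
    apply hbij.injective
    rw [hx]
    funext i
    show xor (f y i) (y i) = false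
    rw [hy]
    cases y i <;> rfl
  · have step : ∀ y : V → Bool, y ≠ x → ∃ i, y i ≠ x i ∧ f y i ≠ y i := by
      intro y hyx
      set D : Finset V := Finset.univ.filter (fun i => x i ≠ y i) with hDdef
      have hDne : D.Nonempty := by
        obtain ⟨i, hi⟩ := Function.ne_iff.mp (Ne.symm hyx)
        exact ⟨i, Finset.mem_filter.mpr ⟨Finset.mem_univ i, hi⟩⟩
      let z : {i // i ∉ D} → Bool := fun vh => y vh.1
      let h := Stmt12Aux.subnetOf f D z
      have hsub : IsSubnetwork f D z h := ⟨hDne, fun _ => rfl⟩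
      have hNBh := Stmt12Aux.noBad_subnetwork hNB hsub
      have hbijh := Stmt12Aux.conj_bijective_aux (Fintype.card {i // i ∈ D}) h rfl hNBh
      by_contra hno
      push_neg at hno
      have hgx : (fun v => if hv : v ∈ D then x v else z ⟨v, hv⟩) = x := by
        funext v
        by_cases hv : v ∈ D
        · rw [dif_pos hv]
        · rw [dif_neg hv]
          show y v = x v
          simp only [hDdef, Finset.mem_filter, Finset.mem_univ, true_and, not_not] at hv
          exact hv.symm
      have hgy : (fun v => if hv : v ∈ D then y v else z ⟨v, hv⟩) = y := by
        funext v
        by_cases hv : v ∈ D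
        · rw [dif_pos hv]
        · rw [dif_neg hv]
      have hcx : conjNet h (fun jD : {i // i ∈ D} => x jD.1) = fun _ => false := by
        have h1 : h (fun jD : {i // i ∈ D} => x jD.1)
            = fun jD : {i // i ∈ D} => f x jD.1 := by
          show (fun jD : {i // i ∈ D} =>
            f (fun v => if hv : v ∈ D then x v else z ⟨v, hv⟩) jD.1) = _
          rw [hgx]
        funext jD
        show xor (h (fun jD : {i // i ∈ D} => x jD.1) jD) (x jD.1) = false
        rw [h1]
        show xor (f x jD.1) (x jD.1) = false
        rw [hfix]
        cases x jD.1 <;> rfl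
      have hcy : conjNet h (fun jD : {i // i ∈ D} => y jD.1) = fun _ => false := by
        have h1 : h (fun jD : {i // i ∈ D} => y jD.1)
            = fun jD : {i // i ∈ D} => f y jD.1 := by
          show (fun jD : {i // i ∈ D} =>
            f (fun v => if hv : v ∈ D then y v else z ⟨v, hv⟩) jD.1) = _
          rw [hgy]
        funext jD
        show xor (h (fun jD : {i // i ∈ D} => y jD.1) jD) (y jD.1) = false
        rw [h1]
        show xor (f y jD.1) (y jD.1) = false
        have hst : f y jD.1 = y jD.1 := by
          have hmem := jD.2
          simp only [hDdef, Finset.mem_filter, Finset.mem_univ, true_and] at hmem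
          exact hno jD.1 (Ne.symm hmem)
        rw [hst]
        cases y jD.1 <;> rfl
      have heq2 : (fun jD : {i // i ∈ D} => x jD.1) = fun jD : {i // i ∈ D} => y jD.1 :=
        hbijh.injective (hcx.trans hcy.symm)
      obtain ⟨i, hiD⟩ := hDne
      have hxyi : x i ≠ y i := by
        have h2 := hiD
        simp only [hDdef, Finset.mem_filter, Finset.mem_univ, true_and] at h2
        exact h2
      exact hxyi (congrFun heq2 ⟨i, hiD⟩)
    have paths : ∀ (d : ℕ) (y : V → Bool), hammingDist x y = d →
        ∃ c : ℕ → (V → Bool), c 0 = y ∧ c d = x ∧ ∀ t < d, asynArc f (c t) (c (t + 1)) := by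
      intro d
      induction d with
      | zero =>
        intro y hdist
        have hxy : x = y := hammingDist_eq_zero.mp hdist
        exact ⟨fun _ => y, rfl, hxy.symm, fun t ht => absurd ht (Nat.not_lt_zero t)⟩
      | succ k IHk =>
        intro y hdist
        have hyx : y ≠ x := by
          intro hcontra
          rw [hcontra, hammingDist_self] at hdist
          exact Nat.succ_ne_zero k hdist.symm
        obtain ⟨i, hyi, hfi⟩ := step y hyx
        set y' : V → Bool := Function.update y i (!(y i)) with hy'def
        have harc : asynArc f y y' := ⟨i, hfi, rfl⟩
        have hdist' : hammingDist x y' = k := by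
          have hfilter : (Finset.univ.filter fun v => x v ≠ y' v)
              = (Finset.univ.filter fun v => x v ≠ y v).erase i := by
            ext v
            simp only [Finset.mem_filter, Finset.mem_univ, true_and, Finset.mem_erase]
            by_cases hvi : v = i
            · subst hvi
              have hxieq : x v = !(y v) := Bool.eq_not_iff.mpr (Ne.symm hyi)
              rw [show y' v = !(y v) from Function.update_self v _ y]
              simp [hxieq]
            · rw [show y' v = y v from Function.update_of_ne hvi _ y]
              simp [hvi]
          show (Finset.univ.filter fun v => x v ≠ y' v).card = k
          rw [hfilter]
          have hmemi : i ∈ Finset.univ.filter (fun v => x v ≠ y v) :=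
            Finset.mem_filter.mpr ⟨Finset.mem_univ i, Ne.symm hyi⟩
          rw [Finset.card_erase_of_mem hmemi]
          have hdd : (Finset.univ.filter fun v => x v ≠ y v).card = k + 1 := hdist
          omega
        obtain ⟨c', hc0, hck, harcs⟩ := IHk y' hdist'
        refine ⟨fun t => if t = 0 then y else c' (t - 1), rfl, ?_, ?_⟩
        · show (if k + 1 = 0 then y else c' (k + 1 - 1)) = x
          rw [if_neg (Nat.succ_ne_zero k)]
          have hk1 : k + 1 - 1 = k := by omega
          rw [hk1]
          exact hck
        · intro t ht
          by_cases ht0 : t = 0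
          · subst ht0
            show asynArc f (if (0:ℕ) = 0 then y else c' (0 - 1))
              (if (0:ℕ) + 1 = 0 then y else c' (0 + 1 - 1))
            rw [if_pos rfl, if_neg (Nat.succ_ne_zero 0)]
            show asynArc f y (c' 0)
            rw [hc0]
            exact harc
          · show asynArc f (if t = 0 then y else c' (t - 1))
              (if t + 1 = 0 then y else c' (t + 1 - 1))
            rw [if_neg ht0, if_neg (Nat.succ_ne_zero t)]
            have ht1 : t - 1 < k := by omega
            have harct := harcs (t - 1) ht1
            have he1 : t - 1 + 1 = t := by omega
            rw [he1] at harct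
            have he2 : t + 1 - 1 = t := by omega
            rw [he2]
            exact harct
    intro y
    exact paths (hammingDist x y) y rfl
end

section
/- A Boolean network f is positive-circular (its global interaction graph is a positive cycle, i.e., a directed cycle with an even number of negative arcs spanning all vertices, each vertex having in- and out-degree one) if and only if f is even-self-dual and non-expansive. -/
/-- `f` is non-expansive for the Hamming distance. -/
def NonExpansive {W : Type*} [Fintype W] [DecidableEq W]
    (f : (W → Bool) → (W → Bool)) : Prop :=
  ∀ x y : W → Bool, hammingDist (f x) (f y) ≤ hammingDist x y

/-- Positive arc `j → i` in the global interaction graph of `f`. -/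
def globalPos {W : Type*} [DecidableEq W] (f : (W → Bool) → (W → Bool)) (j i : W) : Prop :=
  ∃ x, f (Function.update x j true) i = true ∧ f (Function.update x j false) i = false

/-- Negative arc `j → i` in the global interaction graph of `f`. -/
def globalNeg {W : Type*} [DecidableEq W] (f : (W → Bool) → (W → Bool)) (j i : W) : Prop :=
  ∃ x, f (Function.update x j true) i = false ∧ f (Function.update x j false) i = true

/-- The global interaction graph of `f` is a directed cycle spanning all vertices
(each vertex has in- and out-degree one): its arcs are exactly the arcs `σ i → i`,
with sign given by `s i` (`true` meaning negative). The permutation `σ` is required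
to be a single cycle on all of `W`. -/
def IsCircularWith {W : Type*} [Fintype W] [DecidableEq W]
    (f : (W → Bool) → (W → Bool)) (σ : Equiv.Perm W) (s : W → Bool) : Prop :=
  (∀ i j : W, ∃ n : ℕ, (σ ^ n) i = j) ∧
  (∀ i j : W, globalPos f j i ↔ (j = σ i ∧ s i = false)) ∧
  (∀ i j : W, globalNeg f j i ↔ (j = σ i ∧ s i = true))

/-- Number of negative arcs of a circular network with signs `s`. -/
def negCount {W : Type*} [Fintype W] (s : W → Bool) : ℕ :=
  (Finset.univ.filter (fun i => s i = true)).card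

/-! ### Auxiliary development -/

open Finset

namespace Stmt14Aux

variable {V : Type*} [Fintype V] [DecidableEq V]

/-- The explicit circular network: `f(x)_i = x_{σ i} ⊕ s_i`. -/
def gNet (σ : Equiv.Perm V) (s : V → Bool) : (V → Bool) → (V → Bool) :=
  fun x i => xor (x (σ i)) (s i)

lemma hamming_def (x y : V → Bool) :
    hammingDist x y = (univ.filter fun i => x i ≠ y i).card := rfl

/-- `gNet` is an isometry. -/
lemma hamming_gNet (σ : Equiv.Perm V) (s : V → Bool) (x y : V → Bool) :
    hammingDist (gNet σ s x) (gNet σ s y) = hammingDist x y := by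
  rw [hamming_def, hamming_def]
  refine Finset.card_equiv σ (fun i => ?_)
  simp only [mem_filter, mem_univ, true_and, gNet]
  cases s i <;> simp

lemma selfDual_gNet (σ : Equiv.Perm V) (s : V → Bool) : SelfDual (gNet σ s) := by
  intro x
  funext i
  simp only [gNet]
  cases x (σ i) <;> cases s i <;> rfl

lemma globalPos_gNet (σ : Equiv.Perm V) (s : V → Bool) (i j : V) :
    globalPos (gNet σ s) j i ↔ (j = σ i ∧ s i = false) := by
  constructor
  · rintro ⟨x, h1, h2⟩
    by_cases hj : j = σ i
    · subst hj
      refine ⟨rfl, ?_⟩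
      rw [gNet, Function.update_self] at h1 h2
      cases hs : s i
      · rfl
      · rw [hs] at h1; exact absurd h1 (by simp)
    · exfalso
      have he : Function.update x j true (σ i) = Function.update x j false (σ i) := by
        rw [Function.update_of_ne (fun h => hj h.symm), Function.update_of_ne (fun h => hj h.symm)]
      rw [gNet, he] at h1
      rw [gNet] at h2
      rw [h2] at h1
      exact absurd h1 (by simp)
  · rintro ⟨rfl, hs⟩
    refine ⟨fun _ => false, ?_, ?_⟩ <;>
      simp [gNet, Function.update_self, hs]

lemma globalNeg_gNet (σ : Equiv.Perm V) (s : V → Bool) (i j : V) :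
    globalNeg (gNet σ s) j i ↔ (j = σ i ∧ s i = true) := by
  constructor
  · rintro ⟨x, h1, h2⟩
    by_cases hj : j = σ i
    · subst hj
      refine ⟨rfl, ?_⟩
      rw [gNet, Function.update_self] at h1 h2
      cases hs : s i
      · rw [hs] at h1; exact absurd h1 (by simp)
      · rfl
    · exfalso
      have he : Function.update x j true (σ i) = Function.update x j false (σ i) := by
        rw [Function.update_of_ne (fun h => hj h.symm), Function.update_of_ne (fun h => hj h.symm)]
      rw [gNet, he] at h1
      rw [gNet] at h2
      rw [h2] at h1
      exact absurd h1 (by simp)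
  · rintro ⟨rfl, hs⟩
    refine ⟨fun _ => false, ?_, ?_⟩ <;>
      simp [gNet, Function.update_self, hs]

/-- If `f_i` has no arc from any `j ≠ j₀`, then `f_i` depends only on coordinate `j₀`. -/
lemma depend_single {f : (V → Bool) → (V → Bool)} {i j0 : V}
    (h : ∀ j, j ≠ j0 → ¬ globalPos f j i ∧ ¬ globalNeg f j i) :
    ∀ x y : V → Bool, x j0 = y j0 → f x i = f y i := by
  suffices H : ∀ n, ∀ x y : V → Bool, hammingDist x y = n → x j0 = y j0 → f x i = f y i by
    intro x y hxy; exact H _ x y rfl hxy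
  intro n
  induction n using Nat.strong_induction_on with
  | _ n ih =>
    intro x y hd hj
    rcases Nat.eq_zero_or_pos n with h0 | hpos
    · rw [h0] at hd
      rw [eq_of_hammingDist_eq_zero hd]
    · have hne : (univ.filter fun k => x k ≠ y k).Nonempty := by
        rw [← Finset.card_pos, ← hamming_def, hd]; exact hpos
      obtain ⟨k, hk⟩ := hne
      rw [mem_filter] at hk
      obtain ⟨-, hk2⟩ := hk
      have hkj : k ≠ j0 := fun he => hk2 (he ▸ hj)
      set y' : V → Bool := Function.update y k (x k) with hy'
      have hstep : f y' i = f y i := by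
        by_contra hne2
        have hff : f y' i = !(f y i) := by
          revert hne2; cases f y' i <;> cases f y i <;> simp
        have hxk : x k = !(y k) := by
          revert hk2; cases x k <;> cases y k <;> simp
        have hy'u : y' = Function.update y k (!(y k)) := by rw [hy', hxk]
        cases hyk : y k with
        | false =>
          have e1 : y' = Function.update y k true := by rw [hy'u, hyk, Bool.not_false]
          have e0 : y = Function.update y k false := by
            rw [← hyk]; exact (Function.update_eq_self k y).symm
          cases hfy : f y i with
          | false =>
            exact (h k hkj).1 ⟨y, by rw [← e1, hff, hfy]; rfl, by rw [← e0]; exact hfy⟩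
          | true =>
            exact (h k hkj).2 ⟨y, by rw [← e1, hff, hfy]; rfl, by rw [← e0]; exact hfy⟩
        | true =>
          have e1 : y' = Function.update y k false := by rw [hy'u, hyk, Bool.not_true]
          have e0 : y = Function.update y k true := by
            rw [← hyk]; exact (Function.update_eq_self k y).symm
          cases hfy : f y i with
          | false =>
            exact (h k hkj).2 ⟨y, by rw [← e0]; exact hfy, by rw [← e1, hff, hfy]; rfl⟩
          | true =>
            exact (h k hkj).1 ⟨y, by rw [← e0]; exact hfy, by rw [← e1, hff, hfy]; rfl⟩
      have hlt : hammingDist x y' < n := by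
        rw [← hd, hamming_def, hamming_def]
        apply Finset.card_lt_card
        constructor
        · intro l hl
          rw [mem_filter] at hl ⊢
          refine ⟨hl.1, fun hle => hl.2 ?_⟩
          rw [hy']
          by_cases hlk : l = k
          · subst hlk; exact absurd hle hk2
          · rw [Function.update_of_ne hlk]; exact hle
        · intro hsub
          have hkk : k ∈ univ.filter fun l => x l ≠ y l := by
            rw [mem_filter]; exact ⟨mem_univ _, hk2⟩
          have hmem := hsub hkk
          rw [mem_filter, hy', Function.update_self] at hmem
          exact hmem.2 rfl
      have hj' : x j0 = y' j0 := by
        rw [hy', Function.update_of_ne hkj.symm]; exact hj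
      rw [ih _ hlt x y' rfl hj', hstep]

/-- Any network whose interaction graph is the circle `(σ, s)` is `gNet σ s`. -/
lemma eq_gNet_of_circular {f : (V → Bool) → (V → Bool)} {σ : Equiv.Perm V} {s : V → Bool}
    (h : IsCircularWith f σ s) : f = gNet σ s := by
  obtain ⟨htrans, hpos, hneg⟩ := h
  funext x i
  have hdep : ∀ u v : V → Bool, u (σ i) = v (σ i) → f u i = f v i := by
    apply depend_single
    intro j hj
    exact ⟨fun hp => hj ((hpos i j).1 hp).1, fun hn => hj ((hneg i j).1 hn).1⟩
  cases hsi : s i with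
  | false =>
    obtain ⟨x0, h1, h0⟩ := (hpos i (σ i)).2 ⟨rfl, hsi⟩
    show f x i = xor (x (σ i)) (s i)
    rw [hsi, Bool.xor_false]
    cases hx : x (σ i) with
    | true =>
      rw [← h1]
      apply hdep
      rw [Function.update_self, hx]
    | false =>
      rw [← h0]
      apply hdep
      rw [Function.update_self, hx]
  | true =>
    obtain ⟨x0, h0, h1⟩ := (hneg i (σ i)).2 ⟨rfl, hsi⟩
    show f x i = xor (x (σ i)) (s i)
    rw [hsi, Bool.xor_true]
    cases hx : x (σ i) with
    | true =>
      rw [Bool.not_true, ← h0]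
      apply hdep
      rw [Function.update_self, hx]
    | false =>
      rw [Bool.not_false, ← h1]
      apply hdep
      rw [Function.update_self, hx]

/-! ### Parity in `ZMod 2` -/

/-- Parity of a Boolean vector, in `ZMod 2`. -/
def bpar (x : V → Bool) : ZMod 2 := ∑ i, (if x i = true then (1 : ZMod 2) else 0)

lemma bz_xor (a b : Bool) :
    (if xor a b = true then (1 : ZMod 2) else 0) =
      (if a = true then (1 : ZMod 2) else 0) + (if b = true then (1 : ZMod 2) else 0) := by
  cases a <;> cases b <;> decide

lemma bpar_xor (x y : V → Bool) : bpar (fun i => xor (x i) (y i)) = bpar x + bpar y := by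
  rw [bpar, bpar, bpar, ← Finset.sum_add_distrib]
  exact Finset.sum_congr rfl fun i _ => bz_xor _ _

lemma evenPt_iff_bpar (x : V → Bool) : EvenPt x ↔ bpar x = 0 := by
  have hcast : (((univ.filter fun i => x i = true).card : ℕ) : ZMod 2) = bpar x := by
    rw [Finset.card_filter, Nat.cast_sum, bpar]
    exact Finset.sum_congr rfl fun i _ => by split <;> simp
  rw [EvenPt, even_iff_two_dvd, ← ZMod.natCast_eq_zero_iff, hcast]

lemma bpar_single (j : V) : bpar (fun i => decide (i = j)) = 1 := by
  rw [bpar, Finset.sum_eq_single j]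
  · simp
  · intro b _ hb; simp [hb]
  · intro h; exact absurd (mem_univ j) h

lemma bpar_comp (σ : Equiv.Perm V) (x : V → Bool) : bpar (fun i => x (σ i)) = bpar x :=
  Equiv.sum_comp σ (fun i => if x i = true then (1 : ZMod 2) else 0)

lemma evenPt_flip (i0 : V) (x : V → Bool) :
    EvenPt (fun i => xor (x i) (decide (i = i0))) ↔ ¬ EvenPt x := by
  rw [evenPt_iff_bpar, evenPt_iff_bpar, bpar_xor, bpar_single]
  generalize bpar x = a
  revert a; decide

instance : DecidablePred (EvenPt (W := V)) := fun _ =>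
  decidable_of_iff _ Nat.even_iff.symm

/-! ### Counting even points -/

lemma two_mul_card_even (i0 : V) :
    2 * (univ.filter fun x : V → Bool => EvenPt x).card = Fintype.card (V → Bool) := by
  have hflip : ∀ x : V → Bool,
      (fun i => xor ((fun i => xor (x i) (decide (i = i0))) i) (decide (i = i0))) = x := by
    intro x; funext i; simp [Bool.xor_assoc]
  have hEO : (univ.filter fun x : V → Bool => EvenPt x).card
      = (univ.filter fun x : V → Bool => ¬ EvenPt x).card := by
    apply Finset.card_bij' (i := fun x _ => fun i => xor (x i) (decide (i = i0)))
      (j := fun x _ => fun i => xor (x i) (decide (i = i0)))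
    · intro a ha
      rw [mem_filter] at ha ⊢
      refine ⟨mem_univ _, fun hE => ((evenPt_flip i0 a).1 hE) ha.2⟩
    · intro a ha
      rw [mem_filter] at ha ⊢
      exact ⟨mem_univ _, (evenPt_flip i0 a).2 ha.2⟩
    · intro a _; exact hflip a
    · intro a _; exact hflip a
  have htot := Finset.card_filter_add_card_filter_not
    (s := (univ : Finset (V → Bool))) (fun x : V → Bool => EvenPt x)
  rw [Finset.card_univ] at htot
  omega

/-! ### Fibers of the conjugate of `gNet` -/

lemma conj_fiber {σ : Equiv.Perm V} {s : V → Bool}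
    (htrans : ∀ i j : V, ∃ n : ℕ, (σ ^ n) i = j) {x x' : V → Bool}
    (hxx : conjNet (gNet σ s) x = conjNet (gNet σ s) x') :
    x' = x ∨ x' = fun i => !(x i) := by
  have hz : ∀ i, xor (x i) (x' i) = xor (x (σ i)) (x' (σ i)) := by
    intro i
    have hthis := congrFun hxx i
    simp only [conjNet, gNet] at hthis
    revert hthis
    cases x i <;> cases x' i <;> cases x (σ i) <;> cases x' (σ i) <;> cases s i <;> simp
  have hpow : ∀ (n : ℕ) (i : V), xor (x i) (x' i) = xor (x ((σ ^ n) i)) (x' ((σ ^ n) i)) := by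
    intro n
    induction n with
    | zero => intro i; rfl
    | succ m ihm =>
      intro i
      calc xor (x i) (x' i) = xor (x (σ i)) (x' (σ i)) := hz i
        _ = xor (x ((σ ^ m) (σ i))) (x' ((σ ^ m) (σ i))) := ihm (σ i)
        _ = xor (x ((σ ^ (m+1)) i)) (x' ((σ ^ (m+1)) i)) := by
            rw [pow_succ, Equiv.Perm.mul_apply]
  rcases isEmpty_or_nonempty V with hV | hV
  · left; funext i; exact isEmptyElim i
  · obtain ⟨i0⟩ := hV
    have hconst : ∀ j, xor (x j) (x' j) = xor (x i0) (x' i0) := by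
      intro j
      obtain ⟨n, hn⟩ := htrans i0 j
      rw [← hn, ← hpow n i0]
    cases hc : xor (x i0) (x' i0) with
    | false =>
      left; funext j
      have hj := hconst j; rw [hc] at hj
      revert hj; cases x j <;> cases x' j <;> simp
    | true =>
      right; funext j
      have hj := hconst j; rw [hc] at hj
      revert hj; cases x j <;> cases x' j <;> simp

lemma bpar_conj (σ : Equiv.Perm V) (s : V → Bool) (x : V → Bool) :
    bpar (conjNet (gNet σ s) x) = bpar s := by
  have h1 : conjNet (gNet σ s) x = fun i => xor ((fun j => x (σ j)) i) (xor (s i) (x i)) := by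
    funext i; simp only [conjNet, gNet]
    cases x (σ i) <;> cases s i <;> cases x i <;> rfl
  rw [h1, bpar_xor, bpar_comp, bpar_xor]
  generalize bpar x = a
  generalize bpar s = b
  revert a b; decide

lemma conj_zero (σ : Equiv.Perm V) (s : V → Bool) :
    conjNet (gNet σ s) (fun _ => false) = s := by
  funext i
  show xor (xor false (s i)) false = s i
  cases s i <;> rfl

/-- Forward direction of evenness: a spanning circular positive network is even. -/
lemma isEvenNet_gNet {σ : Equiv.Perm V} {s : V → Bool}
    (htrans : ∀ i j : V, ∃ n : ℕ, (σ ^ n) i = j) (hs : EvenPt s) :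
    IsEvenNet (gNet σ s) := by
  rcases isEmpty_or_nonempty V with hV | hV
  · apply Set.eq_of_subset_of_subset
    · intro y _
      show EvenPt y
      rw [evenPt_iff_bpar, bpar]
      haveI := hV
      rw [Finset.univ_eq_empty, Finset.sum_empty]
    · intro y _
      exact ⟨y, funext fun i => isEmptyElim i⟩
  · obtain ⟨i0⟩ := hV
    have hsub : (univ.image (conjNet (gNet σ s))) ⊆ univ.filter (fun y : V → Bool => EvenPt y) := by
      intro y hy
      rw [Finset.mem_image] at hy
      obtain ⟨x, -, rfl⟩ := hy
      rw [mem_filter]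
      refine ⟨mem_univ _, ?_⟩
      rw [evenPt_iff_bpar, bpar_conj]
      exact (evenPt_iff_bpar s).1 hs
    have hcard : (univ.filter (fun y : V → Bool => EvenPt y)).card
        ≤ (univ.image (conjNet (gNet σ s))).card := by
      have h2 : (univ : Finset (V → Bool)).card
          ≤ 2 * (univ.image (conjNet (gNet σ s))).card := by
        apply Finset.card_le_mul_card_image
        intro b hb
        rw [Finset.mem_image] at hb
        obtain ⟨x, -, rfl⟩ := hb
        have hss : (univ.filter fun a : V → Bool =>
            conjNet (gNet σ s) a = conjNet (gNet σ s) x)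
            ⊆ insert x ({fun i => !(x i)} : Finset (V → Bool)) := by
          intro a ha
          rw [mem_filter] at ha
          rcases conj_fiber htrans ha.2.symm with h | h
          · rw [Finset.mem_insert]; left; exact h
          · rw [Finset.mem_insert, Finset.mem_singleton]; right; exact h
        calc (univ.filter fun a : V → Bool =>
            conjNet (gNet σ s) a = conjNet (gNet σ s) x).card
            ≤ (insert x ({fun i => !(x i)} : Finset (V → Bool))).card :=
              Finset.card_le_card hss
          _ ≤ ({fun i => !(x i)} : Finset (V → Bool)).card + 1 := Finset.card_insert_le _ _
          _ = 2 := by rw [Finset.card_singleton]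
      have h3 := two_mul_card_even (V := V) i0
      rw [Finset.card_univ] at h2
      omega
    have heq : (univ.image (conjNet (gNet σ s))) = univ.filter (fun y : V → Bool => EvenPt y) :=
      Finset.eq_of_subset_of_card_le hsub hcard
    rw [IsEvenNet]
    have h4 : Set.range (conjNet (gNet σ s)) = ↑(univ.image (conjNet (gNet σ s))) := by
      rw [Finset.coe_image, Finset.coe_univ, Set.image_univ]
    rw [h4, heq]
    ext y
    simp only [Finset.coe_filter, mem_univ, true_and, Set.mem_setOf_eq]

/-- Backward: evenness forces the permutation to be a single spanning cycle. -/
lemma transitive_of_even {σ : Equiv.Perm V} {s : V → Bool}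
    (heven : IsEvenNet (gNet σ s)) : ∀ i j : V, ∃ n : ℕ, (σ ^ n) i = j := by
  intro i0 j0
  by_contra hcon
  push_neg at hcon
  classical
  set O : Finset V := univ.filter (fun v => ∃ n : ℕ, (σ ^ n) i0 = v) with hO
  have hi0 : i0 ∈ O := by rw [hO, mem_filter]; exact ⟨mem_univ _, 0, rfl⟩
  have hj0 : j0 ∉ O := by rw [hO, mem_filter]; rintro ⟨-, n, hn⟩; exact hcon n hn
  have hOmap : ∀ v ∈ O, σ v ∈ O := by
    intro v hv
    rw [hO, mem_filter] at hv ⊢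
    obtain ⟨-, n, hn⟩ := hv
    exact ⟨mem_univ _, n + 1, by rw [pow_succ', Equiv.Perm.mul_apply, hn]⟩
  have hOim : O.image σ = O := by
    apply Finset.eq_of_subset_of_card_le
    · intro v hv
      rw [Finset.mem_image] at hv
      obtain ⟨w, hw, rfl⟩ := hv
      exact hOmap w hw
    · rw [Finset.card_image_of_injective _ σ.injective]
  have hsE : EvenPt s := by
    have hmem : s ∈ Set.range (conjNet (gNet σ s)) := ⟨fun _ => false, conj_zero σ s⟩
    rw [heven] at hmem
    exact hmem
  have hyE : EvenPt (fun v => xor (s v) (xor (decide (v = i0)) (decide (v = j0)))) := by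
    rw [evenPt_iff_bpar, bpar_xor, bpar_xor, bpar_single, bpar_single,
      (evenPt_iff_bpar s).1 hsE]
    decide
  obtain ⟨x, hx⟩ : (fun v => xor (s v) (xor (decide (v = i0)) (decide (v = j0))))
      ∈ Set.range (conjNet (gNet σ s)) := by
    rw [heven]; exact hyE
  have hpt : ∀ v, xor (x (σ v)) (x v) = xor (decide (v = i0)) (decide (v = j0)) := by
    intro v
    have hthis := congrFun hx v
    simp only [conjNet, gNet] at hthis
    revert hthis
    cases hd1 : decide (v = i0) <;> cases hd2 : decide (v = j0) <;>
      cases x (σ v) <;> cases x v <;> cases s v <;> simp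
  have hsumL : ∑ v ∈ O, (if x (σ v) = true then (1 : ZMod 2) else 0)
      = ∑ v ∈ O, (if x v = true then (1 : ZMod 2) else 0) := by
    conv_rhs => rw [← hOim, Finset.sum_image (fun a _ b _ hab => σ.injective hab)]
  have hsum2 : ∑ v ∈ O, (if (xor (x (σ v)) (x v)) = true then (1 : ZMod 2) else 0)
      = ∑ v ∈ O, (if (xor (decide (v = i0)) (decide (v = j0))) = true then (1 : ZMod 2) else 0) :=
    Finset.sum_congr rfl fun v _ => by rw [hpt v]
  have hL : ∑ v ∈ O, (if (xor (x (σ v)) (x v)) = true then (1 : ZMod 2) else 0) = 0 := by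
    have hsplit : ∀ v ∈ O, (if (xor (x (σ v)) (x v)) = true then (1 : ZMod 2) else 0)
        = (if x (σ v) = true then (1 : ZMod 2) else 0) + (if x v = true then (1 : ZMod 2) else 0) :=
      fun v _ => bz_xor _ _
    rw [Finset.sum_congr rfl hsplit, Finset.sum_add_distrib, hsumL]
    generalize (∑ v ∈ O, (if x v = true then (1 : ZMod 2) else 0)) = a
    revert a; decide
  have hR : ∑ v ∈ O, (if (xor (decide (v = i0)) (decide (v = j0))) = true then (1 : ZMod 2) else 0)
      = 1 := by
    have hsplit : ∀ v ∈ O, (if (xor (decide (v = i0)) (decide (v = j0))) = true then (1 : ZMod 2) else 0)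
        = (if v = i0 then (1 : ZMod 2) else 0) + (if v = j0 then (1 : ZMod 2) else 0) := by
      intro v _
      rw [bz_xor]
      congr 1 <;> simp
    rw [Finset.sum_congr rfl hsplit, Finset.sum_add_distrib,
      Finset.sum_ite_eq' O i0 (fun _ => (1 : ZMod 2)),
      Finset.sum_ite_eq' O j0 (fun _ => (1 : ZMod 2)), if_pos hi0, if_neg hj0, add_zero]
  rw [hL, hR] at hsum2
  exact absurd hsum2 (by decide)

/-! ### Non-expansive self-dual maps are isometries of the hypercube -/

lemma hamming_compl_right (x y : V → Bool) :
    hammingDist x y + hammingDist x (fun i => !(y i)) = Fintype.card V := by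
  rw [hamming_def, hamming_def]
  have hf : (univ.filter fun i => x i ≠ !(y i)) = univ.filter fun i => ¬ (x i ≠ y i) := by
    apply Finset.filter_congr
    intro i _
    cases x i <;> cases y i <;> simp
  rw [hf, Finset.card_filter_add_card_filter_not, Finset.card_univ]

lemma isometry_of_selfDual_nonExpansive {f : (V → Bool) → (V → Bool)}
    (hsd : SelfDual f) (hne : NonExpansive f) (x y : V → Bool) :
    hammingDist (f x) (f y) = hammingDist x y := by
  have h1 : hammingDist (f x) (f y) ≤ hammingDist x y := hne x y
  have h2 : hammingDist (f y) (f (fun i => !(x i))) ≤ hammingDist y (fun i => !(x i)) := hne _ _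
  have h3 : f (fun i => !(x i)) = fun i => !(f x i) := hsd x
  have h4 : Fintype.card V ≤ hammingDist (f x) (f y) + hammingDist (f y) (fun i => !(f x i)) := by
    have ht := hammingDist_triangle (f x) (f y) (fun i => !(f x i))
    have h5 := hamming_compl_right (f x) (f x)
    rw [hammingDist_self] at h5
    omega
  rw [h3] at h2
  have h6 := hamming_compl_right y x
  have h7 : hammingDist x y = hammingDist y x := hammingDist_comm x y
  omega

/-- Basis vector at `j`. -/
def ev (j : V) : V → Bool := fun i => decide (i = j)

lemma weight_ev_true {x : V → Bool} {j : V} (h : x j = true) :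
    hammingDist x (ev j) + 1 = hammingDist x (fun _ => false) := by
  rw [hamming_def, hamming_def]
  have hA : (univ.filter fun i => x i ≠ ev j i) = (univ.filter fun i => x i ≠ false).erase j := by
    ext l
    rw [Finset.mem_erase, mem_filter, mem_filter]
    constructor
    · intro hl
      by_cases hlj : l = j
      · subst hlj; exfalso; apply hl.2; rw [h, ev]; simp
      · refine ⟨hlj, mem_univ _, fun hlf => hl.2 ?_⟩
        rw [hlf, ev]; simp [hlj]
    · intro hl
      refine ⟨mem_univ _, fun hle => hl.2.2 ?_⟩
      rw [hle, ev]; simp [hl.1]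
  have hj : j ∈ (univ.filter fun i => x i ≠ false) := by
    rw [mem_filter]; exact ⟨mem_univ _, by rw [h]; simp⟩
  rw [hA, Finset.card_erase_add_one hj]

lemma weight_ev_false {x : V → Bool} {j : V} (h : x j = false) :
    hammingDist x (ev j) = hammingDist x (fun _ => false) + 1 := by
  rw [hamming_def, hamming_def]
  have hA : (univ.filter fun i => x i ≠ ev j i) = insert j (univ.filter fun i => x i ≠ false) := by
    ext l
    rw [Finset.mem_insert, mem_filter, mem_filter]
    constructor
    · intro hl
      by_cases hlj : l = j
      · left; exact hlj
      · refine Or.inr ⟨mem_univ _, fun hlf => hl.2 ?_⟩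
        rw [hlf, ev]; simp [hlj]
    · intro hl
      rcases hl with rfl | hl
      · refine ⟨mem_univ _, fun hle => ?_⟩
        rw [h, ev] at hle; simp at hle
      · refine ⟨mem_univ _, fun hle => hl.2 ?_⟩
        by_cases hlj : l = j
        · subst hlj; exact h
        · rw [hle, ev]; simp [hlj]
  have hj : j ∉ (univ.filter fun i => x i ≠ false) := by
    rw [mem_filter]; rintro ⟨-, hh⟩; exact hh h
  rw [hA, Finset.card_insert_of_notMem hj]

/-- Every self-dual non-expansive network is of the form `gNet σ s`. -/
lemma exists_gNet {f : (V → Bool) → (V → Bool)} (hsd : SelfDual f) (hne : NonExpansive f) :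
    ∃ (σ : Equiv.Perm V) (s : V → Bool), f = gNet σ s := by
  have hiso := isometry_of_selfDual_nonExpansive hsd hne
  set c : V → Bool := f (fun _ => false) with hc
  set h : (V → Bool) → (V → Bool) := fun x => fun i => xor (f x i) (c i) with hh
  have hiso2 : ∀ x y, hammingDist (h x) (h y) = hammingDist x y := by
    intro x y
    rw [← hiso x y, hamming_def, hamming_def]
    congr 1
    apply Finset.filter_congr
    intro i _
    simp only [hh]
    cases f x i <;> cases f y i <;> cases c i <;> simp
  have h0 : h (fun _ => false) = fun _ => false := by
    funext i
    simp only [hh, ← hc]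
    cases c i <;> rfl
  have hw : ∀ x, hammingDist (h x) (fun _ => false) = hammingDist x (fun _ => false) := by
    intro x
    have hx := hiso2 x (fun _ => false)
    rw [h0] at hx
    exact hx
  have hev1 : ∀ j : V, hammingDist (ev j) (fun _ => false) = 1 := by
    intro j
    rw [hamming_def]
    have hsing : (univ.filter fun i => (ev j) i ≠ (fun _ => false) i) = {j} := by
      ext l
      rw [mem_filter, Finset.mem_singleton]
      constructor
      · intro hl
        by_contra hlj
        apply hl.2
        show ev j l = false
        rw [ev]; simp [hlj]
      · rintro rfl
        refine ⟨mem_univ _, ?_⟩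
        show ev l l ≠ false
        rw [ev]; simp
    rw [hsing, Finset.card_singleton]
  have hwt1 : ∀ u : V → Bool, hammingDist u (fun _ => false) = 1 → ∃ k, u = ev k := by
    intro u hu
    rw [hamming_def] at hu
    obtain ⟨k, hk⟩ := Finset.card_eq_one.mp hu
    refine ⟨k, ?_⟩
    funext l
    have hmem : ∀ m : V, (u m ≠ false) ↔ m = k := by
      intro m
      constructor
      · intro hm
        have : m ∈ (univ.filter fun i => u i ≠ (fun _ => false) i) := by
          rw [mem_filter]; exact ⟨mem_univ _, hm⟩
        rw [hk, Finset.mem_singleton] at this; exact this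
      · intro hmk
        have hms : m ∈ (univ.filter fun i => u i ≠ (fun _ => false) i) := by
          rw [hk, Finset.mem_singleton]; exact hmk
        rw [mem_filter] at hms
        exact hms.2
    by_cases hlk : l = k
    · subst hlk
      have hul : u l ≠ false := (hmem l).mpr rfl
      have : u l = true := by revert hul; cases u l <;> simp
      rw [this, ev]; simp
    · have hul : u l = false := by
        by_contra hul
        exact hlk ((hmem l).mp hul)
      rw [hul, ev]; simp [hlk]
  have hτ : ∀ j : V, ∃ k, h (ev j) = ev k := by
    intro j
    apply hwt1
    rw [hw, hev1]
  choose τ hτe using hτ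
  have hinj : Function.Injective τ := by
    intro a b hab
    have heq1 : h (ev a) = h (ev b) := by rw [hτe a, hτe b, hab]
    have hd0 : hammingDist (ev a) (ev b) = 0 := by
      rw [← hiso2, heq1, hammingDist_self]
    have heq2 := eq_of_hammingDist_eq_zero hd0
    have heq3 := congrFun heq2 a
    rw [ev, ev] at heq3
    simp at heq3
    exact heq3
  let π : Equiv.Perm V := Equiv.ofBijective τ (Finite.injective_iff_bijective.mp hinj)
  refine ⟨π.symm, c, ?_⟩
  have hkey : ∀ (x : V → Bool) (j : V), h x (τ j) = x j := by
    intro x j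
    have hd1 : hammingDist (h x) (ev (τ j)) = hammingDist x (ev j) := by
      rw [← hτe j]
      exact hiso2 x (ev j)
    by_contra hne3
    have hwx := hw x
    rcases Bool.eq_false_or_eq_true (x j) with hxj | hxj
    · -- x j = true, so h x (τ j) = false
      have hhx : h x (τ j) = false := by
        revert hne3; rw [hxj]; cases h x (τ j) <;> simp
      have e1 := weight_ev_true hxj
      have e2 := weight_ev_false hhx
      omega
    · have hhx : h x (τ j) = true := by
        revert hne3; rw [hxj]; cases h x (τ j) <;> simp
      have e1 := weight_ev_false hxj
      have e2 := weight_ev_true hhx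
      omega
  funext x i
  have hki := hkey x (π.symm i)
  have hτπ : τ (π.symm i) = i := π.apply_symm_apply i
  rw [hτπ] at hki
  show f x i = xor (x (π.symm i)) (c i)
  rw [← hki]
  simp only [hh]
  cases f x i <;> cases c i <;> rfl

end Stmt14Aux

/-- `f` is positive-circular (its global interaction graph is a cycle spanning all
vertices with an even number of negative arcs) iff `f` is even-self-dual and
non-expansive. -/
theorem stmt_14 {V : Type*} [Fintype V] [DecidableEq V]
    (f : (V → Bool) → (V → Bool)) :
    (∃ (σ : Equiv.Perm V) (s : V → Bool), IsCircularWith f σ s ∧ Even (negCount s)) ↔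
    (IsEvenNet f ∧ SelfDual f ∧ NonExpansive f) := by
  constructor
  · rintro ⟨σ, s, hcirc, hns⟩
    have hfg := Stmt14Aux.eq_gNet_of_circular hcirc
    subst hfg
    have hsE : EvenPt s := hns
    exact ⟨Stmt14Aux.isEvenNet_gNet hcirc.1 hsE, Stmt14Aux.selfDual_gNet σ s,
      fun x y => le_of_eq (Stmt14Aux.hamming_gNet σ s x y)⟩
  · rintro ⟨heven, hsd, hne⟩
    obtain ⟨σ, s, hfg⟩ := Stmt14Aux.exists_gNet hsd hne
    subst hfg
    have htrans := Stmt14Aux.transitive_of_even heven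
    refine ⟨σ, s, ⟨htrans, fun i j => Stmt14Aux.globalPos_gNet σ s i j,
      fun i j => Stmt14Aux.globalNeg_gNet σ s i j⟩, ?_⟩
    have hmem : s ∈ Set.range (conjNet (Stmt14Aux.gNet σ s)) :=
      ⟨fun _ => false, Stmt14Aux.conj_zero σ s⟩
    rw [heven] at hmem
    exact hmem
end

section
/- A Boolean network f is negative-circular (its global interaction graph is a cycle spanning all vertices with an odd number of negative arcs) if and only if f is odd-self-dual and non-expansive. -/
set_option linter.unusedSectionVars false
open Finset

namespace S15
variable {V : Type*} [Fintype V] [DecidableEq V]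

def χ (b : Bool) : ZMod 2 := if b then 1 else 0

lemma χ_xor (a b : Bool) : χ (xor a b) = χ a + χ b := by cases a <;> cases b <;> decide
lemma χ_not (a : Bool) : χ (!a) = χ a + 1 := by cases a <;> decide
lemma χ_eq_iff (a b : Bool) : χ a = χ b ↔ a = b := by cases a <;> cases b <;> decide

lemma zmod2_cases (a : ZMod 2) : a = 0 ∨ a = 1 := by revert a; decide

/-- parity over a finset -/
def par (s : Finset V) (x : V → Bool) : ZMod 2 := ∑ i ∈ s, χ (x i)

lemma evenPt_iff (x : V → Bool) : EvenPt x ↔ par univ x = 0 := by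
  rw [EvenPt, ← ZMod.natCast_eq_zero_iff_even, par]
  have : ((Finset.univ.filter (fun i => x i = true)).card : ZMod 2)
      = ∑ i : V, χ (x i) := by
    rw [Finset.card_filter, Nat.cast_sum]
    refine Finset.sum_congr rfl ?_
    intro i _
    by_cases h : x i = true <;> simp [h, χ]
  rw [this]

lemma oddPt_iff (x : V → Bool) : ¬ EvenPt x ↔ par univ x = 1 := by
  rw [evenPt_iff]
  rcases zmod2_cases (par univ x) with h | h <;> simp [h]

def GoodForm (f : (V → Bool) → (V → Bool)) (σ : Equiv.Perm V) (c : V → Bool) : Prop :=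
  ∀ x i, f x i = xor (x (σ i)) (c i)

def Cyclic (σ : Equiv.Perm V) : Prop := ∀ i j : V, ∃ n : ℕ, (σ ^ n) i = j

lemma par_comp_perm (s : Finset V) (σ : Equiv.Perm V) (hs : ∀ i ∈ s, σ i ∈ s)
    (x : V → Bool) : ∑ i ∈ s, χ (x (σ i)) = ∑ i ∈ s, χ (x i) := by
  have himg : s.image σ = s := by
    apply Finset.eq_of_subset_of_card_le
    · intro i hi
      rcases Finset.mem_image.mp hi with ⟨j, hj, rfl⟩
      exact hs j hj
    · rw [Finset.card_image_of_injective _ σ.injective]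
  apply Finset.sum_nbij' (fun i => σ i) (fun i => σ.symm i)
  · exact hs
  · intro i hi
    rw [← himg] at hi
    rcases Finset.mem_image.mp hi with ⟨j, hj, rfl⟩
    simpa using hj
  · intro i _; simp
  · intro i _; simp
  · intro i _; rfl

lemma par_univ_comp_perm (σ : Equiv.Perm V) (x : V → Bool) :
    ∑ i : V, χ (x (σ i)) = ∑ i : V, χ (x i) :=
  par_comp_perm univ σ (by simp) x

lemma negCount_odd_iff (c : V → Bool) : Odd (negCount c) ↔ par univ c = 1 := by
  rw [negCount, Nat.not_even_iff_odd.symm]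
  exact oddPt_iff c

end S15
namespace S15
variable {V : Type*} [Fintype V] [DecidableEq V]
variable {f : (V → Bool) → (V → Bool)} {σ : Equiv.Perm V} {c : V → Bool}

lemma GoodForm.selfDual (h : GoodForm f σ c) : SelfDual f := by
  intro x; funext i
  rw [h x i, h (fun j => !(x j)) i]
  cases x (σ i) <;> cases c i <;> rfl

lemma GoodForm.nonExpansive (h : GoodForm f σ c) : NonExpansive f := by
  intro x y
  have : hammingDist (f x) (f y) = hammingDist x y := by
    unfold hammingDist
    apply Finset.card_equiv σ
    intro i
    simp only [Finset.mem_filter, Finset.mem_univ, true_and]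
    rw [h x i, h y i]
    cases hx : x (σ i) <;> cases hy : y (σ i) <;> cases hc : c i <;> simp
  exact this.le

lemma χ_decide (a : ZMod 2) : χ (decide (a = 1)) = a := by revert a; decide

/-- solving x(σ i) ⊕ x i = d i along a spanning cycle, given even total parity -/
lemma exists_cycle_solution (σ : Equiv.Perm V) (hcyc : Cyclic σ) (i0 : V)
    (d : V → Bool) (hd : par Finset.univ d = 0) :
    ∃ x : V → Bool, ∀ i, xor (x (σ i)) (x i) = d i := by
  classical
  have hex : ∀ j, ∃ n : ℕ, (σ ^ n) i0 = j := fun j => hcyc i0 j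
  set idx : V → ℕ := fun j => Nat.find (hex j) with hidxdef
  have hspec : ∀ j, (σ ^ idx j) i0 = j := fun j => Nat.find_spec (hex j)
  have hmin : ∀ j k, (σ ^ k) i0 = j → idx j ≤ k := fun j k hk => Nat.find_min' (hex j) hk
  have hidx0 : idx i0 = 0 := Nat.le_zero.mp (hmin i0 0 (by simp))
  set S : ℕ → ZMod 2 := fun n => ∑ t ∈ Finset.range n, χ (d ((σ ^ t) i0)) with hSdef
  set x : V → Bool := fun j => decide (S (idx j) = 1) with hxdef
  have hχx : ∀ j, χ (x j) = S (idx j) := fun j => χ_decide _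
  have hsucc : ∀ n (j : V), (σ ^ n) i0 = j → (σ ^ (n+1)) i0 = σ j := by
    intro n j hj
    rw [pow_succ', Equiv.Perm.mul_apply, hj]
  -- key: S (idx i + 1) = S (idx i) + χ (d i)
  have hSstep : ∀ i : V, S (idx i + 1) = S (idx i) + χ (d i) := by
    intro i
    simp only [hSdef]
    rw [Finset.sum_range_succ, hspec i]
  refine ⟨x, ?_⟩
  intro i
  rw [← χ_eq_iff, χ_xor, hχx, hχx]
  by_cases hwrap : σ i = i0
  · -- wrap-around: idx (σ i) = 0, and the total sum is 0
    rw [hwrap, hidx0]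
    have hrange : ∀ k : V, idx k ≤ idx i := by
      intro k
      by_contra hlt
      push_neg at hlt
      set m := idx k - (idx i + 1) with hm
      have hmk : idx k = (idx i + 1) + m := by omega
      have : (σ ^ m) i0 = k := by
        have h1 : (σ ^ (idx i + 1)) i0 = i0 := by rw [hsucc _ _ (hspec i), hwrap]
        have := hspec k
        rw [hmk, add_comm, pow_add, Equiv.Perm.mul_apply, h1] at this
        exact this
      have := hmin k m this
      omega
    have hinj : ∀ a ∈ Finset.range (idx i + 1), ∀ b ∈ Finset.range (idx i + 1),
        (σ ^ a) i0 = (σ ^ b) i0 → a = b := by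
      intro a ha b hb hab
      simp only [Finset.mem_range] at ha hb
      -- wlog a ≤ b
      rcases le_total a b with hle | hle
      · by_contra hne
        have hb' : b ≤ idx i := by omega
        have : (σ ^ (idx i - b + a)) i0 = i := by
          have := hspec i
          have hsplit : idx i = (idx i - b) + b := by omega
          rw [hsplit, pow_add, Equiv.Perm.mul_apply, ← hab,
            ← Equiv.Perm.mul_apply, ← pow_add] at this
          exact this
        have := hmin i _ this
        omega
      · by_contra hne
        have ha' : a ≤ idx i := by omega
        have : (σ ^ (idx i - a + b)) i0 = i := by
          have := hspec i
          have hsplit : idx i = (idx i - a) + a := by omega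
          rw [hsplit, pow_add, Equiv.Perm.mul_apply, hab,
            ← Equiv.Perm.mul_apply, ← pow_add] at this
          exact this
        have := hmin i _ this
        omega
    have hsum : S (idx i + 1) = par Finset.univ d := by
      rw [hSdef, par]
      apply Finset.sum_bij (fun t _ => (σ ^ t) i0)
      · intro a _; exact Finset.mem_univ _
      · exact hinj
      · intro k _
        exact ⟨idx k, Finset.mem_range.mpr (by have := hrange k; omega), hspec k⟩
      · intro a _; rfl
    have hz : S (idx i) + χ (d i) = 0 := by rw [← hSstep i, hsum, hd]
    have h0 : S 0 = 0 := by simp [hSdef]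
    rw [h0, zero_add]
    have cancel : ∀ a b : ZMod 2, a + b = 0 → a = b := by decide
    exact cancel _ _ hz
  · -- idx (σ i) = idx i + 1
    have hle : idx (σ i) ≤ idx i + 1 := hmin _ _ (hsucc _ _ (hspec i))
    have hge : idx i + 1 ≤ idx (σ i) := by
      rcases Nat.eq_zero_or_pos (idx (σ i)) with h0 | hpos
      · exfalso; apply hwrap
        have h1 := hspec (σ i)
        rw [h0, pow_zero] at h1
        simpa using h1.symm
      · obtain ⟨k, hk⟩ := Nat.exists_eq_succ_of_ne_zero (Nat.pos_iff_ne_zero.mp hpos)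
        have := hspec (σ i)
        rw [hk] at this
        rw [pow_succ', Equiv.Perm.mul_apply] at this
        have hki : (σ ^ k) i0 = i := σ.injective this
        have := hmin i k hki
        omega
    have heq : idx (σ i) = idx i + 1 := le_antisymm hle hge
    rw [heq, hSstep i]
    have cancel : ∀ a b : ZMod 2, a + b + a = b := by decide
    exact cancel _ _

end S15
namespace S15
variable {V : Type*} [Fintype V] [DecidableEq V]
variable {f : (V → Bool) → (V → Bool)} {σ : Equiv.Perm V} {c : V → Bool}

lemma par_conj (h : GoodForm f σ c) (x : V → Bool) :
    par Finset.univ (conjNet f x) = par Finset.univ c := by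
  unfold par conjNet
  have : ∀ i : V, χ (xor (f x i) (x i)) = χ (x (σ i)) + χ (c i) + χ (x i) := by
    intro i
    rw [χ_xor, h x i, χ_xor]
  rw [Finset.sum_congr rfl (fun i _ => this i)]
  rw [Finset.sum_add_distrib, Finset.sum_add_distrib, par_univ_comp_perm σ x]
  generalize (∑ i : V, χ (x i)) = a
  generalize (∑ i : V, χ (c i)) = b
  revert a b
  decide

lemma GoodForm.isOddNet (h : GoodForm f σ c) (hcyc : Cyclic σ)
    (hc : par Finset.univ c = 1) : IsOddNet f := by
  have hne : Nonempty V := by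
    by_contra hempty
    rw [not_nonempty_iff] at hempty
    rw [par, Finset.univ_eq_empty, Finset.sum_empty] at hc
    exact absurd hc (by decide)
  obtain ⟨i0⟩ := hne
  apply Set.eq_of_subset_of_subset
  · rintro y ⟨x, rfl⟩
    rw [Set.mem_setOf_eq, oddPt_iff, par_conj h x, hc]
  · intro y hy
    rw [Set.mem_setOf_eq, oddPt_iff] at hy
    set d : V → Bool := fun i => xor (y i) (c i) with hddef
    have hd : par Finset.univ d = 0 := by
      unfold par
      simp only [hddef]
      have : ∀ i : V, χ (xor (y i) (c i)) = χ (y i) + χ (c i) := fun i => χ_xor _ _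
      rw [Finset.sum_congr rfl (fun i _ => this i), Finset.sum_add_distrib]
      rw [show (∑ i : V, χ (y i)) = par Finset.univ y from rfl, hy,
        show (∑ i : V, χ (c i)) = par Finset.univ c from rfl, hc]
      decide
    obtain ⟨x, hx⟩ := exists_cycle_solution σ hcyc i0 d hd
    refine ⟨x, ?_⟩
    funext i
    have := hx i
    rw [hddef] at this
    unfold conjNet
    rw [h x i]
    cases hyi : y i <;> cases hci : c i <;> cases hxi : x i <;> simp_all
    
-- no arc from j to i means f · i does not depend on coordinate j
lemma noArc_indep {j i : V} (hp : ¬ globalPos f j i) (hn : ¬ globalNeg f j i) :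
    ∀ (x : V → Bool) b, f (Function.update x j b) i = f x i := by
  have key : ∀ x : V → Bool,
      f (Function.update x j true) i = f (Function.update x j false) i := by
    intro x
    cases h1 : f (Function.update x j true) i <;>
      cases h2 : f (Function.update x j false) i
    · rfl
    · exact absurd ⟨x, h1, h2⟩ hn
    · exact absurd ⟨x, h1, h2⟩ hp
    · rfl
  intro x b
  have hself : Function.update x j (x j) = x := Function.update_eq_self j x
  conv_rhs => rw [← hself]
  cases b <;> cases hxj : x j <;> simp only [key x]

lemma eq_of_agree_on (f : (V → Bool) → (V → Bool)) (i k : V)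
    (hind : ∀ j, j ≠ k → ∀ (x : V → Bool) b, f (Function.update x j b) i = f x i) :
    ∀ x y : V → Bool, x k = y k → f x i = f y i := by
  suffices H : ∀ (n : ℕ) (x y : V → Bool),
      (Finset.univ.filter (fun j => x j ≠ y j)).card = n → x k = y k → f x i = f y i by
    intro x y hk
    exact H _ x y rfl hk
  intro n
  induction n using Nat.strong_induction_on with
  | _ n IH =>
    intro x y hcard hk
    rcases eq_or_ne x y with rfl | hxy
    · rfl
    · obtain ⟨j, hj⟩ : ∃ j, x j ≠ y j := by
        by_contra hc
        push_neg at hc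
        exact hxy (funext hc)
      have hjk : j ≠ k := fun h => hj (h ▸ hk)
      set x' := Function.update x j (y j) with hx'def
      have h1 : f x' i = f x i := hind j hjk x (y j)
      have hfilter : (Finset.univ.filter (fun j' => x' j' ≠ y j'))
          = (Finset.univ.filter (fun j' => x j' ≠ y j')).erase j := by
        ext j'
        simp only [Finset.mem_filter, Finset.mem_univ, true_and, Finset.mem_erase]
        rcases eq_or_ne j' j with rfl | hne
        · simp [hx'def]
        · simp [hx'def, Function.update_of_ne hne, hne]
      have hjmem : j ∈ Finset.univ.filter (fun j' => x j' ≠ y j') := by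
        simp [hj]
      have hlt : (Finset.univ.filter (fun j' => x' j' ≠ y j')).card < n := by
        rw [hfilter, ← hcard]
        exact Finset.card_erase_lt_of_mem hjmem
      have hk' : x' k = y k := by rw [hx'def, Function.update_of_ne (Ne.symm hjk)]; exact hk
      rw [← h1]
      exact IH _ hlt x' y rfl hk'

lemma circular_goodForm {s : V → Bool} (hcirc : IsCircularWith f σ s) :
    GoodForm f σ s := by
  obtain ⟨hcyc, hpos, hneg⟩ := hcirc
  intro x i
  have hind : ∀ j, j ≠ σ i → ∀ (z : V → Bool) b, f (Function.update z j b) i = f z i := by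
    intro j hj
    exact noArc_indep (fun hp => hj ((hpos i j).mp hp).1) (fun hn => hj ((hneg i j).mp hn).1)
  have hdep := eq_of_agree_on f i (σ i) hind
  cases hs : s i
  · obtain ⟨z, hz1, hz2⟩ := (hpos i (σ i)).mpr ⟨rfl, hs⟩
    cases hxi : x (σ i)
    · rw [hdep x (Function.update z (σ i) false) (by simp [hxi]), hz2]; rfl
    · rw [hdep x (Function.update z (σ i) true) (by simp [hxi]), hz1]; rfl
  · obtain ⟨z, hz1, hz2⟩ := (hneg i (σ i)).mpr ⟨rfl, hs⟩
    cases hxi : x (σ i)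
    · rw [hdep x (Function.update z (σ i) false) (by simp [hxi]), hz2]; rfl
    · rw [hdep x (Function.update z (σ i) true) (by simp [hxi]), hz1]; rfl

end S15
namespace S15
variable {V : Type*} [Fintype V] [DecidableEq V]
variable {f : (V → Bool) → (V → Bool)} {σ : Equiv.Perm V} {c : V → Bool}

lemma goodForm_pos (h : GoodForm f σ c) (i j : V) :
    globalPos f j i ↔ (j = σ i ∧ c i = false) := by
  constructor
  · rintro ⟨x, h1, h2⟩
    rw [h _ i] at h1 h2
    rcases eq_or_ne j (σ i) with rfl | hne
    · rw [Function.update_self] at h1 h2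
      refine ⟨rfl, ?_⟩
      cases hc : c i
      · rfl
      · rw [hc] at h1; exact absurd h1 (by decide)
    · rw [Function.update_of_ne (Ne.symm hne)] at h1 h2
      rw [h1] at h2; exact absurd h2 (by decide)
  · rintro ⟨rfl, hc⟩
    refine ⟨fun _ => false, ?_, ?_⟩ <;>
      rw [h _ i, Function.update_self, hc] <;> rfl

lemma goodForm_neg (h : GoodForm f σ c) (i j : V) :
    globalNeg f j i ↔ (j = σ i ∧ c i = true) := by
  constructor
  · rintro ⟨x, h1, h2⟩
    rw [h _ i] at h1 h2
    rcases eq_or_ne j (σ i) with rfl | hne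
    · rw [Function.update_self] at h1 h2
      refine ⟨rfl, ?_⟩
      cases hc : c i
      · rw [hc] at h1; exact absurd h1 (by decide)
      · rfl
    · rw [Function.update_of_ne (Ne.symm hne)] at h1 h2
      rw [h1] at h2; exact absurd h2 (by decide)
  · rintro ⟨rfl, hc⟩
    refine ⟨fun _ => false, ?_, ?_⟩ <;>
      rw [h _ i, Function.update_self, hc] <;> rfl

/-- the basis vector -/
def eV (j : V) : V → Bool := fun i => decide (i = j)

lemma par_eV (O : Finset V) (j : V) : par O (eV j) = if j ∈ O then 1 else 0 := by
  unfold par eV χ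
  rw [← Finset.sum_ite_eq' O j (fun _ => (1 : ZMod 2))]
  refine Finset.sum_congr rfl ?_
  intro i _
  by_cases hij : i = j <;> simp [hij]

lemma oddPt_eV (j : V) : ¬ EvenPt (eV j) := by
  rw [oddPt_iff, par_eV]
  simp

lemma par_conj_closed (h : GoodForm f σ c) (O : Finset V) (hO : ∀ i ∈ O, σ i ∈ O)
    (x : V → Bool) : par O (conjNet f x) = par O c := by
  unfold par conjNet
  have : ∀ i : V, χ (xor (f x i) (x i)) = χ (x (σ i)) + χ (c i) + χ (x i) := by
    intro i
    rw [χ_xor, h x i, χ_xor]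
  rw [Finset.sum_congr rfl (fun i _ => this i)]
  rw [Finset.sum_add_distrib, Finset.sum_add_distrib, par_comp_perm O σ hO x]
  generalize (∑ i ∈ O, χ (x i)) = a
  generalize (∑ i ∈ O, χ (c i)) = b
  revert a b
  decide

lemma oddNet_nonempty (hodd : IsOddNet f) : Nonempty V := by
  by_contra hempty
  rw [not_nonempty_iff] at hempty
  have h1 : conjNet f (fun _ => false) ∈ {x : V → Bool | ¬ EvenPt x} := by
    rw [← hodd]; exact ⟨_, rfl⟩
  apply h1
  rw [EvenPt, Finset.univ_eq_empty]
  simp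

lemma goodForm_oddNet_cyclic (h : GoodForm f σ c) (hodd : IsOddNet f) :
    Cyclic σ ∧ par Finset.univ c = 1 := by
  classical
  have hmem : ∀ j : V, ∃ x, conjNet f x = eV j := by
    intro j
    have : eV j ∈ Set.range (conjNet f) := by rw [hodd]; exact oddPt_eV j
    exact this
  have hpar : par Finset.univ c = 1 := by
    obtain ⟨i0⟩ := oddNet_nonempty hodd
    obtain ⟨x, hx⟩ := hmem i0
    have := par_conj_closed h Finset.univ (by simp) x
    rw [hx, par_eV] at this
    simp at this
    exact this.symm
  refine ⟨?_, hpar⟩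
  intro i0 j0
  by_contra hno
  push_neg at hno
  set O : Finset V := Finset.univ.filter (fun j => ∃ n : ℕ, (σ ^ n) i0 = j) with hOdef
  have hi0 : i0 ∈ O := by
    rw [hOdef]; simp only [Finset.mem_filter, Finset.mem_univ, true_and]
    exact ⟨0, by simp⟩
  have hj0 : j0 ∉ O := by
    rw [hOdef]; simp only [Finset.mem_filter, Finset.mem_univ, true_and]
    rintro ⟨n, hn⟩
    exact hno n hn
  have hO : ∀ i ∈ O, σ i ∈ O := by
    intro i hi
    rw [hOdef] at hi ⊢
    simp only [Finset.mem_filter, Finset.mem_univ, true_and] at hi ⊢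
    obtain ⟨n, rfl⟩ := hi
    exact ⟨n + 1, by rw [pow_succ', Equiv.Perm.mul_apply]⟩
  obtain ⟨x1, hx1⟩ := hmem i0
  obtain ⟨x2, hx2⟩ := hmem j0
  have h1 := par_conj_closed h O hO x1
  have h2 := par_conj_closed h O hO x2
  rw [hx1, par_eV, if_pos hi0] at h1
  rw [hx2, par_eV, if_neg hj0] at h2
  rw [← h1] at h2
  exact absurd h2 (by decide)

end S15
namespace S15
variable {V : Type*} [Fintype V] [DecidableEq V]
variable {f : (V → Bool) → (V → Bool)}

lemma dist_not (x y : V → Bool) :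
    hammingDist x (fun i => !(y i)) = Fintype.card V - hammingDist x y := by
  unfold hammingDist
  have hfil : (Finset.univ.filter (fun i => x i ≠ !(y i)))
      = Finset.univ.filter (fun i => ¬ (x i ≠ y i)) := by
    apply Finset.filter_congr
    intro i _
    cases hx : x i <;> cases hy : y i <;> simp
  rw [hfil, Finset.filter_not, Finset.card_sdiff_of_subset (Finset.filter_subset _ _),
    Finset.card_univ]

lemma sd_inj (hsd : SelfDual f) (hne : NonExpansive f) (hV : Nonempty V) :
    Function.Injective f := by
  intro x y hxy
  by_contra hxyne
  have hd1 : 1 ≤ hammingDist x y := hammingDist_pos.mpr hxyne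
  have hdle : hammingDist x y ≤ Fintype.card V := hammingDist_le_card_fintype
  have hcard : 1 ≤ Fintype.card V := Fintype.card_pos_iff.mpr hV
  have key := hne x (fun i => !(y i))
  rw [hsd y, hxy, dist_not, dist_not, hammingDist_self] at key
  omega

lemma nonexp_bij_isom (hne : NonExpansive f) (hbij : Function.Bijective f) :
    ∀ x y, hammingDist (f x) (f y) = hammingDist x y := by
  set e : Equiv.Perm (V → Bool) := Equiv.ofBijective f hbij with hedef
  have hef : ∀ x, e x = f x := fun x => rfl
  have hiter : ∀ (m : ℕ) (a b : V → Bool),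
      hammingDist ((e ^ m) a) ((e ^ m) b) ≤ hammingDist a b := by
    intro m
    induction m with
    | zero => intro a b; simp
    | succ k IH =>
      intro a b
      have h1 : (e ^ (k+1)) a = (e ^ k) (e a) := by
        rw [pow_succ, Equiv.Perm.mul_apply]
      have h2 : (e ^ (k+1)) b = (e ^ k) (e b) := by
        rw [pow_succ, Equiv.Perm.mul_apply]
      rw [h1, h2]
      calc hammingDist ((e ^ k) (e a)) ((e ^ k) (e b)) ≤ hammingDist (e a) (e b) := IH _ _
        _ ≤ hammingDist a b := by rw [hef, hef]; exact hne a b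
  intro x y
  refine le_antisymm (hne x y) ?_
  have hpos : 0 < orderOf e := orderOf_pos e
  obtain ⟨m, hm⟩ := Nat.exists_eq_succ_of_ne_zero (Nat.pos_iff_ne_zero.mp hpos)
  have hone : e ^ orderOf e = 1 := pow_orderOf_eq_one e
  calc hammingDist x y = hammingDist ((e ^ orderOf e) x) ((e ^ orderOf e) y) := by
        rw [hone]; rfl
    _ = hammingDist ((e ^ m) (e x)) ((e ^ m) (e y)) := by
        rw [hm, pow_succ, Equiv.Perm.mul_apply, Equiv.Perm.mul_apply]
    _ ≤ hammingDist (e x) (e y) := hiter m _ _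
    _ = hammingDist (f x) (f y) := by rw [hef, hef]

/-- zero vector -/
def zV : V → Bool := fun _ => false

lemma dist_zV (x : V → Bool) :
    hammingDist x zV = (Finset.univ.filter (fun i => x i = true)).card := by
  unfold hammingDist zV
  apply congrArg
  apply Finset.filter_congr
  intro i _
  cases hx : x i <;> simp

lemma dist_eV (x : V → Bool) (j : V) :
    (x j = true → hammingDist x (eV j) = hammingDist x zV - 1 ∧ 1 ≤ hammingDist x zV) ∧
    (x j = false → hammingDist x (eV j) = hammingDist x zV + 1) := by
  have hset : (Finset.univ.filter (fun i => x i ≠ eV j i))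
      = if x j = true then (Finset.univ.filter (fun i => x i = true)).erase j
        else insert j (Finset.univ.filter (fun i => x i = true)) := by
    cases hxj : x j
    · rw [if_neg (by decide : ¬(false = true))]
      ext i
      rw [Finset.mem_filter]
      simp only [Finset.mem_filter, Finset.mem_univ, true_and, Finset.mem_insert, eV]
      rcases eq_or_ne i j with rfl | hne
      · simp [hxj]
      · simp [hne]
    · rw [if_pos (rfl : true = true)]
      ext i
      rw [Finset.mem_filter]
      simp only [Finset.mem_filter, Finset.mem_univ, true_and, Finset.mem_erase, eV]
      rcases eq_or_ne i j with rfl | hne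
      · simp [hxj]
      · simp [hne]
  constructor
  · intro hxj
    have hmem : j ∈ Finset.univ.filter (fun i => x i = true) := by simp [hxj]
    have hcardpos : 1 ≤ (Finset.univ.filter (fun i => x i = true)).card :=
      Finset.card_pos.mpr ⟨j, hmem⟩
    constructor
    · rw [dist_zV]
      unfold hammingDist
      rw [hset, if_pos hxj, Finset.card_erase_of_mem hmem]
    · rw [dist_zV]; exact hcardpos
  · intro hxj
    rw [dist_zV]
    unfold hammingDist
    rw [hset, if_neg (by simp [hxj]), Finset.card_insert_of_notMem (by simp [hxj])]

lemma isom_goodForm (hiso : ∀ x y, hammingDist (f x) (f y) = hammingDist x y) :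
    ∃ (σ : Equiv.Perm V) (c : V → Bool), GoodForm f σ c := by
  classical
  set c : V → Bool := f zV with hcdef
  set g : (V → Bool) → (V → Bool) := fun x => fun i => xor (f x i) (c i) with hgdef
  have hgiso : ∀ x y, hammingDist (g x) (g y) = hammingDist x y := by
    intro x y
    rw [← hiso x y]
    unfold hammingDist
    apply congrArg
    apply Finset.filter_congr
    intro i _
    simp only [hgdef]
    cases hf : f x i <;> cases hf' : f y i <;> cases hc : c i <;> simp
  have hg0 : g zV = zV := by
    funext i
    show xor (f zV i) (c i) = zV i
    rw [hcdef]
    cases hfz : f zV i <;> rfl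
  have hgw : ∀ x, hammingDist (g x) zV = hammingDist x zV := by
    intro x
    conv_lhs => rw [← hg0]
    rw [hgiso]
  -- each g (eV j) is a basis vector
  have hbasis : ∀ j : V, ∃ i : V, g (eV j) = eV i := by
    intro j
    have h1 : hammingDist (g (eV j)) zV = 1 := by
      rw [hgw]
      rw [dist_zV]
      have : (Finset.univ.filter (fun i => eV j i = true)) = {j} := by
        ext i; simp [eV]
      rw [this, Finset.card_singleton]
    rw [dist_zV] at h1
    obtain ⟨i, hi⟩ := Finset.card_eq_one.mp h1
    refine ⟨i, ?_⟩
    have hmem : ∀ k, (g (eV j) k = true) ↔ k = i := by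
      intro k
      constructor
      · intro hk
        have hk2 : k ∈ Finset.univ.filter (fun i => g (eV j) i = true) := by simp [hk]
        rw [hi, Finset.mem_singleton] at hk2
        exact hk2
      · rintro rfl
        have : k ∈ ({k} : Finset V) := Finset.mem_singleton_self k
        rw [← hi] at this
        simpa using this
    funext k
    show g (eV j) k = decide (k = i)
    by_cases hki : k = i
    · rw [(hmem k).mpr hki]
      simp [hki]
    · cases hgk : g (eV j) k
      · simp [hki]
      · exact absurd ((hmem k).mp hgk) hki
  choose π hπ using hbasis
  -- main claim : g x (π j) = x j
  have hmain : ∀ (x : V → Bool) (j : V), g x (π j) = x j := by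
    intro x j
    have hd : hammingDist (g x) (eV (π j)) = hammingDist x (eV j) := by
      rw [← hπ j, hgiso]
    have hw := hgw x
    have hl := dist_eV (g x) (π j)
    have hr := dist_eV x j
    cases hx : x j <;> cases hgx : g x (π j)
    · rfl
    · exfalso
      have e1 := hr.2 hx
      have e2 := (hl.1 hgx).1
      have e3 := (hl.1 hgx).2
      rw [hw] at e2 e3
      omega
    · exfalso
      have e1 := (hr.1 hx).1
      have e1' := (hr.1 hx).2
      have e2 := hl.2 hgx
      rw [hw] at e2
      omega
    · rfl
  have hπinj : Function.Injective π := by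
    intro a b hab
    have h1 := hmain (eV a) a
    have h2 := hmain (eV a) b
    rw [hab] at h1
    rw [h1] at h2
    unfold eV at h2
    have h3 : b = a := by simpa using h2.symm
    exact h3.symm
  have hπbij : Function.Bijective π := Finite.injective_iff_bijective.mp hπinj
  set πe : Equiv.Perm V := Equiv.ofBijective π hπbij with hπedef
  refine ⟨πe.symm, c, ?_⟩
  intro x i
  have hpi : π (πe.symm i) = i := by
    have := πe.apply_symm_apply i
    exact this
  have := hmain x (πe.symm i)
  rw [hpi] at this
  simp only [hgdef] at this
  rw [← this]
  cases hf : f x i <;> cases hc : c i <;> rfl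

end S15
/-- `f` is negative-circular (its global interaction graph is a cycle spanning all
vertices with an odd number of negative arcs) iff `f` is odd-self-dual and
non-expansive. -/
theorem stmt_15 {V : Type*} [Fintype V] [DecidableEq V]
    (f : (V → Bool) → (V → Bool)) :
    (∃ (σ : Equiv.Perm V) (s : V → Bool), IsCircularWith f σ s ∧ Odd (negCount s)) ↔
    (IsOddNet f ∧ SelfDual f ∧ NonExpansive f) := by
  constructor
  · rintro ⟨σ, s, hcirc, hodd⟩
    have h : S15.GoodForm f σ s := S15.circular_goodForm hcirc
    have hcyc : S15.Cyclic σ := hcirc.1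
    have hpar := (S15.negCount_odd_iff s).mp hodd
    exact ⟨h.isOddNet hcyc hpar, h.selfDual, h.nonExpansive⟩
  · rintro ⟨hodd, hsd, hnexp⟩
    have hV := S15.oddNet_nonempty hodd
    have hinj := S15.sd_inj hsd hnexp hV
    have hbij := Finite.injective_iff_bijective.mp hinj
    have hiso := S15.nonexp_bij_isom hnexp hbij
    obtain ⟨σ, c, hgf⟩ := S15.isom_goodForm hiso
    obtain ⟨hcyc, hpar⟩ := S15.goodForm_oddNet_cyclic hgf hodd
    exact ⟨σ, c, ⟨hcyc, fun i j => S15.goodForm_pos hgf i j,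
      fun i j => S15.goodForm_neg hgf i j⟩, (S15.negCount_odd_iff c).mpr hpar⟩
end

section
/- If f : {0,1}^V → {0,1}^V is a circular network with permutation σ and constant s, i.e. f(x)_i = x_{σ(i)} ⊕ s_i for all i where σ is a cyclic permutation of V, then f is non-expansive (indeed an isometry for the Hamming distance) and self-dual, and moreover: if s has an even number of ones then the image of f̃(x) = f(x) ⊕ x is exactly the set of even-parity points, while if s has an odd number of ones it is exactly the set of odd-parity points. -/
open Finset
def bz (t : Bool) : ZMod 2 := if t then 1 else 0
lemma bz_xor (a b : Bool) : bz (xor a b) = bz a + bz b := by cases a <;> cases b <;> decide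
lemma bz_eq_zero {a : Bool} : bz a = 0 ↔ a = false := by cases a <;> simp [bz]

lemma key {V : Type*} [Fintype V] [DecidableEq V] (σ : Equiv.Perm V)
    (hσ : ∀ i j : V, ∃ n : ℕ, (σ ^ n) i = j) (g : V → Bool)
    (hg : ∑ i, bz (g i) = 0) :
    ∃ x : V → Bool, ∀ i, xor (x (σ i)) (x i) = g i := by
  cases isEmpty_or_nonempty V with
  | inl h => exact ⟨fun _ => false, fun i => (h.false i).elim⟩
  | inr h =>
  obtain ⟨i₀⟩ := h
  set N := Fintype.card V with hN
  -- minimal index along the cycle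
  let n : V → ℕ := fun j => Nat.find (hσ i₀ j)
  have hn : ∀ j, (σ ^ n j) i₀ = j := fun j => Nat.find_spec (hσ i₀ j)
  have hmin : ∀ j m, (σ ^ m) i₀ = j → n j ≤ m := fun j m hm => Nat.find_min' (hσ i₀ j) hm
  have hinj : Function.Injective n := by
    intro a b hab
    rw [← hn a, ← hn b, hab]
  -- downward closedness
  have hdc : ∀ (j : V) (m : ℕ), m < n j → n ((σ ^ m) i₀) = m := by
    intro j m hm
    have h1 : n ((σ ^ m) i₀) ≤ m := hmin _ m rfl
    rcases lt_or_eq_of_le h1 with h2 | h2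
    · exfalso
      have : (σ ^ (n j - m + n ((σ ^ m) i₀))) i₀ = j := by
        rw [pow_add, Equiv.Perm.mul_apply, hn, ← Equiv.Perm.mul_apply, ← pow_add,
          Nat.sub_add_cancel hm.le, hn]
      have := hmin j _ this
      omega
    · exact h2
  -- n j < N
  have hlt : ∀ j, n j < N := by
    intro j
    have hsub : Finset.range (n j + 1) ⊆ univ.image n := by
      intro m hm
      rw [Finset.mem_range] at hm
      rcases lt_or_eq_of_le (Nat.lt_succ_iff.mp hm) with h2 | h2
      · exact Finset.mem_image.2 ⟨_, mem_univ _, hdc j m h2⟩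
      · exact Finset.mem_image.2 ⟨j, mem_univ _, h2.symm⟩
    have := Finset.card_le_card hsub
    have h3 : (univ.image n).card ≤ N := by
      simpa [hN] using Finset.card_image_le (s := (univ : Finset V)) (f := n)
    simp [Finset.card_range] at this
    omega
  have himage : univ.image n = Finset.range N := by
    apply Finset.eq_of_subset_of_card_le
    · intro m hm
      rw [Finset.mem_image] at hm
      obtain ⟨j, _, rfl⟩ := hm
      exact Finset.mem_range.2 (hlt j)
    · rw [Finset.card_range, Finset.card_image_of_injective _ hinj, hN, Finset.card_univ]
  have hsurj : ∀ m < N, n ((σ ^ m) i₀) = m := by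
    intro m hm
    have : m ∈ univ.image n := by rw [himage]; exact Finset.mem_range.2 hm
    obtain ⟨j, _, hj⟩ := Finset.mem_image.1 this
    rw [← hj, hn]
  -- partial xor-sums
  let X : ℕ → Bool := fun k => Nat.rec false (fun k b => xor b (g ((σ ^ k) i₀))) k
  have hX0 : X 0 = false := rfl
  have hXs : ∀ k, X (k + 1) = xor (X k) (g ((σ ^ k) i₀)) := fun k => rfl
  have hbzX : ∀ k, bz (X k) = ∑ m ∈ Finset.range k, bz (g ((σ ^ m) i₀)) := by
    intro k
    induction k with
    | zero => simp [hX0, bz]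
    | succ k ih => rw [hXs, bz_xor, ih, Finset.sum_range_succ]
  have hXN : X N = false := by
    rw [← bz_eq_zero, hbzX, ← hg]
    apply Finset.sum_nbij' (i := fun m => (σ ^ m) i₀) (j := n)
    · intro m hm; exact mem_univ _
    · intro j _; exact Finset.mem_range.2 (hlt j)
    · intro m hm; exact hsurj m (Finset.mem_range.1 hm)
    · intro j _; exact hn j
    · intro m hm; rfl
  refine ⟨fun j => X (n j), fun j => ?_⟩
  show xor (X (n (σ j))) (X (n j)) = g j
  -- two cases for n (σ j)
  have hle : n (σ j) ≤ n j + 1 := by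
    apply hmin
    rw [pow_succ', Equiv.Perm.mul_apply, hn]
  rcases Nat.eq_zero_or_eq_succ_pred (n (σ j)) with h0 | hsucc
  · -- σ j = i₀, n j = N - 1
    have hji : σ j = i₀ := by
      have := hn (σ j); rw [h0] at this; simpa using this.symm
    have hjN : n j + 1 = N := by
      by_contra hne
      have h2 : n j + 1 < N := lt_of_le_of_ne (hlt j) hne
      have := hsurj (n j + 1) h2
      rw [pow_succ', Equiv.Perm.mul_apply, hn, hji] at this
      have h3 : n i₀ = 0 := hsurj 0 (by omega)
      omega
    have : X N = xor (X (n j)) (g j) := by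
      rw [← hjN, hXs, hn]
    rw [hXN] at this
    rw [h0, hX0]
    cases hXj : X (n j) <;> cases hgj : g j <;> rw [hXj, hgj] at this
    · rfl
    · exact absurd this (by decide)
    · exact absurd this (by decide)
    · rfl
  · have heq : n (σ j) = n j + 1 := by
      obtain ⟨m, hm⟩ : ∃ m, n (σ j) = m + 1 := ⟨n (σ j) - 1, by omega⟩
      have : (σ ^ m) i₀ = j := by
        have := hn (σ j)
        rw [hm, pow_succ', Equiv.Perm.mul_apply] at this
        exact σ.injective this
      have := hmin j m this
      omega
    rw [heq, hXs, hn]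
    cases hXj : X (n j) <;> cases hgj : g j <;> simp

lemma evenPt_iff {V : Type*} [Fintype V] [DecidableEq V] (y : V → Bool) :
    EvenPt y ↔ ∑ i, bz (y i) = 0 := by
  have h : ∑ i, bz (y i) = ((Finset.univ.filter (fun i => y i = true)).card : ZMod 2) := by
    rw [Finset.card_filter, Nat.cast_sum]
    refine Finset.sum_congr rfl fun i _ => ?_
    cases h : y i <;> simp [bz]
  rw [EvenPt, h, ZMod.natCast_eq_zero_iff, even_iff_two_dvd]

/-- A circular network `f(x)_i = x_{σ(i)} ⊕ s_i` (with `σ` a single cycle on all of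
`V`) is an isometry for the Hamming distance (in particular non-expansive), is
self-dual, and the image of its conjugate is exactly the even-parity points if `s`
has an even number of ones, and exactly the odd-parity points otherwise. -/
theorem stmt_16 {V : Type*} [Fintype V] [DecidableEq V]
    (σ : Equiv.Perm V) (s : V → Bool)
    (hσ : ∀ i j : V, ∃ n : ℕ, (σ ^ n) i = j)
    (f : (V → Bool) → (V → Bool))
    (hf : ∀ x i, f x i = xor (x (σ i)) (s i)) :
    (∀ x y : V → Bool, hammingDist (f x) (f y) = hammingDist x y) ∧
    SelfDual f ∧
    (Even (negCount s) → Set.range (conjNet f) = {x : V → Bool | EvenPt x}) ∧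
    (Odd (negCount s) → Set.range (conjNet f) = {x : V → Bool | ¬ EvenPt x}) := by
  have hconj : ∀ (x : V → Bool) i, conjNet f x i = xor (xor (x (σ i)) (x i)) (s i) := by
    intro x i
    show xor (f x i) (x i) = _
    rw [hf]
    cases x (σ i) <;> cases x i <;> cases s i <;> rfl
  have hsum : ∀ x : V → Bool, ∑ i, bz (conjNet f x i) = ∑ i, bz (s i) := by
    intro x
    have h1 : ∑ i, bz (x (σ i)) = ∑ i, bz (x i) :=
      Fintype.sum_equiv σ _ _ (fun i => rfl)
    have h2 : ∑ i, bz (conjNet f x i)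
        = ∑ i, bz (x (σ i)) + ∑ i, bz (x i) + ∑ i, bz (s i) := by
      rw [← Finset.sum_add_distrib, ← Finset.sum_add_distrib]
      refine Finset.sum_congr rfl fun i _ => ?_
      rw [hconj, bz_xor, bz_xor]
    rw [h2, h1]
    have h3 : ∀ a : ZMod 2, a + a = 0 := by decide
    rw [h3, zero_add]
  have hinv : ∀ {y : V → Bool}, (∑ i, bz (xor (y i) (s i)) = 0) →
      ∃ x, conjNet f x = y := by
    intro y hy
    obtain ⟨x, hx⟩ := key σ hσ (fun i => xor (y i) (s i)) hy
    refine ⟨x, funext fun i => ?_⟩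
    rw [hconj, hx i]
    cases y i <;> cases s i <;> rfl
  refine ⟨?_, ?_, ?_, ?_⟩
  · -- isometry
    intro x y
    show (Finset.univ.filter fun i => f x i ≠ f y i).card
        = (Finset.univ.filter fun i => x i ≠ y i).card
    apply Finset.card_bij' (fun i _ => σ i) (fun i _ => σ⁻¹ i)
    · intro i hi
      simp only [Finset.mem_filter, Finset.mem_univ, true_and] at hi ⊢
      rw [hf, hf] at hi
      intro hc; apply hi; rw [hc]
    · intro i hi
      simp only [Finset.mem_filter, Finset.mem_univ, true_and] at hi ⊢
      rw [hf, hf]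
      intro hc
      apply hi
      have : σ (σ⁻¹ i) = i := σ.apply_symm_apply i
      cases x (σ (σ⁻¹ i)) <;> cases y (σ (σ⁻¹ i)) <;> cases s (σ⁻¹ i) <;>
        simp_all
    · intro i _; exact σ.symm_apply_apply i
    · intro i _; exact σ.apply_symm_apply i
  · -- self-dual
    intro x
    funext i
    rw [hf]
    show xor (!(x (σ i))) (s i) = !(f x i)
    rw [hf]
    cases x (σ i) <;> cases s i <;> rfl
  · -- even case
    intro hev
    have hs0 : ∑ i, bz (s i) = 0 := (evenPt_iff s).1 hev
    ext y
    simp only [Set.mem_range, Set.mem_setOf_eq]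
    constructor
    · rintro ⟨x, rfl⟩
      rw [evenPt_iff, hsum, hs0]
    · intro hy
      have hy0 : ∑ i, bz (y i) = 0 := (evenPt_iff y).1 hy
      apply hinv
      have : ∑ i, bz (xor (y i) (s i)) = ∑ i, bz (y i) + ∑ i, bz (s i) := by
        rw [← Finset.sum_add_distrib]
        exact Finset.sum_congr rfl fun i _ => bz_xor _ _
      rw [this, hy0, hs0, zero_add]
  · -- odd case
    intro hodd
    have hs1 : ∑ i, bz (s i) = 1 := by
      have h0 : ¬ (∑ i, bz (s i) = 0) := fun hc =>
        (Nat.not_even_iff_odd.mpr hodd) ((evenPt_iff s).2 hc)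
      have : ∀ a : ZMod 2, a ≠ 0 → a = 1 := by decide
      exact this _ h0
    ext y
    simp only [Set.mem_range, Set.mem_setOf_eq]
    constructor
    · rintro ⟨x, rfl⟩
      rw [evenPt_iff, hsum, hs1]
      exact one_ne_zero
    · intro hy
      have hy1 : ∑ i, bz (y i) = 1 := by
        have h0 : ¬ (∑ i, bz (y i) = 0) := fun hc => hy ((evenPt_iff y).2 hc)
        have : ∀ a : ZMod 2, a ≠ 0 → a = 1 := by decide
        exact this _ h0
      apply hinv
      have : ∑ i, bz (xor (y i) (s i)) = ∑ i, bz (y i) + ∑ i, bz (s i) := by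
        rw [← Finset.sum_add_distrib]
        exact Finset.sum_congr rfl fun i _ => bz_xor _ _
      rw [this, hy1, hs1]
      decide
end

section
/- If f : {0,1}^V → {0,1}^V is non-expansive and 2-critical (f has at least two fixed points but every strict subnetwork of f has at most one fixed point), then the global interaction graph of f is a positive cycle spanning all of V. -/
open Finset
set_option linter.unusedSectionVars false
set_option maxHeartbeats 1000000

section Aux
variable {V : Type*} [Fintype V] [DecidableEq V]

private def bn (b : Bool) : ℕ := if b then 1 else 0

private def cnt (x : V → Bool) : ℕ := ∑ i, bn (x i)

private lemma ham_sum (x y : V → Bool) :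
    hammingDist x y = ∑ i, bn (xor (x i) (y i)) := by
  rw [hammingDist, Finset.card_filter]
  refine Finset.sum_congr rfl fun i _ => ?_
  cases h1 : x i <;> cases h2 : y i <;> simp [bn]

private def unit (j : V) : V → Bool := fun i => if i = j then true else false

private def counit (j : V) : V → Bool := fun i => !(unit j i)

private lemma cnt_unit (j : V) : cnt (unit j) = 1 := by
  unfold cnt unit bn
  rw [Finset.sum_congr rfl (g := fun i => if i = j then 1 else 0)
    (fun i _ => by split <;> simp_all)]
  simp

private lemma cnt_one (u : V → Bool) (h : cnt u = 1) : ∃ m, u = unit m := by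
  have hm : ∃ m, u m = true := by
    by_contra hc
    push_neg at hc
    have h0 : cnt u = 0 := Finset.sum_eq_zero fun i _ => by
      have h2 : u i = false := by
        cases h3 : u i
        · rfl
        · exact absurd h3 (hc i)
      simp [bn, h2]
    omega
  obtain ⟨m, hm⟩ := hm
  have hsplit : (∑ i ∈ univ.erase m, bn (u i)) + bn (u m) = ∑ i, bn (u i) :=
    Finset.sum_erase_add univ _ (mem_univ m)
  have h0 : ∑ i ∈ univ.erase m, bn (u i) = 0 := by
    have hb : bn (u m) = 1 := by simp [bn, hm]
    unfold cnt at h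
    omega
  refine ⟨m, funext fun i => ?_⟩
  by_cases hi : i = m
  · subst hi; simp [unit, hm]
  · have h1 := Finset.sum_eq_zero_iff.mp h0 i (by simp [hi])
    have h2 : u i = false := by
      cases h3 : u i
      · rfl
      · rw [h3] at h1; exact absurd h1 (by simp [bn])
    simp [unit, hi, h2]

private lemma cnt_not (u : V → Bool) : cnt u + cnt (fun i => !(u i)) = Fintype.card V := by
  unfold cnt
  rw [← Finset.sum_add_distrib]
  rw [Finset.sum_congr rfl (g := fun _ => 1) (fun i _ => by cases h : u i <;> simp [bn, h])]
  simp

end Aux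

section Key
variable {V : Type*} [Fintype V] [DecidableEq V]
variable (g : (V → Bool) → (V → Bool))

private lemma mono1 (hgne : ∀ x y, hammingDist (g x) (g y) ≤ hammingDist x y)
    (hgcnt : ∀ x, cnt (g x) = cnt x) {j m : V} (hu : g (unit j) = unit m)
    (x : V → Bool) (hx : x j = true) : g x m = true := by
  have hd := hgne x (unit j)
  rw [hu, ham_sum, ham_sum] at hd
  have e1 : (∑ i ∈ univ.erase j, bn (xor (x i) (unit j i))) + bn (xor (x j) (unit j j))
      = ∑ i, bn (xor (x i) (unit j i)) := Finset.sum_erase_add univ _ (mem_univ j)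
  have e1' : ∑ i ∈ univ.erase j, bn (xor (x i) (unit j i))
      = ∑ i ∈ univ.erase j, bn (x i) :=
    Finset.sum_congr rfl fun i hi => by
      have h := (Finset.mem_erase.mp hi).1
      simp [unit, h]
  have e1j : bn (xor (x j) (unit j j)) = 1 - bn (x j) := by
    simp [unit, hx, bn]
  have e2 : (∑ i ∈ univ.erase m, bn (xor (g x i) (unit m i))) + bn (xor (g x m) (unit m m))
      = ∑ i, bn (xor (g x i) (unit m i)) := Finset.sum_erase_add univ _ (mem_univ m)
  have e2' : ∑ i ∈ univ.erase m, bn (xor (g x i) (unit m i))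
      = ∑ i ∈ univ.erase m, bn (g x i) :=
    Finset.sum_congr rfl fun i hi => by
      have h := (Finset.mem_erase.mp hi).1
      simp [unit, h]
  have c1 : (∑ i ∈ univ.erase j, bn (x i)) + bn (x j) = ∑ i, bn (x i) :=
    Finset.sum_erase_add univ _ (mem_univ j)
  have c2 : (∑ i ∈ univ.erase m, bn (g x i)) + bn (g x m) = ∑ i, bn (g x i) :=
    Finset.sum_erase_add univ _ (mem_univ m)
  have hc : ∑ i, bn (g x i) = ∑ i, bn (x i) := hgcnt x
  have hxj : bn (x j) = 1 := by simp [bn, hx]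
  cases hgm : g x m
  · exfalso
    have hb1 : bn (xor (g x m) (unit m m)) = 1 := by simp [unit, hgm, bn]
    have hb2 : bn (g x m) = 0 := by simp [bn, hgm]
    omega
  · rfl

private lemma mono0 (hgne : ∀ x y, hammingDist (g x) (g y) ≤ hammingDist x y)
    (hgcnt : ∀ x, cnt (g x) = cnt x) {j m : V} (hu : g (counit j) = counit m)
    (x : V → Bool) (hx : x j = false) : g x m = false := by
  have hd := hgne x (counit j)
  rw [hu, ham_sum, ham_sum] at hd
  have e1 : (∑ i ∈ univ.erase j, bn (xor (x i) (counit j i))) + bn (xor (x j) (counit j j))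
      = ∑ i, bn (xor (x i) (counit j i)) := Finset.sum_erase_add univ _ (mem_univ j)
  have e1' : ∑ i ∈ univ.erase j, bn (xor (x i) (counit j i))
      = ∑ i ∈ univ.erase j, bn (!(x i)) :=
    Finset.sum_congr rfl fun i hi => by
      have h := (Finset.mem_erase.mp hi).1
      simp [counit, unit, h]
  have e1j : bn (xor (x j) (counit j j)) = 0 := by
    simp [counit, unit, hx, bn]
  have e2 : (∑ i ∈ univ.erase m, bn (xor (g x i) (counit m i))) + bn (xor (g x m) (counit m m))
      = ∑ i, bn (xor (g x i) (counit m i)) := Finset.sum_erase_add univ _ (mem_univ m)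
  have e2' : ∑ i ∈ univ.erase m, bn (xor (g x i) (counit m i))
      = ∑ i ∈ univ.erase m, bn (!(g x i)) :=
    Finset.sum_congr rfl fun i hi => by
      have h := (Finset.mem_erase.mp hi).1
      simp [counit, unit, h]
  have e2m : bn (xor (g x m) (counit m m)) = bn (g x m) := by
    simp [counit, unit]
  have c1 : (∑ i ∈ univ.erase j, bn (x i)) + bn (x j) = ∑ i, bn (x i) :=
    Finset.sum_erase_add univ _ (mem_univ j)
  have c2 : (∑ i ∈ univ.erase m, bn (g x i)) + bn (g x m) = ∑ i, bn (g x i) :=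
    Finset.sum_erase_add univ _ (mem_univ m)
  have t1 : (∑ i ∈ univ.erase j, bn (x i)) + (∑ i ∈ univ.erase j, bn (!(x i)))
      = (univ.erase j).card := by
    rw [← Finset.sum_add_distrib]
    rw [Finset.sum_congr rfl (g := fun _ => 1) (fun i _ => by cases h : x i <;> simp [bn, h])]
    simp
  have t2 : (∑ i ∈ univ.erase m, bn (g x i)) + (∑ i ∈ univ.erase m, bn (!(g x i)))
      = (univ.erase m).card := by
    rw [← Finset.sum_add_distrib]
    rw [Finset.sum_congr rfl (g := fun _ => 1) (fun i _ => by cases h : g x i <;> simp [bn, h])]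
    simp
  have hcard1 : (univ.erase j).card = Fintype.card V - 1 := by
    rw [Finset.card_erase_of_mem (mem_univ j)]; simp
  have hcard2 : (univ.erase m).card = Fintype.card V - 1 := by
    rw [Finset.card_erase_of_mem (mem_univ m)]; simp
  have hcard3 : 1 ≤ Fintype.card V := Fintype.card_pos_iff.mpr ⟨j⟩
  have hc : ∑ i, bn (g x i) = ∑ i, bn (x i) := hgcnt x
  have hxj : bn (x j) = 0 := by simp [bn, hx]
  cases hgm : g x m
  · rfl
  · exfalso
    have hb2 : bn (g x m) = 1 := by simp [bn, hgm]
    omega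

private lemma fix_of_le (hgcnt : ∀ x, cnt (g x) = cnt x) (y : V → Bool)
    (h : ∀ i, y i = true → g y i = true) : g y = y := by
  have hle : ∀ i ∈ univ, bn (y i) ≤ bn (g y i) := fun i _ => by
    cases hyi : y i
    · simp [bn]
    · rw [h i hyi]
  have heq : ∀ i ∈ univ, bn (y i) = bn (g y i) := by
    by_contra hc
    push_neg at hc
    obtain ⟨i, hi, hne2⟩ := hc
    have hlt := Finset.sum_lt_sum hle ⟨i, hi, lt_of_le_of_ne (hle i hi) hne2⟩
    have h2 : ∑ i, bn (g y i) = ∑ i, bn (y i) := hgcnt y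
    omega
  funext i
  have h3 := heq i (mem_univ i)
  cases h1 : y i <;> cases h2 : g y i <;> simp_all [bn]

private lemma fix_of_ge (hgcnt : ∀ x, cnt (g x) = cnt x) (y : V → Bool)
    (h : ∀ i, y i = false → g y i = false) : g y = y := by
  have hle : ∀ i ∈ univ, bn (g y i) ≤ bn (y i) := fun i _ => by
    cases hyi : y i
    · rw [h i hyi]
    · cases hg : g y i <;> simp [bn, hg]
  have heq : ∀ i ∈ univ, bn (g y i) = bn (y i) := by
    by_contra hc
    push_neg at hc
    obtain ⟨i, hi, hne2⟩ := hc
    have hlt := Finset.sum_lt_sum hle ⟨i, hi, lt_of_le_of_ne (hle i hi) hne2⟩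
    have h2 : ∑ i, bn (g y i) = ∑ i, bn (y i) := hgcnt y
    omega
  funext i
  have h3 := heq i (mem_univ i)
  cases h1 : y i <;> cases h2 : g y i <;> simp_all [bn]
end Key
section Key2
variable {V : Type*} [Fintype V] [DecidableEq V]
variable (g : (V → Bool) → (V → Bool))

private lemma surj_pi (hgcnt : ∀ x, cnt (g x) = cnt x) (π : V → V)
    (hmono : ∀ (x : V → Bool) (j : V), x j = true → g x (π j) = true)
    (hfixg : ∀ y, g y = y → y = (fun _ => false) ∨ y = (fun _ => true)) :
    Function.Surjective π := by
  classical
  by_contra hs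
  unfold Function.Surjective at hs
  push_neg at hs
  obtain ⟨i₀, hi₀⟩ := hs
  set T : ℕ → Finset V := fun k => univ.image (π^[k]) with hT
  have hsub : ∀ k, T (k+1) ⊆ T k := by
    intro k x hx
    rw [hT] at hx ⊢
    obtain ⟨v, _, hv⟩ := Finset.mem_image.mp hx
    exact Finset.mem_image.mpr ⟨π v, mem_univ _, by rw [← hv, Function.iterate_succ_apply]⟩
  have hstab : ∃ k, 1 ≤ k ∧ T (k+1) = T k := by
    by_contra hc
    push_neg at hc
    have hstrict : ∀ k, 1 ≤ k → (T (k+1)).card < (T k).card := fun k hk =>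
      Finset.card_lt_card (Finset.ssubset_iff_subset_ne.mpr ⟨hsub k, hc k hk⟩)
    have hdesc : ∀ m, (T (1+m)).card + m ≤ (T 1).card := by
      intro m
      induction m with
      | zero => simp
      | succ p ih =>
        have h1 := hstrict (1+p) (by omega)
        have h2 : (1 + (p+1)) = (1 + p) + 1 := by omega
        rw [h2]
        omega
    have := hdesc ((T 1).card + 1)
    omega
  obtain ⟨k, hk1, hkeq⟩ := hstab
  have himg : (T k).image π = T k := by
    rw [hT]
    simp only
    rw [Finset.image_image]
    have hcomp : π ∘ (π^[k]) = π^[k+1] := by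
      funext v
      exact (Function.iterate_succ_apply' π k v).symm
    rw [hcomp]
    rw [hT] at hkeq
    exact hkeq
  have hne : (T k).Nonempty := ⟨π^[k] i₀, by rw [hT]; exact Finset.mem_image.mpr ⟨i₀, mem_univ _, rfl⟩⟩
  have hi₀T : i₀ ∉ T k := by
    intro hmem
    rw [← himg] at hmem
    obtain ⟨j, _, hj⟩ := Finset.mem_image.mp hmem
    exact hi₀ j hj
  set y : V → Bool := fun v => if v ∈ T k then true else false with hy
  have hfixy : g y = y := by
    apply fix_of_le g hgcnt y
    intro i hi
    have hiT : i ∈ T k := by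
      by_contra h'
      rw [hy] at hi
      simp only [h', if_false] at hi
      exact Bool.noConfusion hi
    rw [← himg] at hiT
    obtain ⟨j, hjT, hj⟩ := Finset.mem_image.mp hiT
    have hyj : y j = true := by rw [hy]; simp [hjT]
    have := hmono y j hyj
    rwa [hj] at this
  rcases hfixg y hfixy with h | h
  · obtain ⟨w, hw⟩ := hne
    have h1 : y w = true := by rw [hy]; simp [hw]
    rw [h] at h1
    exact Bool.noConfusion h1
  · have h1 : y i₀ = true := by rw [h]
    rw [hy] at h1
    simp only [hi₀T, if_false] at h1
    exact Bool.noConfusion h1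

private lemma surj_rho (hgcnt : ∀ x, cnt (g x) = cnt x) (ρ : V → V)
    (hmono : ∀ (x : V → Bool) (j : V), x j = false → g x (ρ j) = false)
    (hfixg : ∀ y, g y = y → y = (fun _ => false) ∨ y = (fun _ => true)) :
    Function.Surjective ρ := by
  classical
  by_contra hs
  unfold Function.Surjective at hs
  push_neg at hs
  obtain ⟨i₀, hi₀⟩ := hs
  set T : ℕ → Finset V := fun k => univ.image (ρ^[k]) with hT
  have hsub : ∀ k, T (k+1) ⊆ T k := by
    intro k x hx
    rw [hT] at hx ⊢
    obtain ⟨v, _, hv⟩ := Finset.mem_image.mp hx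
    exact Finset.mem_image.mpr ⟨ρ v, mem_univ _, by rw [← hv, Function.iterate_succ_apply]⟩
  have hstab : ∃ k, 1 ≤ k ∧ T (k+1) = T k := by
    by_contra hc
    push_neg at hc
    have hstrict : ∀ k, 1 ≤ k → (T (k+1)).card < (T k).card := fun k hk =>
      Finset.card_lt_card (Finset.ssubset_iff_subset_ne.mpr ⟨hsub k, hc k hk⟩)
    have hdesc : ∀ m, (T (1+m)).card + m ≤ (T 1).card := by
      intro m
      induction m with
      | zero => simp
      | succ p ih =>
        have h1 := hstrict (1+p) (by omega)
        have h2 : (1 + (p+1)) = (1 + p) + 1 := by omega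
        rw [h2]
        omega
    have := hdesc ((T 1).card + 1)
    omega
  obtain ⟨k, hk1, hkeq⟩ := hstab
  have himg : (T k).image ρ = T k := by
    rw [hT]
    simp only
    rw [Finset.image_image]
    have hcomp : ρ ∘ (ρ^[k]) = ρ^[k+1] := by
      funext v
      exact (Function.iterate_succ_apply' ρ k v).symm
    rw [hcomp]
    rw [hT] at hkeq
    exact hkeq
  have hne : (T k).Nonempty := ⟨ρ^[k] i₀, by rw [hT]; exact Finset.mem_image.mpr ⟨i₀, mem_univ _, rfl⟩⟩
  have hi₀T : i₀ ∉ T k := by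
    intro hmem
    rw [← himg] at hmem
    obtain ⟨j, _, hj⟩ := Finset.mem_image.mp hmem
    exact hi₀ j hj
  set y : V → Bool := fun v => if v ∈ T k then false else true with hy
  have hfixy : g y = y := by
    apply fix_of_ge g hgcnt y
    intro i hi
    have hiT : i ∈ T k := by
      by_contra h'
      rw [hy] at hi
      simp only [h', if_false] at hi
      exact Bool.noConfusion hi
    rw [← himg] at hiT
    obtain ⟨j, hjT, hj⟩ := Finset.mem_image.mp hiT
    have hyj : y j = false := by rw [hy]; simp [hjT]
    have := hmono y j hyj
    rwa [hj] at this
  rcases hfixg y hfixy with h | h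
  · have h1 : y i₀ = false := by rw [h]
    rw [hy] at h1
    simp only [hi₀T, if_false] at h1
    exact Bool.noConfusion h1
  · obtain ⟨w, hw⟩ := hne
    have h1 : y w = false := by rw [hy]; simp [hw]
    rw [h] at h1
    exact Bool.noConfusion h1

private lemma key_s17 (hgne : ∀ x y, hammingDist (g x) (g y) ≤ hammingDist x y)
    (hgcnt : ∀ x, cnt (g x) = cnt x)
    (hfixg : ∀ y, g y = y → y = (fun _ => false) ∨ y = (fun _ => true)) :
    ∃ σ : Equiv.Perm V, ∀ x i, g x i = x (σ i) := by
  classical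
  have hπe : ∀ j : V, ∃ m, g (unit j) = unit m := fun j => by
    apply cnt_one
    rw [hgcnt, cnt_unit]
  choose π hπ using hπe
  have hρe : ∀ j : V, ∃ m, g (counit j) = counit m := fun j => by
    have ha := cnt_not (g (counit j))
    have hb := cnt_not (unit j)
    have hb' : cnt (unit j) = 1 := cnt_unit j
    have hc := hgcnt (counit j)
    have h1 : cnt (fun i => !(g (counit j) i)) = 1 := by
      have : cnt (counit j) = cnt (fun i => !(unit j i)) := rfl
      omega
    obtain ⟨m, hm⟩ := cnt_one _ h1
    refine ⟨m, funext fun i => ?_⟩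
    have h2 := congrFun hm i
    show g (counit j) i = !(unit m i)
    rw [← h2, Bool.not_not]
  choose ρ hρ using hρe
  have hm1 : ∀ (x : V → Bool) (j), x j = true → g x (π j) = true :=
    fun x j hx => mono1 g hgne hgcnt (hπ j) x hx
  have hm0 : ∀ (x : V → Bool) (j), x j = false → g x (ρ j) = false :=
    fun x j hx => mono0 g hgne hgcnt (hρ j) x hx
  have hπs : Function.Surjective π := surj_pi g hgcnt π hm1 hfixg
  have hρs : Function.Surjective ρ := surj_rho g hgcnt ρ hm0 hfixg
  have hπi : Function.Injective π := Finite.injective_iff_surjective.mpr hπs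
  obtain ⟨πe, hπe'⟩ : ∃ e : V ≃ V, ∀ v, e v = π v :=
    ⟨Equiv.ofBijective π ⟨hπi, hπs⟩, fun v => rfl⟩
  refine ⟨πe.symm, fun x i => ?_⟩
  set j := πe.symm i with hj
  have hji : π j = i := by
    rw [← hπe' j, hj]
    exact πe.apply_symm_apply i
  obtain ⟨j', hj'⟩ := hρs i
  have hjj : j' = j := by
    by_contra hne2
    have h1 : g (unit j) i = true := by
      rw [← hji]
      exact hm1 (unit j) j (by simp [unit])
    have h2 : g (unit j) i = false := by
      rw [← hj']
      exact hm0 (unit j) j' (by simp [unit, hne2])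
    rw [h1] at h2
    exact Bool.noConfusion h2
  show g x i = x j
  cases hx : x j
  · rw [← hj']
    exact hm0 x j' (by rw [hjj]; exact hx)
  · rw [← hji]
    exact hm1 x j hx

private lemma cycle_trans (σ : Equiv.Perm V)
    (hσ : ∀ x i, g x i = x (σ i))
    (hfixg : ∀ y, g y = y → y = (fun _ => false) ∨ y = (fun _ => true)) :
    ∀ i j : V, ∃ n : ℕ, (σ ^ n) i = j := by
  classical
  intro i j
  by_contra hno
  push_neg at hno
  obtain ⟨m1, m2, hne12, heq12⟩ := Finite.exists_ne_map_eq_of_infinite (fun m : ℕ => (σ ^ m) i)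
  have heq12' : (σ ^ m1) i = (σ ^ m2) i := heq12
  have hr : ∃ r, 1 ≤ r ∧ (σ ^ r) i = i := by
    rcases Nat.lt_or_ge m1 m2 with h | h
    · refine ⟨m2 - m1, by omega, ?_⟩
      have h1 : (σ ^ (m1 + (m2 - m1))) i = (σ ^ m1) i := by
        rw [Nat.add_sub_cancel' (le_of_lt h)]
        exact heq12'.symm
      rw [pow_add, Equiv.Perm.mul_apply] at h1
      exact (σ ^ m1).injective h1
    · have h' : m2 < m1 := by omega
      refine ⟨m1 - m2, by omega, ?_⟩
      have h1 : (σ ^ (m2 + (m1 - m2))) i = (σ ^ m2) i := by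
        rw [Nat.add_sub_cancel' (le_of_lt h')]
        exact heq12'
      rw [pow_add, Equiv.Perm.mul_apply] at h1
      exact (σ ^ m2).injective h1
  obtain ⟨r, hr1, hrfix⟩ := hr
  set y : V → Bool := fun v => if (∃ m : ℕ, (σ ^ m) i = v) then true else false with hy
  have hyfix : g y = y := by
    funext v
    rw [hσ y v]
    show (if (∃ m : ℕ, (σ ^ m) i = σ v) then true else false)
        = (if (∃ m : ℕ, (σ ^ m) i = v) then true else false)
    by_cases hv : ∃ m : ℕ, (σ ^ m) i = v
    · obtain ⟨m, hm⟩ := hv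
      have h1 : ∃ m' : ℕ, (σ ^ m') i = σ v :=
        ⟨m + 1, by rw [pow_succ', Equiv.Perm.mul_apply, hm]⟩
      rw [if_pos h1, if_pos ⟨m, hm⟩]
    · have h2 : ¬ ∃ m' : ℕ, (σ ^ m') i = σ v := by
        rintro ⟨m', hm'⟩
        apply hv
        refine ⟨m' + r - 1, ?_⟩
        have h3 : (σ ^ (m' + r)) i = σ v := by
          rw [pow_add, Equiv.Perm.mul_apply, hrfix]
          exact hm'
        have hrw : m' + r = (m' + r - 1) + 1 := by omega
        rw [hrw, pow_succ', Equiv.Perm.mul_apply] at h3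
        exact σ.injective h3
      rw [if_neg h2, if_neg hv]
  rcases hfixg y hyfix with h | h
  · have h1 : y i = true := by
      rw [hy]
      simp only
      rw [if_pos ⟨0, rfl⟩]
    rw [h] at h1
    exact Bool.noConfusion h1
  · have h1 : y j = true := by rw [h]
    rw [hy] at h1
    simp only at h1
    by_cases hex : ∃ m : ℕ, (σ ^ m) i = j
    · obtain ⟨m, hm⟩ := hex
      exact hno m hm
    · rw [if_neg hex] at h1
      exact Bool.noConfusion h1
end Key2
section Main
variable {V : Type*} [Fintype V] [DecidableEq V]

private lemma bn_xor_xor (c p q : Bool) : bn (xor (xor c p) (xor c q)) = bn (xor p q) := by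
  cases c <;> cases p <;> cases q <;> rfl

theorem stmt_17' {V : Type*} [Fintype V] [DecidableEq V]
    (f : (V → Bool) → (V → Bool))
    (hne : ∀ x y : V → Bool, hammingDist (f x) (f y) ≤ hammingDist x y)
    (hfix : ∃ a b : V → Bool, a ≠ b ∧ f a = a ∧ f b = b)
    (hcrit : ∀ (I : Finset V) (z : {i // i ∉ I} → Bool)
      (h : ({i // i ∈ I} → Bool) → ({i // i ∈ I} → Bool)),
      (I.Nonempty ∧ ∀ y : {i // i ∈ I} → Bool,
        h y = fun j => f (fun v => if hv : v ∈ I then y ⟨v, hv⟩ else z ⟨v, hv⟩) j.1) →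
      I ≠ Finset.univ →
      ∀ a b : {i // i ∈ I} → Bool, h a = a → h b = b → a = b) :
    ∃ (σ : Equiv.Perm V) (s : V → Bool),
      ((∀ i j : V, ∃ n : ℕ, (σ ^ n) i = j) ∧
       (∀ i j : V, (∃ x, f (Function.update x j true) i = true ∧
          f (Function.update x j false) i = false) ↔ (j = σ i ∧ s i = false)) ∧
       (∀ i j : V, (∃ x, f (Function.update x j true) i = false ∧
          f (Function.update x j false) i = true) ↔ (j = σ i ∧ s i = true))) ∧
      Even ((Finset.univ.filter (fun i => s i = true)).card) := by
  classical
  obtain ⟨a, b, hab, hfa, hfb⟩ := hfix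
  -- two distinct fixed points differ everywhere
  have hdiff : ∀ x y : V → Bool, f x = x → f y = y → x ≠ y → ∀ v, x v ≠ y v := by
    intro x y hx hy hxy v hv
    set I : Finset V := univ.filter (fun w => x w ≠ y w) with hI
    have hIne : I.Nonempty := by
      obtain ⟨w, hw⟩ := Function.ne_iff.mp hxy
      exact ⟨w, by rw [hI]; simp [hw]⟩
    have hInu : I ≠ univ := by
      intro h
      have hvm : v ∈ I := h ▸ mem_univ v
      rw [hI] at hvm
      simp at hvm
      exact hvm hv
    set z : {i // i ∉ I} → Bool := fun i => x i.1 with hz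
    set h : ({i // i ∈ I} → Bool) → ({i // i ∈ I} → Bool) :=
      fun y' j => f (fun w => if hw : w ∈ I then y' ⟨w, hw⟩ else z ⟨w, hw⟩) j.1 with hh
    have hgx : (fun w => if hw : w ∈ I then x w else z ⟨w, hw⟩) = x := by
      funext w; split <;> rfl
    have hgy : (fun w => if hw : w ∈ I then y w else z ⟨w, hw⟩) = y := by
      funext w
      by_cases hw : w ∈ I
      · simp [hw]
      · have hxyw : x w = y w := by
          rw [hI] at hw
          simp at hw
          exact hw
        simp [hw, hz, hxyw]
    have hx' : h (fun j => x j.1) = (fun j => x j.1) := by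
      funext j
      show f (fun w => if hw : w ∈ I then x w else z ⟨w, hw⟩) j.1 = x j.1
      rw [hgx, hx]
    have hy' : h (fun j => y j.1) = (fun j => y j.1) := by
      funext j
      show f (fun w => if hw : w ∈ I then y w else z ⟨w, hw⟩) j.1 = y j.1
      rw [hgy, hy]
    have heq := hcrit I z h ⟨hIne, fun _ => rfl⟩ hInu (fun j => x j.1) (fun j => y j.1) hx' hy'
    obtain ⟨w, hw⟩ := hIne
    have hxw : x w ≠ y w := by
      rw [hI] at hw
      simpa using hw
    exact hxw (congrFun heq ⟨w, hw⟩)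
  have hb : b = fun i => !(a i) := by
    funext i
    have h1 := hdiff a b hfa hfb hab i
    cases h2 : a i <;> cases h3 : b i <;> simp_all
  have hfixcls : ∀ c, f c = c → c = a ∨ c = b := by
    intro c hc
    by_cases h1 : c = a
    · exact Or.inl h1
    · right
      have h2 := hdiff c a hc hfa h1
      rw [hb]
      funext i
      have h3 := h2 i
      cases h4 : a i <;> cases h5 : c i <;> simp_all
  have hsumab : ∀ w : V → Bool, hammingDist a w + hammingDist b w = Fintype.card V := by
    intro w
    rw [ham_sum, ham_sum, ← Finset.sum_add_distrib]
    rw [Finset.sum_congr rfl (g := fun _ => 1) (fun i _ => by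
      rw [hb]; cases h1 : a i <;> cases h2 : w i <;> simp [bn, h1, h2])]
    simp
  have hda : ∀ u, hammingDist a (f u) = hammingDist a u := by
    intro u
    have h1 : hammingDist a (f u) ≤ hammingDist a u := by
      have h := hne a u; rwa [hfa] at h
    have h2 : hammingDist b (f u) ≤ hammingDist b u := by
      have h := hne b u; rwa [hfb] at h
    have h3 := hsumab u
    have h4 := hsumab (f u)
    omega
  set g : (V → Bool) → (V → Bool) :=
    fun x i => xor (a i) (f (fun v => xor (a v) (x v)) i) with hgdef
  have hgx_eq : ∀ x, g x = fun i => xor (a i) (f (fun v => xor (a v) (x v)) i) :=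
    fun x => rfl
  have hxor2 : ∀ x : V → Bool, (fun v => xor (a v) (xor (a v) (x v))) = x := by
    intro x; funext v; cases a v <;> cases x v <;> rfl
  have hcnt_x : ∀ w : V → Bool, cnt (fun i => xor (a i) (w i)) = hammingDist a w := by
    intro w; rw [ham_sum]; rfl
  have hgcnt : ∀ x, cnt (g x) = cnt x := by
    intro x
    rw [hgx_eq x]
    calc cnt (fun i => xor (a i) (f (fun v => xor (a v) (x v)) i))
        = hammingDist a (f (fun v => xor (a v) (x v))) := hcnt_x _
      _ = hammingDist a (fun v => xor (a v) (x v)) := hda _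
      _ = cnt (fun i => xor (a i) (xor (a i) (x i))) := (hcnt_x _).symm
      _ = cnt x := by rw [hxor2]
  have hgne2 : ∀ x y, hammingDist (g x) (g y) ≤ hammingDist x y := by
    intro x y
    rw [hgx_eq x, hgx_eq y]
    have e1 : hammingDist (fun i => xor (a i) (f (fun v => xor (a v) (x v)) i))
        (fun i => xor (a i) (f (fun v => xor (a v) (y v)) i))
        = hammingDist (f (fun v => xor (a v) (x v))) (f (fun v => xor (a v) (y v))) := by
      rw [ham_sum, ham_sum]
      exact Finset.sum_congr rfl fun i _ => bn_xor_xor _ _ _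
    have e2 : hammingDist (fun v => xor (a v) (x v)) (fun v => xor (a v) (y v))
        = hammingDist x y := by
      rw [ham_sum, ham_sum]
      exact Finset.sum_congr rfl fun i _ => bn_xor_xor _ _ _
    rw [e1, ← e2]
    exact hne _ _
  have hgfix : ∀ y, g y = y → y = (fun _ => false) ∨ y = (fun _ => true) := by
    intro y hy
    have hfy : f (fun v => xor (a v) (y v)) = (fun v => xor (a v) (y v)) := by
      funext v
      have h1 : xor (a v) (f (fun w => xor (a w) (y w)) v) = y v := congrFun hy v
      revert h1
      cases hav : a v <;> cases hyv : y v <;> cases hfv : f (fun w => xor (a w) (y w)) v <;>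
        simp [hav, hyv, hfv]
    rcases hfixcls _ hfy with h | h
    · left
      funext v
      have h1 := congrFun h v
      revert h1
      cases hav : a v <;> cases hyv : y v <;> simp [hav, hyv]
    · right
      funext v
      have h1 := congrFun h v
      rw [hb] at h1
      revert h1
      cases hav : a v <;> cases hyv : y v <;> simp [hav, hyv]
  obtain ⟨σ, hσ⟩ := key_s17 g hgne2 hgcnt hgfix
  have htrans := cycle_trans g σ hσ hgfix
  have hf : ∀ x i, f x i = xor (x (σ i)) (xor (a i) (a (σ i))) := by
    intro x i
    have h1 : g (fun v => xor (a v) (x v)) i = xor (a (σ i)) (x (σ i)) :=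
      hσ (fun v => xor (a v) (x v)) i
    have h2 : g (fun v => xor (a v) (x v)) i = xor (a i) (f x i) := by
      rw [hgx_eq]
      show xor (a i) (f (fun v => xor (a v) (xor (a v) (x v))) i) = xor (a i) (f x i)
      rw [hxor2]
    rw [h2] at h1
    revert h1
    cases a i <;> cases a (σ i) <;> cases x (σ i) <;> cases hfx : f x i <;> simp
  refine ⟨σ, fun i => xor (a i) (a (σ i)), ⟨htrans, ?_, ?_⟩, ?_⟩
  · intro i j
    constructor
    · rintro ⟨x, h1, h0⟩
      by_cases hj : j = σ i
      · subst hj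
        refine ⟨rfl, ?_⟩
        rw [hf, Function.update_self] at h1
        show xor (a i) (a (σ i)) = false
        cases hq : xor (a i) (a (σ i))
        · rfl
        · rw [hq] at h1
          exact absurd h1 (by decide)
      · exfalso
        rw [hf] at h1
        rw [hf] at h0
        rw [Function.update_of_ne (fun hh => hj hh.symm)] at h1 h0
        rw [h1] at h0
        exact Bool.noConfusion h0
    · rintro ⟨hj, hsi⟩
      subst hj
      have hsi' : xor (a i) (a (σ i)) = false := hsi
      refine ⟨fun _ => false, ?_, ?_⟩
      · rw [hf, Function.update_self, hsi']; rfl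
      · rw [hf, Function.update_self, hsi']; rfl
  · intro i j
    constructor
    · rintro ⟨x, h1, h0⟩
      by_cases hj : j = σ i
      · subst hj
        refine ⟨rfl, ?_⟩
        rw [hf, Function.update_self] at h1
        show xor (a i) (a (σ i)) = true
        cases hq : xor (a i) (a (σ i))
        · rw [hq] at h1
          exact absurd h1 (by decide)
        · rfl
      · exfalso
        rw [hf] at h1
        rw [hf] at h0
        rw [Function.update_of_ne (fun hh => hj hh.symm)] at h1 h0
        rw [h1] at h0
        exact Bool.noConfusion h0
    · rintro ⟨hj, hsi⟩
      subst hj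
      have hsi' : xor (a i) (a (σ i)) = true := hsi
      refine ⟨fun _ => false, ?_, ?_⟩
      · rw [hf, Function.update_self, hsi']; rfl
      · rw [hf, Function.update_self, hsi']; rfl
  · have hcast : ((Finset.univ.filter
        (fun i => xor (a i) (a (σ i)) = true)).card : ZMod 2) = 0 := by
      rw [Finset.card_filter]
      push_cast
      rw [Finset.sum_congr rfl
        (g := fun i => (if a i then (1 : ZMod 2) else 0) + (if a (σ i) then (1 : ZMod 2) else 0))
        (fun i _ => by cases h1 : a i <;> cases h2 : a (σ i) <;> simp [h1, h2] <;> decide)]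
      rw [Finset.sum_add_distrib, Equiv.sum_comp σ (fun v => if a v then (1 : ZMod 2) else 0)]
      rw [← two_mul, show (2 : ZMod 2) = 0 from rfl, zero_mul]
    have h2 : (2 : ℕ) ∣ (Finset.univ.filter (fun i => xor (a i) (a (σ i)) = true)).card := by
      rwa [ZMod.natCast_eq_zero_iff] at hcast
    exact even_iff_two_dvd.mpr h2
end Main

/-- If `f` is non-expansive and 2-critical (it has at least two fixed points but every
strict subnetwork has at most one fixed point), then the global interaction graph of
`f` is a positive cycle spanning all vertices. -/
theorem stmt_17 {V : Type*} [Fintype V] [DecidableEq V]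
    (f : (V → Bool) → (V → Bool))
    (hne : NonExpansive f)
    (hfix : ∃ a b : V → Bool, a ≠ b ∧ f a = a ∧ f b = b)
    (hcrit : ∀ (I : Finset V) (z : {i // i ∉ I} → Bool)
      (h : ({i // i ∈ I} → Bool) → ({i // i ∈ I} → Bool)),
      IsSubnetwork f I z h → I ≠ Finset.univ →
      ∀ a b : {i // i ∈ I} → Bool, h a = a → h b = b → a = b) :
    ∃ (σ : Equiv.Perm V) (s : V → Bool), IsCircularWith f σ s ∧ Even (negCount s) := by
  obtain ⟨σ, s, h1, h2⟩ := stmt_17' f hne hfix hcrit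
  exact ⟨σ, s, ⟨h1.1, h1.2.1, h1.2.2⟩, h2⟩
end
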